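/- arXiv:1806.03844 — 6 statements merged into one kernel-verified Lean document; each statement's English description precedes it below -/
import Mathlib

section
/- Expansion in one-sided factorial moments: if F is a probability distribution on the integers with ν_{s+1}^+(F) + ν_{s+1}^-(F) < ∞, then F = δ_0 + ∑_{m=1}^s (ν_m^+(F)/m!)(δ_1−δ_0)^m + ∑_{m=1}^s (ν_m^-(F)/m!)(δ_{−1}−δ_0)^m + R, where the remainder R is a signed measure with total variation norm ‖R‖ ≤ (ν_{s+1}^+(F)+ν_{s+1}^-(F))/(s+1)! · ‖(δ_1−δ_0)^{s+1}‖. -/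
/-- Total variation norm of a finite signed measure on ℤ. -/
noncomputable def tvNorm (M : ℤ → ℝ) : ℝ := ∑' k, |M k|

/-- Convolution of signed measures on ℤ. -/
noncomputable def convZ (M V : ℤ → ℝ) : ℤ → ℝ := fun k => ∑' j, M j * V (k - j)

/-- Dirac measure at `a ∈ ℤ`. -/
def diracZ (a : ℤ) : ℤ → ℝ := fun k => if k = a then 1 else 0

/-- Convolution power. -/
noncomputable def convPow (M : ℤ → ℝ) : ℕ → ℤ → ℝ
  | 0 => diracZ 0
  | n + 1 => convZ (convPow M n) M

/-- Right-hand factorial moment `ν_k⁺(F) = ∑_{m≥k} m(m−1)⋯(m−k+1) F{m}`. -/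
noncomputable def nuPlus (F : ℤ → ℝ) (k : ℕ) : ℝ :=
  ∑' m : ℕ, (m.descFactorial k : ℝ) * F (m : ℤ)

/-- Left-hand factorial moment `ν_k⁻(F) = ∑_{m≥k} m(m−1)⋯(m−k+1) F{−m}`. -/
noncomputable def nuMinus (F : ℤ → ℝ) (k : ℕ) : ℝ :=
  ∑' m : ℕ, (m.descFactorial k : ℝ) * F (-(m : ℤ))


section Aux
abbrev A := AddMonoidAlgebra ℝ ℤ

instance : CoeFun A (fun _ => ℤ → ℝ) := ⟨fun f => ⇑f.coeff⟩

lemma diracZ_eq (a : ℤ) : diracZ a = ⇑(AddMonoidAlgebra.single a (1:ℝ) : A) := by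
  funext k
  simp [diracZ, Finsupp.single_apply, eq_comm]

lemma convZ_coe (f g : A) : convZ ⇑f ⇑g = ⇑(f * g) := by
  funext k
  have h1 : ∀ j ∉ f.coeff.support, f j * g (k - j) = 0 := fun j hj => by
    simp [Finsupp.notMem_support_iff.mp hj]
  rw [convZ, tsum_eq_sum h1]
  conv_rhs => rw [← f.sum_coeff_single]
  rw [Finsupp.sum_mul, AddMonoidAlgebra.coeff_finsuppSum, Finsupp.sum_apply, Finsupp.sum]
  exact Finset.sum_congr rfl fun j hj => by
    rw [AddMonoidAlgebra.coeff_single_mul_apply, neg_add_eq_sub]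

lemma convPow_coe (f : A) (n : ℕ) : convPow ⇑f n = ⇑(f ^ n) := by
  induction n with
  | zero => rw [convPow, pow_zero, diracZ_eq, AddMonoidAlgebra.one_def]
  | succ n ih => rw [convPow, ih, convZ_coe, pow_succ]

/-- remainder coefficient series -/
noncomputable def wrem {R : Type*} [CommRing R] (x : R) (s : ℕ) : ℕ → R
  | 0 => 0
  | j + 1 => x * wrem x s j + (j.choose s : R)

lemma keyA {R : Type*} [CommRing R] (x : R) (s : ℕ) (j : ℕ) :
    x ^ j = (∑ m ∈ Finset.range (s + 1), (j.choose m : R) * (x - 1) ^ m)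
      + (x - 1) ^ (s + 1) * wrem x s j := by
  induction j with
  | zero =>
    rw [wrem, mul_zero, add_zero, pow_zero]
    rw [Finset.sum_eq_single 0]
    · simp
    · intro m _ hm
      rcases Nat.exists_eq_succ_of_ne_zero hm with ⟨l, rfl⟩
      simp
    · simp
  | succ j ih =>
    calc x ^ (j+1) = x * x ^ j := by ring
    _ = x * (∑ m ∈ Finset.range (s + 1), (j.choose m : R) * (x - 1) ^ m)
        + (x - 1) ^ (s + 1) * (x * wrem x s j) := by rw [ih]; ring
    _ = (∑ m ∈ Finset.range (s + 1), (j.choose m : R) * (x - 1) ^ (m+1))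
        + (∑ m ∈ Finset.range (s + 1), (j.choose m : R) * (x - 1) ^ m)
        + (x - 1) ^ (s + 1) * (x * wrem x s j) := by
        rw [Finset.mul_sum, ← Finset.sum_add_distrib]
        congr 1
        exact Finset.sum_congr rfl fun m _ => by ring
    _ = (∑ m ∈ Finset.range (s + 1), ((j+1).choose m : R) * (x - 1) ^ m)
        + (x - 1) ^ (s + 1) * (x * wrem x s j + (j.choose s : R)) := by
        rw [Finset.sum_range_succ (fun m => (j.choose m : R) * (x - 1) ^ (m+1))]
        rw [Finset.sum_range_succ' (fun m => ((j+1).choose m : R) * (x - 1) ^ m)]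
        have h3 : ∑ m ∈ Finset.range s, (((j+1)).choose (m+1) : R) * (x-1)^(m+1)
            = ∑ m ∈ Finset.range s, ((j.choose m : R)*(x-1)^(m+1) + (j.choose (m+1):R)*(x-1)^(m+1)) :=
          Finset.sum_congr rfl fun m _ => by
            rw [Nat.choose_succ_succ]; push_cast; ring
        have h2 : ∑ m ∈ Finset.range (s+1), (j.choose m : R) * (x-1)^m
            = (∑ m ∈ Finset.range s, (j.choose (m+1) : R) * (x-1)^(m+1)) + (j.choose 0 : R) * (x-1)^0 :=
          Finset.sum_range_succ' _ s
        rw [h3, h2, Finset.sum_add_distrib]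
        simp only [Nat.choose_zero_right, Nat.cast_one, pow_zero]
        ring
    _ = _ := by rw [wrem]

lemma summable_abs_coe (f : A) : Summable fun k => |f k| :=
  summable_of_ne_finset_zero (s := f.coeff.support) fun b hb => by
    simp [Finsupp.notMem_support_iff.mp hb]

lemma tvNorm_nonneg (M : ℤ → ℝ) : 0 ≤ tvNorm M := tsum_nonneg fun _ => abs_nonneg _

lemma tvNorm_coe_add_le (f g : A) : tvNorm ⇑(f + g) ≤ tvNorm ⇑f + tvNorm ⇑g := by
  rw [tvNorm, tvNorm, tvNorm, ← Summable.tsum_add (summable_abs_coe f) (summable_abs_coe g)]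
  refine Summable.tsum_le_tsum (fun k => ?_) (summable_abs_coe (f+g)) ?_
  · rw [AddMonoidAlgebra.coeff_add, Finsupp.add_apply]; exact abs_add_le _ _
  · exact (summable_abs_coe f).add (summable_abs_coe g)

lemma tvNorm_coe_smul (c : ℝ) (f : A) : tvNorm ⇑(c • f) = |c| * tvNorm ⇑f := by
  rw [tvNorm, tvNorm, ← tsum_mul_left]
  exact tsum_congr fun k => by rw [AddMonoidAlgebra.coeff_smul, Finsupp.smul_apply, smul_eq_mul, abs_mul]

lemma tvNorm_coe_single_mul (a : ℤ) (f : A) :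
    tvNorm ⇑(AddMonoidAlgebra.single a (1:ℝ) * f) = tvNorm ⇑f := by
  rw [tvNorm, tvNorm]
  rw [← (Equiv.addLeft a).tsum_eq (fun k => |(AddMonoidAlgebra.single a (1:ℝ) * f) k|)]
  exact tsum_congr fun k => by
    rw [Equiv.coe_addLeft, AddMonoidAlgebra.coeff_single_mul_apply, one_mul, neg_add_cancel_left]

lemma coe_natCast_mul (n : ℕ) (f : A) : ((n : A)) * f = ((n:ℝ) • f) := by
  rw [← map_natCast (algebraMap ℝ A) n, ← Algebra.smul_def]

lemma tvNorm_coe_natCast_mul (n : ℕ) (f : A) :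
    tvNorm ⇑((n : A) * f) = (n : ℝ) * tvNorm ⇑f := by
  rw [coe_natCast_mul, tvNorm_coe_smul, abs_of_nonneg (by positivity)]

lemma tvNorm_coe_zero : tvNorm ⇑(0 : A) = 0 := by
  rw [tvNorm]; simp

lemma tv_wrem (a : ℤ) (u : A) (s : ℕ) (j : ℕ) :
    tvNorm ⇑(u * wrem (AddMonoidAlgebra.single a (1:ℝ)) s j)
      ≤ (j.choose (s+1) : ℝ) * tvNorm ⇑u := by
  induction j with
  | zero =>
    rw [wrem, mul_zero, tvNorm_coe_zero]
    exact mul_nonneg (by positivity) (tvNorm_nonneg _)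
  | succ j ih =>
    have h1 : u * wrem (AddMonoidAlgebra.single a (1:ℝ)) s (j+1)
        = AddMonoidAlgebra.single a (1:ℝ) * (u * wrem (AddMonoidAlgebra.single a (1:ℝ)) s j)
          + ((j.choose s : ℕ) : A) * u := by
      rw [wrem]; ring
    calc tvNorm ⇑(u * wrem (AddMonoidAlgebra.single a (1:ℝ)) s (j+1))
        ≤ tvNorm ⇑(AddMonoidAlgebra.single a (1:ℝ) * (u * wrem (AddMonoidAlgebra.single a (1:ℝ)) s j))
          + tvNorm ⇑(((j.choose s : ℕ) : A) * u) := by rw [h1]; exact tvNorm_coe_add_le _ _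
      _ = tvNorm ⇑(u * wrem (AddMonoidAlgebra.single a (1:ℝ)) s j) + (j.choose s : ℝ) * tvNorm ⇑u := by
          rw [tvNorm_coe_single_mul, tvNorm_coe_natCast_mul]
      _ ≤ (j.choose (s+1) : ℝ) * tvNorm ⇑u + (j.choose s : ℝ) * tvNorm ⇑u := by linarith
      _ = ((j+1).choose (s+1) : ℝ) * tvNorm ⇑u := by
          rw [Nat.choose_succ_succ' (j) (s)]
          push_cast; ring

lemma tvNorm_Vpow (n : ℕ) :
    tvNorm ⇑((AddMonoidAlgebra.single (-1:ℤ) (1:ℝ) - 1 : A) ^ n)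
      = tvNorm ⇑((AddMonoidAlgebra.single (1:ℤ) (1:ℝ) - 1 : A) ^ n) := by
  have h1 : (AddMonoidAlgebra.single (-1:ℤ) (1:ℝ) - 1 : A)
      = AddMonoidAlgebra.single (-1:ℤ) (1:ℝ) * (1 - AddMonoidAlgebra.single (1:ℤ) (1:ℝ)) := by
    rw [mul_sub, mul_one, AddMonoidAlgebra.single_mul_single, neg_add_cancel, one_mul,
      AddMonoidAlgebra.one_def]
  rw [h1, mul_pow, AddMonoidAlgebra.single_pow, one_pow]
  rw [tvNorm_coe_single_mul]
  have h2 : ((1 - AddMonoidAlgebra.single (1:ℤ) (1:ℝ) : A)) ^ n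
      = ((-1:ℝ)^n) • ((AddMonoidAlgebra.single (1:ℤ) (1:ℝ) - 1 : A) ^ n) := by
    rw [Algebra.smul_def, map_pow, map_neg, map_one, ← neg_pow, neg_sub]
  rw [h2, tvNorm_coe_smul, abs_pow, abs_neg, abs_one, one_pow, one_mul]

lemma tvNorm_tsum_le (c : ℕ → ℝ) (g : ℕ → A) (hc : ∀ n, 0 ≤ c n)
    (hsum : Summable fun n => c n * tvNorm ⇑(g n)) :
    (Summable fun k => |∑' n : ℕ, c n * g n k|) ∧
    tvNorm (fun k => ∑' n : ℕ, c n * g n k) ≤ ∑' n : ℕ, c n * tvNorm ⇑(g n) := by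
  set f : ℕ × ℤ → ℝ := fun p => c p.1 * |g p.1 p.2| with hf
  have hf0 : 0 ≤ f := fun p => mul_nonneg (hc _) (abs_nonneg _)
  have hrow : ∀ n, Summable fun k => f (n, k) := fun n => (summable_abs_coe (g n)).mul_left (c n)
  have hrowsum : ∀ n, ∑' k, f (n, k) = c n * tvNorm ⇑(g n) := fun n => by
    show (∑' k, c n * |g n k|) = _
    rw [tvNorm, tsum_mul_left]
  have hfs : Summable f :=
    (summable_prod_of_nonneg hf0).2 ⟨hrow, by simpa only [hrowsum] using hsum⟩
  have hcol : ∀ k, Summable fun n => f (n, k) := fun k =>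
    hfs.comp_injective (fun a b h => by simpa using congrArg Prod.fst h)
  have hcolsum : Summable fun k => ∑' n : ℕ, f (n, k) := hfs.prod_symm.prod
  have habs : ∀ k, |∑' n : ℕ, c n * g n k| ≤ ∑' n : ℕ, f (n, k) := by
    intro k
    have h2 : Summable fun n : ℕ => |c n * g n k| := by
      refine (hcol k).congr fun n => ?_
      simp [hf, abs_mul, abs_of_nonneg (hc n)]
    calc |∑' n : ℕ, c n * g n k| ≤ ∑' n : ℕ, |c n * g n k| := by
          have h3 := norm_tsum_le_tsum_norm (f := fun n : ℕ => c n * g n k)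
            (by simpa only [Real.norm_eq_abs] using h2)
          simpa only [Real.norm_eq_abs] using h3
      _ = ∑' n : ℕ, f (n, k) := tsum_congr fun n => by
          rw [abs_mul, abs_of_nonneg (hc n)]
  have hLsum : Summable fun k => |∑' n : ℕ, c n * g n k| :=
    Summable.of_nonneg_of_le (fun k => abs_nonneg _) habs hcolsum
  refine ⟨hLsum, ?_⟩
  calc tvNorm (fun k => ∑' n : ℕ, c n * g n k) = ∑' k, |∑' n : ℕ, c n * g n k| := rfl
    _ ≤ ∑' k, ∑' n : ℕ, f (n, k) := Summable.tsum_le_tsum habs hLsum hcolsum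
    _ = ∑' n : ℕ, ∑' k, f (n, k) := Summable.tsum_comm (by exact hfs)
    _ = ∑' n : ℕ, c n * tvNorm ⇑(g n) := tsum_congr hrowsum

lemma Nat.descFactorial_mono_right (n : ℕ) {a : ℕ} :
    ∀ {b : ℕ}, a ≤ b → b ≤ n → n.descFactorial a ≤ n.descFactorial b := by
  intro b
  induction b with
  | zero => intro hab _; obtain rfl := Nat.le_zero.mp hab; exact le_rfl
  | succ b ih =>
    intro hab hbn
    rcases Nat.eq_or_lt_of_le hab with rfl | h
    · exact le_rfl
    · calc n.descFactorial a ≤ n.descFactorial b := ih (by omega) (by omega)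
        _ ≤ (n - b) * n.descFactorial b := Nat.le_mul_of_pos_left _ (by omega)
        _ = n.descFactorial (b+1) := (Nat.descFactorial_succ n b).symm

lemma choose_le_aux (s m n : ℕ) (hm : m ≤ s + 1) :
    n.choose m ≤ n.descFactorial (s+1) + (s+1)^(s+1) := by
  have hcd : n.choose m ≤ n.descFactorial m := by
    rw [Nat.descFactorial_eq_factorial_mul_choose]
    exact Nat.le_mul_of_pos_left _ (Nat.factorial_pos m)
  rcases le_or_gt n s with h | h
  · have : n.descFactorial m ≤ (s+1)^(s+1) := by
      calc n.descFactorial m ≤ n ^ m := Nat.descFactorial_le_pow n m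
        _ ≤ (s+1) ^ m := Nat.pow_le_pow_left (by omega) m
        _ ≤ (s+1) ^ (s+1) := Nat.pow_le_pow_right (by omega) hm
    omega
  · have := Nat.descFactorial_mono_right n hm (by omega)
    omega
end Aux

section Mid
lemma key_apply (a : ℤ) (s n : ℕ) (k : ℤ) :
    diracZ (n • a) k
      = (∑ m ∈ Finset.range (s+1),
          (n.choose m : ℝ) * ((AddMonoidAlgebra.single a (1:ℝ) - 1 : A) ^ m) k)
        + ((AddMonoidAlgebra.single a (1:ℝ) - 1 : A) ^ (s+1)
            * wrem (AddMonoidAlgebra.single a (1:ℝ)) s n) k := by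
  have h2 : (AddMonoidAlgebra.single a (1:ℝ) : A) ^ n = AddMonoidAlgebra.single (n • a) (1:ℝ) := by
    rw [AddMonoidAlgebra.single_pow, one_pow]
  rw [diracZ_eq, ← h2, keyA (AddMonoidAlgebra.single a (1:ℝ)) s n]
  rw [AddMonoidAlgebra.coeff_add, Finsupp.add_apply, AddMonoidAlgebra.coeff_sum, Finsupp.finset_sum_apply]
  congr 1
  exact Finset.sum_congr rfl fun m _ => by
    rw [coe_natCast_mul, AddMonoidAlgebra.coeff_smul, Finsupp.smul_apply, smul_eq_mul]

lemma tsum_diracP (c : ℕ → ℝ) (k : ℤ) :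
    ∑' n : ℕ, c n * diracZ (n:ℤ) k = if 0 ≤ k then c k.toNat else 0 := by
  rcases le_or_gt 0 k with h | h
  · rw [if_pos h, tsum_eq_single k.toNat]
    · have : k = ((k.toNat : ℕ) : ℤ) := by omega
      simp [diracZ, ← this]
    · intro n hn
      have hne : k ≠ (n:ℤ) := by omega
      simp [diracZ, hne]
  · rw [if_neg (not_le.mpr h)]
    convert tsum_zero with n
    have hne : k ≠ (n:ℤ) := by omega
    simp [diracZ, hne]

lemma tsum_diracM (c : ℕ → ℝ) (k : ℤ) :
    ∑' n : ℕ, c n * diracZ (-(n:ℤ)) k = if k ≤ 0 then c (-k).toNat else 0 := by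
  rcases le_or_gt k 0 with h | h
  · rw [if_pos h, tsum_eq_single (-k).toNat]
    · have h4 : -(((-k).toNat : ℕ) : ℤ) = k := by omega
      rw [h4]
      simp [diracZ]
    · intro n hn
      have hne : k ≠ -(n:ℤ) := by omega
      simp [diracZ, hne]
  · rw [if_neg (not_le.mpr h)]
    convert tsum_zero with n
    have hne : k ≠ -(n:ℤ) := by omega
    simp [diracZ, hne]

lemma Icc_sum_split (s : ℕ) (f : ℕ → ℝ) :
    ∑ m ∈ Finset.range (s+1), f m = f 0 + ∑ m ∈ Finset.Icc 1 s, f m := by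
  rw [Finset.sum_range_succ' f s, ← Finset.Ico_add_one_right_eq_Icc, Finset.sum_Ico_eq_sum_range]
  simp [add_comm]
end Mid

/-- Expansion of a probability distribution on ℤ in one-sided factorial moments,
with remainder of total variation at most
`(ν_{s+1}⁺(F)+ν_{s+1}⁻(F))/(s+1)! ⋅ ‖(δ₁−δ₀)^{s+1}‖`. -/
theorem factorial_moment_expansion (F : ℤ → ℝ) (s : ℕ) (hs : 1 ≤ s)
    (hF0 : ∀ k, 0 ≤ F k) (hF1 : ∑' k, F k = 1)
    (hplus : Summable fun m : ℕ => (m.descFactorial (s + 1) : ℝ) * F (m : ℤ))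
    (hminus : Summable fun m : ℕ => (m.descFactorial (s + 1) : ℝ) * F (-(m : ℤ))) :
    ∃ R : ℤ → ℝ,
      tvNorm R ≤ (nuPlus F (s + 1) + nuMinus F (s + 1)) / (s + 1).factorial
          * tvNorm (convPow (diracZ 1 - diracZ 0) (s + 1)) ∧
      F = diracZ 0
          + (∑ m ∈ Finset.Icc 1 s, (nuPlus F m / m.factorial) • convPow (diracZ 1 - diracZ 0) m)
          + (∑ m ∈ Finset.Icc 1 s, (nuMinus F m / m.factorial) • convPow (diracZ (-1) - diracZ 0) m)
          + R := by
  classical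
  set X : A := AddMonoidAlgebra.single (1:ℤ) (1:ℝ) with hXdef
  set Y : A := AddMonoidAlgebra.single (-1:ℤ) (1:ℝ) with hYdef
  set U : A := X - 1 with hUdef
  set V : A := Y - 1 with hVdef
  set T : ℝ := tvNorm ⇑(U ^ (s+1)) with hTdef
  have hDU : diracZ 1 - diracZ 0 = ⇑U := by
    rw [diracZ_eq 1, diracZ_eq 0, ← Finsupp.coe_sub, hUdef, hXdef, AddMonoidAlgebra.one_def, AddMonoidAlgebra.coeff_sub]
  have hDV : diracZ (-1) - diracZ 0 = ⇑V := by
    rw [diracZ_eq (-1), diracZ_eq 0, ← Finsupp.coe_sub, hVdef, hYdef, AddMonoidAlgebra.one_def, AddMonoidAlgebra.coeff_sub]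
  have hUm : ∀ m : ℕ, convPow (diracZ 1 - diracZ 0) m = ⇑(U ^ m) := fun m => by
    rw [hDU, convPow_coe]
  have hVm : ∀ m : ℕ, convPow (diracZ (-1) - diracZ 0) m = ⇑(V ^ m) := fun m => by
    rw [hDV, convPow_coe]
  -- basic summability
  have hFsum : Summable F := by
    by_contra h
    rw [tsum_eq_zero_of_not_summable h] at hF1
    norm_num at hF1
  have hP : Summable fun n : ℕ => F (n:ℤ) := by
    have := hFsum.comp_injective (i := fun n : ℕ => (n:ℤ)) (fun a b hab => by simpa using hab)
    exact this
  have hM : Summable fun n : ℕ => F (-(n:ℤ)) := by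
    have := hFsum.comp_injective (i := fun n : ℕ => -(n:ℤ)) (fun a b hab => by
      simp only [neg_inj, Nat.cast_inj] at hab; exact hab)
    exact this
  -- summability of choose-weighted sums
  have hcast : ∀ m, m ≤ s+1 → ∀ n : ℕ, ((n.choose m : ℕ) : ℝ)
      ≤ (n.descFactorial (s+1) : ℝ) + (((s+1)^(s+1) : ℕ) : ℝ) := fun m hm n => by
    exact_mod_cast choose_le_aux s m n hm
  have hSp : ∀ m, m ≤ s+1 → Summable fun n : ℕ => (n.choose m : ℝ) * F (n:ℤ) := by
    intro m hm
    refine Summable.of_nonneg_of_le (fun n => mul_nonneg (by positivity) (hF0 _)) (fun n => ?_)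
      (hplus.add (hP.mul_left (((s+1)^(s+1) : ℕ) : ℝ)))
    have h := mul_le_mul_of_nonneg_right (hcast m hm n) (hF0 (n:ℤ))
    rw [add_mul] at h
    exact h
  have hSm : ∀ m, m ≤ s+1 → Summable fun n : ℕ => (n.choose m : ℝ) * F (-(n:ℤ)) := by
    intro m hm
    refine Summable.of_nonneg_of_le (fun n => mul_nonneg (by positivity) (hF0 _)) (fun n => ?_)
      (hminus.add (hM.mul_left (((s+1)^(s+1) : ℕ) : ℝ)))
    have h := mul_le_mul_of_nonneg_right (hcast m hm n) (hF0 (-(n:ℤ)))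
    rw [add_mul] at h
    exact h
  -- factorial moments vs choose sums
  have hnuP : ∀ m : ℕ, nuPlus F m / m.factorial = ∑' n : ℕ, (n.choose m : ℝ) * F (n:ℤ) := by
    intro m
    rw [nuPlus]
    rw [tsum_congr (fun n : ℕ => show ((n.descFactorial m : ℕ):ℝ) * F (n:ℤ)
      = (m.factorial : ℝ) * ((n.choose m : ℝ) * F (n:ℤ)) by
        rw [Nat.descFactorial_eq_factorial_mul_choose]; push_cast; ring)]
    rw [tsum_mul_left]
    exact mul_div_cancel_left₀ _ (by positivity)
  have hnuM : ∀ m : ℕ, nuMinus F m / m.factorial = ∑' n : ℕ, (n.choose m : ℝ) * F (-(n:ℤ)) := by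
    intro m
    rw [nuMinus]
    rw [tsum_congr (fun n : ℕ => show ((n.descFactorial m : ℕ):ℝ) * F (-(n:ℤ))
      = (m.factorial : ℝ) * ((n.choose m : ℝ) * F (-(n:ℤ))) by
        rw [Nat.descFactorial_eq_factorial_mul_choose]; push_cast; ring)]
    rw [tsum_mul_left]
    exact mul_div_cancel_left₀ _ (by positivity)
  -- pointwise key identities
  have hkP : ∀ (n : ℕ) (k : ℤ), diracZ (n:ℤ) k
      = (∑ m ∈ Finset.range (s+1), (n.choose m : ℝ) * (U ^ m) k)
        + (U ^ (s+1) * wrem X s n) k := by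
    intro n k
    have h := key_apply 1 s n k
    rw [show ((n : ℕ) • (1:ℤ)) = (n:ℤ) by simp] at h
    rw [← hXdef, ← hUdef] at h
    exact h
  have hkM : ∀ (n : ℕ) (k : ℤ), diracZ (-(n:ℤ)) k
      = (∑ m ∈ Finset.range (s+1), (n.choose m : ℝ) * (V ^ m) k)
        + (V ^ (s+1) * wrem Y s n) k := by
    intro n k
    have h := key_apply (-1) s n k
    rw [show ((n : ℕ) • (-1:ℤ)) = -(n:ℤ) by simp] at h
    rw [← hYdef, ← hVdef] at h
    exact h
  -- summability at each point k
  have hsum_dP : ∀ k : ℤ, Summable fun n : ℕ => F (n:ℤ) * diracZ (n:ℤ) k := by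
    intro k
    refine Summable.of_nonneg_of_le (fun n => mul_nonneg (hF0 _) ?_) (fun n => ?_) hP
    · unfold diracZ; split <;> norm_num
    · have h1 : diracZ (n:ℤ) k ≤ 1 := by unfold diracZ; split <;> norm_num
      have h2 := mul_le_mul_of_nonneg_left h1 (hF0 (n:ℤ))
      simpa using h2
  have hsum_dM : ∀ k : ℤ, Summable fun n : ℕ => F (-(n:ℤ)) * diracZ (-(n:ℤ)) k := by
    intro k
    refine Summable.of_nonneg_of_le (fun n => mul_nonneg (hF0 _) ?_) (fun n => ?_) hM
    · unfold diracZ; split <;> norm_num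
    · have h1 : diracZ (-(n:ℤ)) k ≤ 1 := by unfold diracZ; split <;> norm_num
      have h2 := mul_le_mul_of_nonneg_left h1 (hF0 (-(n:ℤ)))
      simpa using h2
  have hsum_cP : ∀ (k : ℤ), ∀ m ∈ Finset.range (s+1),
      Summable fun n : ℕ => ((n.choose m : ℝ) * F (n:ℤ)) * (U ^ m) k := by
    intro k m hm
    exact (hSp m (le_of_lt (Finset.mem_range.mp hm))).mul_right _
  have hsum_cM : ∀ (k : ℤ), ∀ m ∈ Finset.range (s+1),
      Summable fun n : ℕ => ((n.choose m : ℝ) * F (-(n:ℤ))) * (V ^ m) k := by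
    intro k m hm
    exact (hSm m (le_of_lt (Finset.mem_range.mp hm))).mul_right _
  have hstepP : ∀ (n : ℕ) (k : ℤ), F (n:ℤ) * diracZ (n:ℤ) k
      = (∑ m ∈ Finset.range (s+1), ((n.choose m : ℝ) * F (n:ℤ)) * (U ^ m) k)
        + F (n:ℤ) * (U ^ (s+1) * wrem X s n) k := by
    intro n k
    rw [hkP n k, mul_add, Finset.mul_sum]
    congr 1
    exact Finset.sum_congr rfl fun m _ => by ring
  have hstepM : ∀ (n : ℕ) (k : ℤ), F (-(n:ℤ)) * diracZ (-(n:ℤ)) k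
      = (∑ m ∈ Finset.range (s+1), ((n.choose m : ℝ) * F (-(n:ℤ))) * (V ^ m) k)
        + F (-(n:ℤ)) * (V ^ (s+1) * wrem Y s n) k := by
    intro n k
    rw [hkM n k, mul_add, Finset.mul_sum]
    congr 1
    exact Finset.sum_congr rfl fun m _ => by ring
  have hsum_rP : ∀ k : ℤ, Summable fun n : ℕ => F (n:ℤ) * (U ^ (s+1) * wrem X s n) k := by
    intro k
    refine (((hsum_dP k).sub (summable_sum (hsum_cP k))).congr (fun n => ?_))
    have h := hstepP n k
    linarith
  have hsum_rM : ∀ k : ℤ, Summable fun n : ℕ => F (-(n:ℤ)) * (V ^ (s+1) * wrem Y s n) k := by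
    intro k
    refine (((hsum_dM k).sub (summable_sum (hsum_cM k))).congr (fun n => ?_))
    have h := hstepM n k
    linarith
  -- norm bounds of remainders
  have hbP : ∀ n : ℕ, tvNorm ⇑(U ^ (s+1) * wrem X s n) ≤ (n.choose (s+1) : ℝ) * T := by
    intro n
    have h := tv_wrem 1 (U ^ (s+1)) s n
    rw [← hXdef, ← hTdef] at h
    exact h
  have hTV : tvNorm ⇑(V ^ (s+1)) = T := by
    rw [hVdef, hYdef, tvNorm_Vpow, hTdef, hUdef, hXdef]
  have hbM : ∀ n : ℕ, tvNorm ⇑(V ^ (s+1) * wrem Y s n) ≤ (n.choose (s+1) : ℝ) * T := by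
    intro n
    have h := tv_wrem (-1) (V ^ (s+1)) s n
    rw [← hYdef, hTV] at h
    exact h
  have hgP : Summable fun n : ℕ => F (n:ℤ) * tvNorm ⇑(U ^ (s+1) * wrem X s n) := by
    refine Summable.of_nonneg_of_le (fun n => mul_nonneg (hF0 _) (tvNorm_nonneg _)) (fun n => ?_)
      ((hSp (s+1) le_rfl).mul_right T)
    exact (mul_le_mul_of_nonneg_left (hbP n) (hF0 (n:ℤ))).trans (le_of_eq (by ring))
  have hgM : Summable fun n : ℕ => F (-(n:ℤ)) * tvNorm ⇑(V ^ (s+1) * wrem Y s n) := by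
    refine Summable.of_nonneg_of_le (fun n => mul_nonneg (hF0 _) (tvNorm_nonneg _)) (fun n => ?_)
      ((hSm (s+1) le_rfl).mul_right T)
    exact (mul_le_mul_of_nonneg_left (hbM n) (hF0 (-(n:ℤ)))).trans (le_of_eq (by ring))
  obtain ⟨hRsP, hRbP⟩ := tvNorm_tsum_le (fun n => F (n:ℤ)) (fun n => U ^ (s+1) * wrem X s n)
    (fun n => hF0 _) hgP
  obtain ⟨hRsM, hRbM⟩ := tvNorm_tsum_le (fun n => F (-(n:ℤ))) (fun n => V ^ (s+1) * wrem Y s n)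
    (fun n => hF0 _) hgM
  have hPend : ∑' n : ℕ, F (n:ℤ) * tvNorm ⇑(U ^ (s+1) * wrem X s n)
      ≤ (nuPlus F (s+1) / (s+1).factorial) * T := by
    have h1 : ∀ n : ℕ, F (n:ℤ) * tvNorm ⇑(U ^ (s+1) * wrem X s n)
        ≤ ((n.choose (s+1) : ℝ) * F (n:ℤ)) * T := fun n =>
      (mul_le_mul_of_nonneg_left (hbP n) (hF0 (n:ℤ))).trans (le_of_eq (by ring))
    have h2 := Summable.tsum_le_tsum h1 hgP ((hSp (s+1) le_rfl).mul_right T)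
    rw [tsum_mul_right] at h2
    rw [hnuP (s+1)]
    exact h2
  have hMend : ∑' n : ℕ, F (-(n:ℤ)) * tvNorm ⇑(V ^ (s+1) * wrem Y s n)
      ≤ (nuMinus F (s+1) / (s+1).factorial) * T := by
    have h1 : ∀ n : ℕ, F (-(n:ℤ)) * tvNorm ⇑(V ^ (s+1) * wrem Y s n)
        ≤ ((n.choose (s+1) : ℝ) * F (-(n:ℤ))) * T := fun n =>
      (mul_le_mul_of_nonneg_left (hbM n) (hF0 (-(n:ℤ)))).trans (le_of_eq (by ring))
    have h2 := Summable.tsum_le_tsum h1 hgM ((hSm (s+1) le_rfl).mul_right T)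
    rw [tsum_mul_right] at h2
    rw [hnuM (s+1)]
    exact h2
  refine ⟨(fun k => ∑' n : ℕ, F (n:ℤ) * (U ^ (s+1) * wrem X s n) k)
      + (fun k => ∑' n : ℕ, F (-(n:ℤ)) * (V ^ (s+1) * wrem Y s n) k), ?_, ?_⟩
  · -- norm bound
    have htri : tvNorm ((fun k => ∑' n : ℕ, F (n:ℤ) * (U ^ (s+1) * wrem X s n) k)
          + (fun k => ∑' n : ℕ, F (-(n:ℤ)) * (V ^ (s+1) * wrem Y s n) k))
        ≤ tvNorm (fun k => ∑' n : ℕ, F (n:ℤ) * (U ^ (s+1) * wrem X s n) k)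
          + tvNorm (fun k => ∑' n : ℕ, F (-(n:ℤ)) * (V ^ (s+1) * wrem Y s n) k) := by
      rw [tvNorm, tvNorm, tvNorm, ← Summable.tsum_add hRsP hRsM]
      refine Summable.tsum_le_tsum (fun k => abs_add_le _ _) ?_ (hRsP.add hRsM)
      exact Summable.of_nonneg_of_le (fun k => abs_nonneg _) (fun k => abs_add_le _ _)
        (hRsP.add hRsM)
    have hfinal := htri.trans (add_le_add (hRbP.trans hPend) (hRbM.trans hMend))
    rw [hUm (s+1), ← hTdef]
    exact hfinal.trans (le_of_eq (by ring))
  · -- the expansion identity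
    funext k
    have e3 : (∑' n : ℕ, F (n:ℤ) * diracZ (n:ℤ) k) + (∑' n : ℕ, F (-(n:ℤ)) * diracZ (-(n:ℤ)) k)
        = F k + F 0 * diracZ 0 k := by
      rw [tsum_diracP (fun n => F (n:ℤ)) k, tsum_diracM (fun n => F (-(n:ℤ))) k]
      rcases lt_trichotomy k 0 with h | h | h
      · rw [if_neg (by omega), if_pos h.le]
        have h4 : -(((-k).toNat : ℕ) : ℤ) = k := by omega
        rw [h4]
        have h5 : diracZ 0 k = 0 := by unfold diracZ; rw [if_neg h.ne]
        rw [h5]; ring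
      · subst h
        have h5 : diracZ 0 0 = 1 := by unfold diracZ; rw [if_pos rfl]
        rw [if_pos le_rfl, if_pos le_rfl, h5]
        norm_num
      · rw [if_pos h.le, if_neg (by omega)]
        have h4 : ((k.toNat : ℕ) : ℤ) = k := by omega
        rw [h4]
        have h5 : diracZ 0 k = 0 := by unfold diracZ; rw [if_neg h.ne']
        rw [h5]; ring
    have e1 : ∑' n : ℕ, F (n:ℤ) * diracZ (n:ℤ) k
        = (∑ m ∈ Finset.range (s+1), (∑' n : ℕ, (n.choose m : ℝ) * F (n:ℤ)) * (U ^ m) k)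
          + ∑' n : ℕ, F (n:ℤ) * (U ^ (s+1) * wrem X s n) k := by
      rw [tsum_congr (fun n => hstepP n k)]
      rw [Summable.tsum_add (summable_sum (hsum_cP k)) (hsum_rP k)]
      rw [Summable.tsum_finsetSum (hsum_cP k)]
      congr 1
      exact Finset.sum_congr rfl fun m _ => tsum_mul_right
    have e2 : ∑' n : ℕ, F (-(n:ℤ)) * diracZ (-(n:ℤ)) k
        = (∑ m ∈ Finset.range (s+1), (∑' n : ℕ, (n.choose m : ℝ) * F (-(n:ℤ))) * (V ^ m) k)
          + ∑' n : ℕ, F (-(n:ℤ)) * (V ^ (s+1) * wrem Y s n) k := by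
      rw [tsum_congr (fun n => hstepM n k)]
      rw [Summable.tsum_add (summable_sum (hsum_cM k)) (hsum_rM k)]
      rw [Summable.tsum_finsetSum (hsum_cM k)]
      congr 1
      exact Finset.sum_congr rfl fun m _ => tsum_mul_right
    have s1 : (∑ m ∈ Finset.range (s+1), (∑' n : ℕ, (n.choose m : ℝ) * F (n:ℤ)) * (U ^ m) k)
        = (∑' n : ℕ, (n.choose 0 : ℝ) * F (n:ℤ)) * (U ^ 0) k
          + ∑ m ∈ Finset.Icc 1 s, (∑' n : ℕ, (n.choose m : ℝ) * F (n:ℤ)) * (U ^ m) k :=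
      Icc_sum_split s _
    have s2 : (∑ m ∈ Finset.range (s+1), (∑' n : ℕ, (n.choose m : ℝ) * F (-(n:ℤ))) * (V ^ m) k)
        = (∑' n : ℕ, (n.choose 0 : ℝ) * F (-(n:ℤ))) * (V ^ 0) k
          + ∑ m ∈ Finset.Icc 1 s, (∑' n : ℕ, (n.choose m : ℝ) * F (-(n:ℤ))) * (V ^ m) k :=
      Icc_sum_split s _
    have hU0 : (U ^ 0 : A) k = diracZ 0 k := by
      rw [pow_zero, AddMonoidAlgebra.one_def, ← diracZ_eq]
    have hV0 : (V ^ 0 : A) k = diracZ 0 k := by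
      rw [pow_zero, AddMonoidAlgebra.one_def, ← diracZ_eq]
    have hzero : (∑' n : ℕ, (n.choose 0 : ℝ) * F (n:ℤ)) + (∑' n : ℕ, (n.choose 0 : ℝ) * F (-(n:ℤ)))
        = 1 + F 0 := by
      simp only [Nat.choose_zero_right, Nat.cast_one, one_mul]
      have hM' : Summable fun n : ℕ => F (-((n:ℤ)+1)) := by
        have h := hM.comp_injective (i := fun n : ℕ => n + 1) (add_left_injective 1)
        exact h.congr fun n => congrArg F (by push_cast; ring)
      have hz := tsum_of_nat_of_neg_add_one hP hM'
      have hsplitM : ∑' n : ℕ, F (-(n:ℤ)) = F 0 + ∑' n : ℕ, F (-((n:ℤ)+1)) := by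
        rw [Summable.tsum_eq_zero_add hM]
        have h0 : F (-((0:ℕ):ℤ)) = F 0 := by norm_num
        have h1 : (∑' n : ℕ, F (-(((n+1:ℕ)):ℤ))) = ∑' n : ℕ, F (-((n:ℤ)+1)) :=
          tsum_congr fun n => congrArg F (by push_cast; ring)
        rw [h0, h1]
      rw [hF1] at hz
      rw [hsplitM]
      linarith
    simp only [Pi.add_apply, Finset.sum_apply, Pi.smul_apply, smul_eq_mul]
    have hIcc1 : ∀ m ∈ Finset.Icc 1 s,
        (nuPlus F m / (m.factorial : ℝ)) * convPow (diracZ 1 - diracZ 0) m k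
          = (∑' n : ℕ, (n.choose m : ℝ) * F (n:ℤ)) * (U ^ m) k := fun m _ => by
      rw [hnuP m, hUm m]
    have hIcc2 : ∀ m ∈ Finset.Icc 1 s,
        (nuMinus F m / (m.factorial : ℝ)) * convPow (diracZ (-1) - diracZ 0) m k
          = (∑' n : ℕ, (n.choose m : ℝ) * F (-(n:ℤ))) * (V ^ m) k := fun m _ => by
      rw [hnuM m, hVm m]
    rw [Finset.sum_congr rfl hIcc1, Finset.sum_congr rfl hIcc2]
    rw [e1, e2, s1, s2, hU0, hV0] at e3
    have hzero2 : (∑' n : ℕ, (n.choose 0 : ℝ) * F (n:ℤ)) * diracZ 0 k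
        + (∑' n : ℕ, (n.choose 0 : ℝ) * F (-(n:ℤ))) * diracZ 0 k
        = diracZ 0 k + F 0 * diracZ 0 k := by
      rw [← add_mul, hzero]; ring
    linarith [e3, hzero2]
end

section
/- If F and G are probability distributions on the integers whose one-sided factorial moments agree up to order s, i.e. ν_j^+(F)=ν_j^+(G) and ν_j^-(F)=ν_j^-(G) for j=1,…,s, and β_{s+1}^+(F,G)+β_{s+1}^-(F,G) < ∞, then F − G = (β_{s+1}^+(F,G)+β_{s+1}^-(F,G))/(s+1)! · (δ_1−δ_0)^{s+1} · Θ, where Θ is a signed measure of total variation norm at most 1; in particular ‖F−G‖ ≤ (β_{s+1}^+(F,G)+β_{s+1}^-(F,G))/(s+1)! · ‖(δ_1−δ_0)^{s+1}‖. -/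
/-- `β_k^±(F,G) = ν_k^±(F) + ν_k^±(G)`. -/
noncomputable def betaPlus (F G : ℤ → ℝ) (k : ℕ) : ℝ := nuPlus F k + nuPlus G k
noncomputable def betaMinus (F G : ℤ → ℝ) (k : ℕ) : ℝ := nuMinus F k + nuMinus G k

lemma convZ_dirac0 (V : ℤ → ℝ) : convZ (diracZ 0) V = V := by
  funext k
  have h : ∀ j : ℤ, diracZ 0 j * V (k - j) = if j = (0:ℤ) then V k else 0 := by
    intro j
    by_cases hj : j = 0 <;> simp [diracZ, hj]
  simp only [convZ, h]
  exact tsum_ite_eq (0:ℤ) (fun _ => V k)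

lemma convZ_delta (P : ℤ → ℝ) :
    convZ P (diracZ 1 - diracZ 0) = fun k => P (k - 1) - P k := by
  funext k
  have h : ∀ j : ℤ, P j * (diracZ 1 - diracZ 0) (k - j)
      = (if j = k - 1 then P (k-1) else 0) - (if j = k then P k else 0) := by
    intro j
    simp only [Pi.sub_apply, diracZ, mul_sub]
    congr 1
    · by_cases hj : j = k - 1
      · subst hj; simp [show k - (k-1) = 1 by ring]
      · have : ¬ (k - j = 1) := by omega
        simp [this, hj]
    · by_cases hj : j = k
      · subst hj; simp
      · have : ¬ (k - j = 0) := by omega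
        simp [this, hj]
  simp only [convZ, h]
  rw [Summable.tsum_sub]
  · rw [tsum_ite_eq (k-1 : ℤ) (fun _ => P (k-1)), tsum_ite_eq (k : ℤ) (fun _ => P k)]
  · exact summable_of_ne_finset_zero (s := {k-1}) (by intro b hb; simp at hb; simp [hb])
  · exact summable_of_ne_finset_zero (s := {k}) (by intro b hb; simp at hb; simp [hb])

lemma convPow_delta_supp (n : ℕ) : ∀ k : ℤ, (k < 0 ∨ (n:ℤ) < k) →
    convPow (diracZ 1 - diracZ 0) n k = 0 := by
  induction n with
  | zero => intro k hk; have : k ≠ 0 := by omega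
            simp [convPow, diracZ, this]
  | succ n ih =>
      intro k hk
      show convZ (convPow (diracZ 1 - diracZ 0) n) (diracZ 1 - diracZ 0) k = 0
      rw [convZ_delta]
      show convPow (diracZ 1 - diracZ 0) n (k-1) - convPow (diracZ 1 - diracZ 0) n k = 0
      rw [ih (k-1) (by push_cast; omega), ih k (by push_cast; omega), sub_zero]

lemma convZ_convPow_succ (n : ℕ) (V : ℤ → ℝ) :
    convZ (convPow (diracZ 1 - diracZ 0) (n+1)) V
      = convZ (convPow (diracZ 1 - diracZ 0) n) (fun x => V (x - 1) - V x) := by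
  funext k
  set P := convPow (diracZ 1 - diracZ 0) n with hPdef
  have hP : ∀ j : ℤ, j ∉ Finset.Icc (0:ℤ) (n:ℤ) → P j = 0 := by
    intro j hj
    exact convPow_delta_supp n j (by simp [Finset.mem_Icc] at hj; omega)
  have h1 : convPow (diracZ 1 - diracZ 0) (n+1) = fun j => P (j-1) - P j := convZ_delta P
  show ∑' j, (convPow (diracZ 1 - diracZ 0) (n+1)) j * V (k - j) = _
  rw [h1]
  have hs1 : Summable (fun j : ℤ => P (j-1) * V (k - j)) := by
    apply summable_of_ne_finset_zero (s := Finset.Icc (1:ℤ) ((n:ℤ)+1))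
    intro b hb
    rw [hP (b-1) (by simp [Finset.mem_Icc] at hb ⊢; omega), zero_mul]
  have hs2 : Summable (fun j : ℤ => P j * V (k - j)) := by
    apply summable_of_ne_finset_zero (s := Finset.Icc (0:ℤ) (n:ℤ))
    intro b hb
    rw [hP b hb, zero_mul]
  have : ∀ j : ℤ, (P (j-1) - P j) * V (k - j) = P (j-1) * V (k-j) - P j * V (k-j) := by
    intro j; ring
  simp only [this]
  rw [Summable.tsum_sub hs1 hs2]
  have h2 : ∑' j : ℤ, P (j-1) * V (k - j) = ∑' i : ℤ, P i * V (k - 1 - i) := by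
    rw [← (Equiv.addRight (1:ℤ)).tsum_eq (fun j => P (j-1) * V (k - j))]
    apply tsum_congr
    intro i
    simp only [Equiv.coe_addRight, add_sub_cancel_right]
    congr 2
    ring
  rw [h2, ← Summable.tsum_sub]
  · apply tsum_congr
    intro i
    have hb : (fun x => V (x - 1) - V x) (k - i) = V (k - i - 1) - V (k - i) := rfl
    rw [hb, ← mul_sub, show k - i - 1 = k - 1 - i by ring]
  · apply summable_of_ne_finset_zero (s := Finset.Icc (0:ℤ) (n:ℤ))
    intro b hb; rw [hP b hb, zero_mul]
  · exact hs2

lemma convZ_smul (P Θ : ℤ → ℝ) (a : ℝ) : convZ P (a • Θ) = a • convZ P Θ := by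
  funext k
  show ∑' j, P j * (a • Θ) (k - j) = a * ∑' j, P j * Θ (k - j)
  rw [← tsum_mul_left]
  apply tsum_congr
  intro j
  simp [Pi.smul_apply, smul_eq_mul]
  ring

lemma tvNorm_smul (a : ℝ) (X : ℤ → ℝ) : tvNorm (a • X) = |a| * tvNorm X := by
  unfold tvNorm
  have h : ∀ k, |(a • X) k| = |a| * |X k| := fun k => by
    simp [Pi.smul_apply, smul_eq_mul, abs_mul]
  simp only [h]
  exact tsum_mul_left

lemma tvNorm_convZ_le (P Θ : ℤ → ℝ) (sP : Finset ℤ) (hP : ∀ j ∉ sP, P j = 0)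
    (hΘ : Summable fun k => |Θ k|) : tvNorm (convZ P Θ) ≤ tvNorm P * tvNorm Θ := by
  have hshift : ∀ j : ℤ, Summable fun k : ℤ => |Θ (k - j)| := by
    intro j
    exact ((Equiv.subRight j).summable_iff (f := fun k : ℤ => |Θ k|)).mpr hΘ
  have htv : ∀ j : ℤ, ∑' k : ℤ, |Θ (k - j)| = tvNorm Θ :=
    fun j => (Equiv.subRight j).tsum_eq (fun k => |Θ k|)
  have hconv : ∀ k : ℤ, convZ P Θ k = ∑ j ∈ sP, P j * Θ (k - j) := by
    intro k
    exact tsum_eq_sum (by intro b hb; rw [hP b hb, zero_mul])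
  have hmaj : ∀ k : ℤ, |convZ P Θ k| ≤ ∑ j ∈ sP, |P j| * |Θ (k - j)| := by
    intro k
    rw [hconv k]
    calc |∑ j ∈ sP, P j * Θ (k - j)| ≤ ∑ j ∈ sP, |P j * Θ (k - j)| :=
          Finset.abs_sum_le_sum_abs _ _
    _ = ∑ j ∈ sP, |P j| * |Θ (k - j)| := by simp [abs_mul]
  have hmajsum : Summable fun k : ℤ => ∑ j ∈ sP, |P j| * |Θ (k - j)| := by
    apply summable_sum
    intro j _
    exact (hshift j).mul_left _
  have hlhs : Summable fun k : ℤ => |convZ P Θ k| := by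
    apply Summable.of_nonneg_of_le (fun k => abs_nonneg _) hmaj hmajsum
  calc tvNorm (convZ P Θ) ≤ ∑' k : ℤ, ∑ j ∈ sP, |P j| * |Θ (k - j)| :=
        Summable.tsum_le_tsum hmaj hlhs hmajsum
  _ = ∑ j ∈ sP, ∑' k : ℤ, |P j| * |Θ (k - j)| := by
        rw [Summable.tsum_finsetSum]
        intro j _
        exact (hshift j).mul_left _
  _ = ∑ j ∈ sP, |P j| * tvNorm Θ := by
        apply Finset.sum_congr rfl
        intro j _
        rw [tsum_mul_left, htv j]
  _ = (∑ j ∈ sP, |P j|) * tvNorm Θ := by rw [Finset.sum_mul]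
  _ = tvNorm P * tvNorm Θ := by
        congr 1
        exact (tsum_eq_sum (by intro b hb; rw [hP b hb, abs_zero])).symm


section Machinery

variable {w : ℕ → ℝ}

lemma choose_summable_step {d : ℕ} (h0 : ∀ m, 0 ≤ w m)
    (hd : Summable fun m => ((m.choose (d+1)) : ℝ) * w m) (hw : Summable w) :
    Summable fun m => ((m.choose d) : ℝ) * w m := by
  rw [← summable_nat_add_iff (f := fun m => ((m.choose d) : ℝ) * w m) (2*d+2)]
  apply Summable.of_nonneg_of_le
      (f := fun m => (((m + (2*d+2)).choose (d+1)) : ℝ) * w (m + (2*d+2)))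
  · intro m
    exact mul_nonneg (by positivity) (h0 _)
  · intro m
    have hc : (m + (2*d+2)).choose d ≤ (m + (2*d+2)).choose (d+1) :=
      Nat.choose_le_succ_of_lt_half_left (by omega)
    exact mul_le_mul_of_nonneg_right (by exact_mod_cast hc) (h0 _)
  · exact (summable_nat_add_iff (f := fun m => ((m.choose (d+1)) : ℝ) * w m) (2*d+2)).mpr hd

lemma choose_summable_le {D : ℕ} (h0 : ∀ m, 0 ≤ w m)
    (hD : Summable fun m => ((m.choose D) : ℝ) * w m)
    (hw : Summable w) : ∀ d, d ≤ D → Summable fun m => ((m.choose d) : ℝ) * w m := by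
  have key : ∀ j d, d + j = D → Summable fun m => ((m.choose d) : ℝ) * w m := by
    intro j
    induction j with
    | zero => intro d hd; subst hd; simpa using hD
    | succ j ih =>
        intro d hd
        have h1 : Summable fun m => ((m.choose (d+1)) : ℝ) * w m := ih (d+1) (by omega)
        exact choose_summable_step h0 h1 hw
  intro d hd
  exact key (D - d) d (by omega)

lemma choose_shift_summable {D : ℕ} (h0 : ∀ m, 0 ≤ w m)
    (hD : Summable fun m => ((m.choose D) : ℝ) * w m) (hw : Summable w) :
    ∀ b d, d ≤ D → Summable fun m => (((m + b).choose d) : ℝ) * w m := by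
  intro b
  induction b with
  | zero => intro d hd; simpa using choose_summable_le h0 hD hw d hd
  | succ b ih =>
      intro d hd
      cases d with
      | zero => simpa using hw
      | succ d =>
          have h1 := ih (d+1) hd
          have h2 := ih d (by omega)
          have hkey : ∀ m : ℕ, (((m + (b+1)).choose (d+1)) : ℝ) * w m
              = ((m + b).choose (d+1) : ℝ) * w m + ((m + b).choose d : ℝ) * w m := by
            intro m
            have hp : (m + b + 1).choose (d+1) = (m+b).choose d + (m+b).choose (d+1) :=
              Nat.choose_succ_succ _ _
            rw [show m + (b+1) = m + b + 1 from rfl, hp]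
            push_cast
            ring
          simp only [hkey]
          exact h1.add h2

lemma choose_shift_arg_summable {D : ℕ} (h0 : ∀ m, 0 ≤ w m)
    (hD : Summable fun m => ((m.choose D) : ℝ) * w m) (hw : Summable w) :
    ∀ (n b d : ℕ), d ≤ D → Summable fun m => (((m + b).choose d) : ℝ) * w (m + n) := by
  intro n b d hd
  apply Summable.of_nonneg_of_le
      (f := fun m => (((m + n + (n + b)).choose d) : ℝ) * w (m + n))
  · intro m
    exact mul_nonneg (by positivity) (h0 _)
  · intro m
    have hc : (m + b).choose d ≤ (m + n + (n+b)).choose d :=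
      Nat.choose_le_choose d (by omega)
    exact mul_le_mul_of_nonneg_right (by exact_mod_cast hc) (h0 _)
  · exact (summable_nat_add_iff (f := fun m => (((m + (n+b)).choose d) : ℝ) * w m) n).mpr (choose_shift_summable h0 hD hw (n+b) d hd)

lemma ray_summable_pos {W : ℤ → ℝ} {D : ℕ}
    (h0 : ∀ k, 0 ≤ W k)
    (hp : Summable fun m : ℕ => ((m.choose D) : ℝ) * W (m:ℤ))
    (hw : Summable fun m : ℕ => W (m:ℤ)) :
    ∀ (a : ℤ) (b d : ℕ), d ≤ D → Summable fun t : ℕ => (((t + b).choose d) : ℝ) * W (a + t) := by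
  have h0' : ∀ m : ℕ, 0 ≤ W (m:ℤ) := fun m => h0 _
  intro a b d hd
  rcases le_or_gt 0 a with ha | ha
  · have h := choose_shift_arg_summable (w := fun m : ℕ => W (m:ℤ)) h0' hp hw a.toNat b d hd
    apply Summable.congr h
    intro t
    have harg : ((t + a.toNat : ℕ) : ℤ) = a + t := by omega
    beta_reduce
    rw [harg]
  · set N := (-a).toNat with hN
    have haN : a + (N:ℤ) = 0 := by omega
    rw [← summable_nat_add_iff (f := fun t : ℕ => (((t + b).choose d) : ℝ) * W (a + t)) N]
    have h := choose_shift_summable (w := fun m : ℕ => W (m:ℤ)) h0' hp hw (N + b) d hd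
    apply Summable.congr h
    intro t
    have h1 : t + (N + b) = t + N + b := by omega
    have h2 : ((t:ℕ) : ℤ) = a + ((t + N : ℕ) : ℤ) := by omega
    beta_reduce
    rw [← h1, ← h2]

lemma ray_summable_neg {W : ℤ → ℝ} {D : ℕ}
    (h0 : ∀ k, 0 ≤ W k)
    (hm : Summable fun m : ℕ => ((m.choose D) : ℝ) * W (-(m:ℤ)))
    (hw : Summable fun m : ℕ => W (-(m:ℤ))) :
    ∀ (a : ℤ) (b d : ℕ), d ≤ D → Summable fun t : ℕ => (((t + b).choose d) : ℝ) * W (a - t) := by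
  intro a b d hd
  have h := ray_summable_pos (W := fun k => W (-k)) (fun k => h0 _) hm hw (-a) b d hd
  apply Summable.congr h
  intro t
  have : (-(-a + (t:ℤ))) = a - t := by ring
  beta_reduce
  rw [this]

end Machinery


noncomputable def Useq (M : ℤ → ℝ) : ℕ → ℤ → ℝ
  | 0 => M
  | (r+1) => fun k =>
      if 0 ≤ k then ∑' t : ℕ, (((t + r).choose r : ℕ) : ℝ) * M (k + r + 1 + t)
      else if k + r + 1 ≤ 0 then ((-1:ℝ))^(r+1) * ∑' t : ℕ, (((t + r).choose r : ℕ) : ℝ) * M (k - t)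
      else 0

lemma Useq_succ_apply (M : ℤ → ℝ) (r : ℕ) (k : ℤ) :
    Useq M (r+1) k = if 0 ≤ k then ∑' t : ℕ, (((t + r).choose r : ℕ) : ℝ) * M (k + r + 1 + t)
      else if k + r + 1 ≤ 0 then ((-1:ℝ))^(r+1) * ∑' t : ℕ, (((t + r).choose r : ℕ) : ℝ) * M (k - t)
      else 0 := rfl

lemma peel_pos (M : ℤ → ℝ) (b d : ℕ) (a : ℤ)
    (h : Summable fun t : ℕ => (((t + b).choose d : ℕ) : ℝ) * M (a + t)) :
    ∑' t : ℕ, (((t + b).choose d : ℕ) : ℝ) * M (a + t)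
      = ((b.choose d : ℕ) : ℝ) * M a
        + ∑' t : ℕ, (((t + (b+1)).choose d : ℕ) : ℝ) * M (a + 1 + t) := by
  rw [Summable.tsum_eq_zero_add h]
  congr 1
  · norm_num
  · apply tsum_congr; intro t
    rw [show t + 1 + b = t + (b + 1) by omega,
        show a + ((t + 1 : ℕ) : ℤ) = a + 1 + t by push_cast; ring]

lemma peel_neg (M : ℤ → ℝ) (b d : ℕ) (a : ℤ)
    (h : Summable fun t : ℕ => (((t + b).choose d : ℕ) : ℝ) * M (a - t)) :
    ∑' t : ℕ, (((t + b).choose d : ℕ) : ℝ) * M (a - t)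
      = ((b.choose d : ℕ) : ℝ) * M a
        + ∑' t : ℕ, (((t + (b+1)).choose d : ℕ) : ℝ) * M (a - 1 - t) := by
  rw [Summable.tsum_eq_zero_add h]
  congr 1
  · norm_num
  · apply tsum_congr; intro t
    rw [show t + 1 + b = t + (b + 1) by omega,
        show a - ((t + 1 : ℕ) : ℤ) = a - 1 - t by push_cast; ring]

lemma peel_pos0 (M : ℤ → ℝ) (a : ℤ) (h : Summable fun t : ℕ => M (a + t)) :
    ∑' t : ℕ, M (a + t) = M a + ∑' t : ℕ, M (a + 1 + t) := by
  rw [Summable.tsum_eq_zero_add h]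
  congr 1
  · norm_num
  · apply tsum_congr; intro t
    rw [show a + ((t + 1 : ℕ) : ℤ) = a + 1 + t by push_cast; ring]

lemma peel_neg0 (M : ℤ → ℝ) (a : ℤ) (h : Summable fun t : ℕ => M (a - t)) :
    ∑' t : ℕ, M (a - t) = M a + ∑' t : ℕ, M (a - 1 - t) := by
  rw [Summable.tsum_eq_zero_add h]
  congr 1
  · norm_num
  · apply tsum_congr; intro t
    rw [show a - ((t + 1 : ℕ) : ℤ) = a - 1 - t by push_cast; ring]

lemma tsum_pascal_pos (M : ℤ → ℝ) (q : ℕ) (a : ℤ)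
    (h1 : Summable fun t : ℕ => (((t + (q+1)).choose q : ℕ) : ℝ) * M (a + t))
    (h2 : Summable fun t : ℕ => (((t + (q+1)).choose (q+1) : ℕ) : ℝ) * M (a + t)) :
    ∑' t : ℕ, (((t + (q+1+1)).choose (q+1) : ℕ) : ℝ) * M (a + t)
      = (∑' t : ℕ, (((t + (q+1)).choose q : ℕ) : ℝ) * M (a + t))
        + ∑' t : ℕ, (((t + (q+1)).choose (q+1) : ℕ) : ℝ) * M (a + t) := by
  rw [← Summable.tsum_add h1 h2]
  apply tsum_congr; intro t
  have hp : (t + (q+1+1)).choose (q+1) = (t + (q+1)).choose q + (t + (q+1)).choose (q+1) := by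
    rw [show t + (q+1+1) = (t + (q+1)) + 1 by omega]
    exact Nat.choose_succ_succ _ _
  rw [hp]
  push_cast
  ring

lemma tsum_pascal_neg (M : ℤ → ℝ) (q : ℕ) (a : ℤ)
    (h1 : Summable fun t : ℕ => (((t + (q+1)).choose q : ℕ) : ℝ) * M (a - t))
    (h2 : Summable fun t : ℕ => (((t + (q+1)).choose (q+1) : ℕ) : ℝ) * M (a - t)) :
    ∑' t : ℕ, (((t + (q+1+1)).choose (q+1) : ℕ) : ℝ) * M (a - t)
      = (∑' t : ℕ, (((t + (q+1)).choose q : ℕ) : ℝ) * M (a - t))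
        + ∑' t : ℕ, (((t + (q+1)).choose (q+1) : ℕ) : ℝ) * M (a - t) := by
  rw [← Summable.tsum_add h1 h2]
  apply tsum_congr; intro t
  have hp : (t + (q+1+1)).choose (q+1) = (t + (q+1)).choose q + (t + (q+1)).choose (q+1) := by
    rw [show t + (q+1+1) = (t + (q+1)) + 1 by omega]
    exact Nat.choose_succ_succ _ _
  rw [hp]
  push_cast
  ring

section Delta

variable {M : ℤ → ℝ} {s : ℕ}
variable (hrayP : ∀ (a : ℤ) (b d : ℕ), d ≤ s+1 →
    Summable fun t : ℕ => (((t+b).choose d : ℕ) : ℝ) * M (a + t))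
variable (hrayM : ∀ (a : ℤ) (b d : ℕ), d ≤ s+1 →
    Summable fun t : ℕ => (((t+b).choose d : ℕ) : ℝ) * M (a - t))

include hrayP hrayM

lemma Useq_one_apply (M' : ℤ → ℝ) (k : ℤ) :
    Useq M' 1 k = if 0 ≤ k then ∑' t : ℕ, M' (k + 1 + t) else -∑' t : ℕ, M' (k - t) := by
  rw [show Useq M' 1 k = (if 0 ≤ k then ∑' t : ℕ, (((t + 0).choose 0 : ℕ) : ℝ) * M' (k + (0:ℕ) + 1 + t)
      else if k + (0:ℕ) + 1 ≤ 0 then ((-1:ℝ))^(0+1) * ∑' t : ℕ, (((t + 0).choose 0 : ℕ) : ℝ) * M' (k - t)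
      else 0) from rfl]
  by_cases h : 0 ≤ k
  · rw [if_pos h, if_pos h]
    apply tsum_congr; intro t
    have h1 : ((t + 0).choose 0 : ℝ) = 1 := by norm_num
    have h2 : k + ((0:ℕ) : ℤ) + 1 + t = k + 1 + t := by push_cast; ring
    rw [h1, h2, one_mul]
  · rw [if_neg h, if_neg h, if_pos (show k + ((0:ℕ):ℤ) + 1 ≤ 0 by push_cast; omega)]
    rw [show ((-1:ℝ))^(0+1) = -1 by norm_num, neg_one_mul, neg_inj]
    apply tsum_congr; intro t
    have h1 : ((t + 0).choose 0 : ℝ) = 1 := by norm_num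
    rw [h1, one_mul]

omit hrayP hrayM in
lemma ray0_pos (h : ∀ (a : ℤ) (b d : ℕ), d ≤ s+1 →
    Summable fun t : ℕ => (((t+b).choose d : ℕ) : ℝ) * M (a + t)) (a : ℤ) :
    Summable fun t : ℕ => M (a + t) :=
  (h a 0 0 (by omega)).congr (fun t => by norm_num)

omit hrayP hrayM in
lemma ray0_neg (h : ∀ (a : ℤ) (b d : ℕ), d ≤ s+1 →
    Summable fun t : ℕ => (((t+b).choose d : ℕ) : ℝ) * M (a - t)) (a : ℤ) :
    Summable fun t : ℕ => M (a - t) :=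
  (h a 0 0 (by omega)).congr (fun t => by norm_num)

lemma Useq_delta0
    (mass : M 0 + (∑' t : ℕ, M (1 + (t:ℤ))) + (∑' t : ℕ, M (-1 - (t:ℤ))) = 0) :
    ∀ k : ℤ, Useq M 1 (k - 1) - Useq M 1 k = M k := by
  intro k
  rcases lt_trichotomy k 0 with hk | hk | hk
  · -- k ≤ -1
    rw [Useq_one_apply hrayP hrayM M (k-1), Useq_one_apply hrayP hrayM M k,
        if_neg (show ¬ (0:ℤ) ≤ k - 1 by omega), if_neg (show ¬ (0:ℤ) ≤ k by omega)]
    have hpeel := peel_neg0 M k (ray0_neg hrayM k)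
    have e1 : ∑' t : ℕ, M (k - 1 - (t:ℤ)) = ∑' t : ℕ, M (k - 1 + -(t:ℤ)) := by
      apply tsum_congr; intro t; rw [show k - 1 - (t:ℤ) = k - 1 + -(t:ℤ) by ring]
    linarith [hpeel]
  · -- k = 0
    subst hk
    rw [Useq_one_apply hrayP hrayM M ((0:ℤ)-1), Useq_one_apply hrayP hrayM M 0,
        if_neg (show ¬ (0:ℤ) ≤ 0 - 1 by omega), if_pos (le_refl (0:ℤ))]
    have e1 : ∑' t : ℕ, M ((0:ℤ) - 1 - t) = ∑' t : ℕ, M (-1 - (t:ℤ)) := by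
      apply tsum_congr; intro t; rw [show (0:ℤ) - 1 - t = -1 - (t:ℤ) by ring]
    have e2 : ∑' t : ℕ, M ((0:ℤ) + 1 + t) = ∑' t : ℕ, M (1 + (t:ℤ)) := by
      apply tsum_congr; intro t; rw [show (0:ℤ) + 1 + t = 1 + (t:ℤ) by ring]
    rw [e1, e2]
    linarith [mass]
  · -- k ≥ 1
    rw [Useq_one_apply hrayP hrayM M (k-1), Useq_one_apply hrayP hrayM M k,
        if_pos (show (0:ℤ) ≤ k - 1 by omega), if_pos (show (0:ℤ) ≤ k by omega)]
    have e1 : ∑' t : ℕ, M (k - 1 + 1 + (t:ℤ)) = ∑' t : ℕ, M (k + (t:ℤ)) := by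
      apply tsum_congr; intro t; rw [show k - 1 + 1 + (t:ℤ) = k + (t:ℤ) by ring]
    rw [e1, peel_pos0 M k (ray0_pos hrayP k)]
    ring

lemma Useq_delta_succ (q : ℕ) (hq : q + 1 ≤ s)
    (momP : ∑' t : ℕ, (((t+(q+1)).choose (q+1) : ℕ) : ℝ) * M ((q:ℤ) + 1 + t) = 0)
    (momM : ∑' t : ℕ, (((t+(q+1)).choose (q+1) : ℕ) : ℝ) * M (-(q:ℤ) - 1 - t) = 0) :
    ∀ k : ℤ, Useq M (q+1+1) (k - 1) - Useq M (q+1+1) k = Useq M (q+1) k := by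
  intro k
  have hdq : q ≤ s + 1 := by omega
  have hdq1 : q + 1 ≤ s + 1 := by omega
  by_cases hA : 1 ≤ k
  · -- Case A : k ≥ 1
    rw [Useq_succ_apply M (q+1) (k-1), Useq_succ_apply M (q+1) k, Useq_succ_apply M q k,
        if_pos (show (0:ℤ) ≤ k - 1 by omega), if_pos (show (0:ℤ) ≤ k by omega),
        if_pos (show (0:ℤ) ≤ k by omega)]
    have e1 : ∑' t : ℕ, (((t + (q+1)).choose (q+1) : ℕ) : ℝ) * M (k - 1 + ((q+1:ℕ):ℤ) + 1 + t)
        = ∑' t : ℕ, (((t + (q+1)).choose (q+1) : ℕ) : ℝ) * M (k + (q:ℤ) + 1 + t) := by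
      apply tsum_congr; intro t
      rw [show k - 1 + ((q+1:ℕ):ℤ) + 1 + (t:ℤ) = k + (q:ℤ) + 1 + t by push_cast; ring]
    have e2 : ∑' t : ℕ, (((t + (q+1)).choose (q+1) : ℕ) : ℝ) * M (k + ((q+1:ℕ):ℤ) + 1 + t)
        = ∑' t : ℕ, (((t + (q+1)).choose (q+1) : ℕ) : ℝ) * M (k + (q:ℤ) + 1 + 1 + t) := by
      apply tsum_congr; intro t
      rw [show k + ((q+1:ℕ):ℤ) + 1 + (t:ℤ) = k + (q:ℤ) + 1 + 1 + t by push_cast; ring]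
    have e3 : ∑' t : ℕ, (((t + q).choose q : ℕ) : ℝ) * M (k + ((q:ℕ):ℤ) + 1 + t)
        = ∑' t : ℕ, (((t + q).choose q : ℕ) : ℝ) * M (k + (q:ℤ) + 1 + t) := rfl
    rw [e1, e2, e3]
    rw [peel_pos M (q+1) (q+1) (k + (q:ℤ) + 1) (hrayP _ _ _ hdq1)]
    rw [tsum_pascal_pos M q (k + (q:ℤ) + 1 + 1) (hrayP _ _ _ hdq) (hrayP _ _ _ hdq1)]
    rw [peel_pos M q q (k + (q:ℤ) + 1) (hrayP _ _ _ hdq)]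
    simp only [Nat.choose_self, Nat.cast_one, one_mul]
    ring
  · by_cases hB : k = 0
    · -- Case B : k = 0
      subst hB
      rw [Useq_succ_apply M (q+1) ((0:ℤ)-1), Useq_succ_apply M (q+1) 0, Useq_succ_apply M q 0,
          if_neg (show ¬ (0:ℤ) ≤ 0 - 1 by omega),
          if_neg (show ¬ ((0:ℤ) - 1 + ((q+1:ℕ):ℤ) + 1 ≤ 0) by push_cast; omega),
          if_pos (le_refl (0:ℤ)), if_pos (le_refl (0:ℤ))]
      have e2 : ∑' t : ℕ, (((t + (q+1)).choose (q+1) : ℕ) : ℝ) * M ((0:ℤ) + ((q+1:ℕ):ℤ) + 1 + t)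
          = ∑' t : ℕ, (((t + (q+1)).choose (q+1) : ℕ) : ℝ) * M ((q:ℤ) + 1 + 1 + t) := by
        apply tsum_congr; intro t
        rw [show (0:ℤ) + ((q+1:ℕ):ℤ) + 1 + (t:ℤ) = (q:ℤ) + 1 + 1 + t by push_cast; ring]
      have e3 : ∑' t : ℕ, (((t + q).choose q : ℕ) : ℝ) * M ((0:ℤ) + ((q:ℕ):ℤ) + 1 + t)
          = ∑' t : ℕ, (((t + q).choose q : ℕ) : ℝ) * M ((q:ℤ) + 1 + t) := by
        apply tsum_congr; intro t
        rw [show (0:ℤ) + ((q:ℕ):ℤ) + 1 + (t:ℤ) = (q:ℤ) + 1 + t by push_cast; ring]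
      rw [e2, e3]
      have hmom := momP
      rw [peel_pos M (q+1) (q+1) ((q:ℤ) + 1) (hrayP _ _ _ hdq1)] at hmom
      rw [tsum_pascal_pos M q ((q:ℤ) + 1 + 1) (hrayP _ _ _ hdq) (hrayP _ _ _ hdq1)] at hmom
      rw [peel_pos M q q ((q:ℤ) + 1) (hrayP _ _ _ hdq)]
      simp only [Nat.choose_self, Nat.cast_one, one_mul] at hmom ⊢
      linarith [hmom]
    · by_cases hC : -(q:ℤ) ≤ k
      · -- Case C : -q ≤ k ≤ -1 (dead band)
        rw [Useq_succ_apply M (q+1) (k-1), Useq_succ_apply M (q+1) k, Useq_succ_apply M q k,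
            if_neg (show ¬ (0:ℤ) ≤ k - 1 by omega),
            if_neg (show ¬ (k - 1 + ((q+1:ℕ):ℤ) + 1 ≤ 0) by push_cast; omega),
            if_neg (show ¬ (0:ℤ) ≤ k by omega),
            if_neg (show ¬ (k + ((q+1:ℕ):ℤ) + 1 ≤ 0) by push_cast; omega),
            if_neg (show ¬ (0:ℤ) ≤ k by omega),
            if_neg (show ¬ (k + ((q:ℕ):ℤ) + 1 ≤ 0) by push_cast; omega)]
        ring
      · by_cases hD : k = -(q:ℤ) - 1
        · -- Case D : k = -q-1
          subst hD
          rw [Useq_succ_apply M (q+1) (-(q:ℤ)-1-1), Useq_succ_apply M (q+1) (-(q:ℤ)-1),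
              Useq_succ_apply M q (-(q:ℤ)-1),
              if_neg (show ¬ (0:ℤ) ≤ -(q:ℤ)-1-1 by omega),
              if_pos (show (-(q:ℤ)-1-1) + ((q+1:ℕ):ℤ) + 1 ≤ 0 by push_cast; omega),
              if_neg (show ¬ (0:ℤ) ≤ -(q:ℤ)-1 by omega),
              if_neg (show ¬ ((-(q:ℤ)-1) + ((q+1:ℕ):ℤ) + 1 ≤ 0) by push_cast; omega),
              if_neg (show ¬ (0:ℤ) ≤ -(q:ℤ)-1 by omega),
              if_pos (show (-(q:ℤ)-1) + ((q:ℕ):ℤ) + 1 ≤ 0 by push_cast; omega)]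
          have e1 : ∑' t : ℕ, (((t + (q+1)).choose (q+1) : ℕ) : ℝ) * M (-(q:ℤ)-1-1 - t)
              = ∑' t : ℕ, (((t + (q+1)).choose (q+1) : ℕ) : ℝ) * M (-(q:ℤ) - 1 - 1 - t) := rfl
          have hmom := momM
          rw [peel_neg M (q+1) (q+1) (-(q:ℤ) - 1) (hrayM _ _ _ hdq1)] at hmom
          rw [tsum_pascal_neg M q (-(q:ℤ) - 1 - 1) (hrayM _ _ _ hdq) (hrayM _ _ _ hdq1)] at hmom
          have e2 : ∑' t : ℕ, (((t + q).choose q : ℕ) : ℝ) * M (-(q:ℤ)-1 - t)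
              = ∑' t : ℕ, (((t + q).choose q : ℕ) : ℝ) * M (-(q:ℤ) - 1 - t) := rfl
          rw [e1, e2, peel_neg M q q (-(q:ℤ) - 1) (hrayM _ _ _ hdq)]
          simp only [Nat.choose_self, Nat.cast_one, one_mul] at hmom ⊢
          linear_combination ((-1:ℝ)^(q+1+1)) * hmom
        · -- Case E : k ≤ -q-2
          have hE : k + (q:ℤ) + 2 ≤ 0 := by omega
          rw [Useq_succ_apply M (q+1) (k-1), Useq_succ_apply M (q+1) k, Useq_succ_apply M q k,
              if_neg (show ¬ (0:ℤ) ≤ k - 1 by omega),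
              if_pos (show (k-1) + ((q+1:ℕ):ℤ) + 1 ≤ 0 by push_cast; omega),
              if_neg (show ¬ (0:ℤ) ≤ k by omega),
              if_pos (show k + ((q+1:ℕ):ℤ) + 1 ≤ 0 by push_cast; omega),
              if_neg (show ¬ (0:ℤ) ≤ k by omega),
              if_pos (show k + ((q:ℕ):ℤ) + 1 ≤ 0 by push_cast; omega)]
          have e1 : ∑' t : ℕ, (((t + (q+1)).choose (q+1) : ℕ) : ℝ) * M (k - 1 - t)
              = ∑' t : ℕ, (((t + (q+1)).choose (q+1) : ℕ) : ℝ) * M (k - 1 - t) := rfl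
          have hpeel := peel_neg M (q+1) (q+1) k (hrayM _ _ _ hdq1)
          rw [tsum_pascal_neg M q (k - 1) (hrayM _ _ _ hdq) (hrayM _ _ _ hdq1)] at hpeel
          have hpeel2 := peel_neg M q q k (hrayM _ _ _ hdq)
          rw [hpeel, hpeel2]
          simp only [Nat.choose_self, Nat.cast_one, one_mul]
          ring
  
end Delta

lemma hockey (s : ℕ) : ∀ m : ℕ, ∑ t ∈ Finset.range (m+1), (t+s).choose s = (m+s+1).choose (s+1) := by
  intro m
  induction m with
  | zero => simp
  | succ m ih =>
      rw [Finset.sum_range_succ, ih, show m+1+s+1 = (m+s+1)+1 by omega, Nat.choose_succ_succ,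
          show m+1+s = m+s+1 by omega]
      exact Nat.add_comm _ _

section NormBound

variable (M W : ℤ → ℝ) (s : ℕ)

lemma abs_Useq_pos (habs : ∀ k, |M k| ≤ W k) (k : ℤ) (hk : 0 ≤ k)
    (hW : Summable fun t : ℕ => (((t+s).choose s : ℕ):ℝ) * W (k + s + 1 + t)) :
    |Useq M (s+1) k| ≤ ∑' t : ℕ, (((t+s).choose s : ℕ):ℝ) * W (k + s + 1 + t) := by
  rw [Useq_succ_apply, if_pos hk]
  have hb : ∀ t : ℕ, |(((t+s).choose s : ℕ):ℝ) * M (k + s + 1 + t)|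
      ≤ (((t+s).choose s : ℕ):ℝ) * W (k + s + 1 + t) := by
    intro t
    rw [abs_mul, abs_of_nonneg (by positivity : (0:ℝ) ≤ (((t+s).choose s : ℕ):ℝ))]
    exact mul_le_mul_of_nonneg_left (habs _) (by positivity)
  have habs_sum : Summable fun t : ℕ => |(((t+s).choose s : ℕ):ℝ) * M (k + s + 1 + t)| :=
    Summable.of_nonneg_of_le (fun t => abs_nonneg _) hb hW
  have hnorm : Summable fun t : ℕ => ‖(((t+s).choose s : ℕ):ℝ) * M (k + s + 1 + t)‖ := by
    simp only [Real.norm_eq_abs]; exact habs_sum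
  have h1 := norm_tsum_le_tsum_norm hnorm
  simp only [Real.norm_eq_abs] at h1
  calc |∑' t : ℕ, (((t+s).choose s : ℕ):ℝ) * M (k + s + 1 + t)|
      ≤ ∑' t : ℕ, |(((t+s).choose s : ℕ):ℝ) * M (k + s + 1 + t)| := h1
  _ ≤ _ := Summable.tsum_le_tsum hb habs_sum hW

lemma abs_Useq_neg (habs : ∀ k, |M k| ≤ W k) (k : ℤ) (hk1 : ¬ (0 ≤ k)) (hk2 : k + (s:ℤ) + 1 ≤ 0)
    (hW : Summable fun t : ℕ => (((t+s).choose s : ℕ):ℝ) * W (k - t)) :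
    |Useq M (s+1) k| ≤ ∑' t : ℕ, (((t+s).choose s : ℕ):ℝ) * W (k - t) := by
  rw [Useq_succ_apply, if_neg hk1, if_pos hk2]
  have hb : ∀ t : ℕ, |(((t+s).choose s : ℕ):ℝ) * M (k - t)|
      ≤ (((t+s).choose s : ℕ):ℝ) * W (k - t) := by
    intro t
    rw [abs_mul, abs_of_nonneg (by positivity : (0:ℝ) ≤ (((t+s).choose s : ℕ):ℝ))]
    exact mul_le_mul_of_nonneg_left (habs _) (by positivity)
  have habs_sum : Summable fun t : ℕ => |(((t+s).choose s : ℕ):ℝ) * M (k - t)| :=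
    Summable.of_nonneg_of_le (fun t => abs_nonneg _) hb hW
  rw [abs_mul, abs_pow, abs_neg, abs_one, one_pow, one_mul]
  have hnorm : Summable fun t : ℕ => ‖(((t+s).choose s : ℕ):ℝ) * M (k - t)‖ := by
    simp only [Real.norm_eq_abs]; exact habs_sum
  have h1 := norm_tsum_le_tsum_norm hnorm
  simp only [Real.norm_eq_abs] at h1
  calc |∑' t : ℕ, (((t+s).choose s : ℕ):ℝ) * M (k - t)|
      ≤ ∑' t : ℕ, |(((t+s).choose s : ℕ):ℝ) * M (k - t)| := h1
  _ ≤ _ := Summable.tsum_le_tsum hb habs_sum hW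

lemma Useq_band (k : ℤ) (h1 : ¬ 0 ≤ k) (h2 : ¬ (k + (s:ℤ) + 1 ≤ 0)) : Useq M (s+1) k = 0 := by
  rw [Useq_succ_apply, if_neg h1, if_neg h2]

/-- The one-sided Fubini computation. -/
lemma fubini_side (h0W : ∀ k : ℤ, 0 ≤ W k) (g : ℕ → ℤ)
    (hfib : ∀ n : ℕ, Summable fun t : ℕ => (((t+s).choose s : ℕ):ℝ) * W (g (n + t)))
    (hmsum : Summable fun m : ℕ => (((m+s+1).choose (s+1) : ℕ):ℝ) * W (g m)) :
    Summable (fun n : ℕ => ∑' t : ℕ, (((t+s).choose s : ℕ):ℝ) * W (g (n + t))) ∧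
    (∑' n : ℕ, ∑' t : ℕ, (((t+s).choose s : ℕ):ℝ) * W (g (n + t)))
      = ∑' m : ℕ, (((m+s+1).choose (s+1) : ℕ):ℝ) * W (g m) := by
  set f : ℕ × ℕ → ℝ := fun p => (((p.2+s).choose s : ℕ):ℝ) * W (g (p.1 + p.2)) with hf
  set h : ℕ × ℕ → ℝ :=
    fun p => if p.2 ≤ p.1 then (((p.2+s).choose s : ℕ):ℝ) * W (g p.1) else 0 with hh
  have hf0 : 0 ≤ f := by
    intro p
    exact mul_nonneg (by positivity) (h0W _)
  have hh0 : 0 ≤ h := by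
    intro p
    simp only [hh]
    split
    · exact mul_nonneg (by positivity) (h0W _)
    · exact le_refl 0
  have hhfib : ∀ m : ℕ, Summable fun t : ℕ => h (m, t) := by
    intro m
    apply summable_of_ne_finset_zero (s := Finset.range (m+1))
    intro t ht
    simp only [hh]
    rw [if_neg (by simp at ht; omega)]
  have hhfibval : ∀ m : ℕ, (∑' t : ℕ, h (m, t))
      = (((m+s+1).choose (s+1) : ℕ):ℝ) * W (g m) := by
    intro m
    rw [tsum_eq_sum (s := Finset.range (m+1))
        (by intro t ht; simp only [hh]; rw [if_neg (by simp at ht; omega)])]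
    have : ∀ t ∈ Finset.range (m+1), h (m, t) = (((t+s).choose s : ℕ):ℝ) * W (g m) := by
      intro t ht
      simp only [hh]
      rw [if_pos (by simp at ht; omega)]
    rw [Finset.sum_congr rfl this, ← Finset.sum_mul]
    congr 1
    rw [← Nat.cast_sum]
    exact_mod_cast congrArg (Nat.cast (R := ℝ)) (hockey s m)
  have hhmsum : Summable fun m : ℕ => ∑' t : ℕ, h (m, t) := by
    apply Summable.congr hmsum
    intro m
    exact (hhfibval m).symm
  have hhsum : Summable h := by
    apply (summable_prod_of_nonneg hh0).mpr
    exact ⟨hhfib, hhmsum⟩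
  have hφinj : Function.Injective (fun p : ℕ × ℕ => ((p.1 + p.2, p.2) : ℕ × ℕ)) := by
    intro p q hpq
    simp only [Prod.mk.injEq] at hpq
    obtain ⟨h1, h2⟩ := hpq
    have : p.1 = q.1 := by omega
    exact Prod.ext this h2
  have hcomp : ∀ p : ℕ × ℕ, h (p.1 + p.2, p.2) = f p := by
    intro p
    simp only [hh, hf]
    rw [if_pos (Nat.le_add_left _ _)]
  have hvanish : Function.support h ⊆ Set.range (fun p : ℕ × ℕ => ((p.1 + p.2, p.2) : ℕ × ℕ)) := by
    rintro ⟨m, t⟩ hx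
    by_cases hmt : t ≤ m
    · exact ⟨(m - t, t), by simp; omega⟩
    · exfalso
      apply hx
      simp only [hh]
      rw [if_neg (by simpa using hmt)]
  have hfsum : Summable f := by
    apply Summable.congr (hhsum.comp_injective hφinj)
    intro p
    exact hcomp p
  have htsumfh : ∑' p : ℕ × ℕ, f p = ∑' p : ℕ × ℕ, h p := by
    have h1 : ∑' p : ℕ × ℕ, h (p.1 + p.2, p.2) = ∑' p : ℕ × ℕ, h p :=
      Function.Injective.tsum_eq hφinj hvanish
    rw [← h1]
    exact tsum_congr fun p => (hcomp p).symm
  have hfibf : ∀ n : ℕ, Summable fun t : ℕ => f (n, t) := by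
    intro n
    exact hfib n
  constructor
  · exact ((summable_prod_of_nonneg hf0).mp hfsum).2
  · calc (∑' n : ℕ, ∑' t : ℕ, (((t+s).choose s : ℕ):ℝ) * W (g (n + t)))
        = ∑' p : ℕ × ℕ, f p := (Summable.tsum_prod' hfsum hfibf).symm
    _ = ∑' p : ℕ × ℕ, h p := htsumfh
    _ = ∑' m : ℕ, ∑' t : ℕ, h (m, t) := Summable.tsum_prod' hhsum hhfib
    _ = ∑' m : ℕ, (((m+s+1).choose (s+1) : ℕ):ℝ) * W (g m) := tsum_congr hhfibval

end NormBound

lemma conv_Useq (M : ℤ → ℝ) (s : ℕ)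
    (hdelta : ∀ r : ℕ, r ≤ s → ∀ k : ℤ, Useq M (r+1) (k-1) - Useq M (r+1) k = Useq M r k) :
    ∀ n : ℕ, n ≤ s + 1 → convZ (convPow (diracZ 1 - diracZ 0) n) (Useq M n) = M := by
  intro n
  induction n with
  | zero =>
      intro _
      show convZ (diracZ 0) (Useq M 0) = M
      rw [convZ_dirac0]
      rfl
  | succ n ih =>
      intro hn
      rw [convZ_convPow_succ]
      have h1 : (fun x => Useq M (n+1) (x-1) - Useq M (n+1) x) = Useq M n :=
        funext (hdelta n (by omega))
      rw [h1]
      exact ih (by omega)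

section NormMain

variable (M W : ℤ → ℝ) (s : ℕ)

lemma Useq_norm_main (h0W : ∀ k, 0 ≤ W k) (habs : ∀ k, |M k| ≤ W k)
    (hrayPW : ∀ (a : ℤ) (b d : ℕ), d ≤ s+1 →
      Summable fun t : ℕ => (((t+b).choose d : ℕ) : ℝ) * W (a + t))
    (hrayMW : ∀ (a : ℤ) (b d : ℕ), d ≤ s+1 →
      Summable fun t : ℕ => (((t+b).choose d : ℕ) : ℝ) * W (a - t)) :
    Summable (fun k : ℤ => |Useq M (s+1) k|) ∧
    tvNorm (Useq M (s+1)) ≤ (∑' n : ℕ, ((n.choose (s+1) : ℕ) : ℝ) * W (n:ℤ))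
      + ∑' n : ℕ, ((n.choose (s+1) : ℕ) : ℝ) * W (-(n:ℤ)) := by
  -- positive side
  set gp : ℕ → ℤ := fun n => (n:ℤ) + s + 1 with hgp
  have hfibP : ∀ n : ℕ, Summable fun t : ℕ => (((t+s).choose s : ℕ) : ℝ) * W (gp (n + t)) := by
    intro n
    apply Summable.congr (hrayPW ((n:ℤ) + s + 1) s s (by omega))
    intro t
    congr 1
    simp only [hgp]
    push_cast
    ring
  have hmsumP : Summable fun m : ℕ => (((m+s+1).choose (s+1) : ℕ) : ℝ) * W (gp m) := by
    apply Summable.congr (hrayPW ((s:ℤ) + 1) (s+1) (s+1) le_rfl)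
    intro m
    rw [show m + (s+1) = m + s + 1 by omega]
    congr 1
    simp only [hgp]
    push_cast
    ring
  obtain ⟨hAsum, hAval⟩ := fubini_side W s h0W gp hfibP hmsumP
  have hUposptw : ∀ n : ℕ, |Useq M (s+1) (n:ℤ)|
      ≤ ∑' t : ℕ, (((t+s).choose s : ℕ) : ℝ) * W (gp (n + t)) := by
    intro n
    have hW' : Summable fun t : ℕ => (((t+s).choose s : ℕ) : ℝ) * W ((n:ℤ) + s + 1 + t) :=
      hrayPW ((n:ℤ) + s + 1) s s (by omega)
    have heq : ∑' t : ℕ, (((t+s).choose s : ℕ) : ℝ) * W ((n:ℤ) + s + 1 + t)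
        = ∑' t : ℕ, (((t+s).choose s : ℕ) : ℝ) * W (gp (n + t)) := by
      apply tsum_congr
      intro t
      congr 1
      simp only [hgp]
      push_cast
      ring
    rw [← heq]
    exact abs_Useq_pos M W s habs (n:ℤ) (by positivity) hW'
  have hUposSum : Summable fun n : ℕ => |Useq M (s+1) (n:ℤ)| :=
    Summable.of_nonneg_of_le (fun n => abs_nonneg _) hUposptw hAsum
  have hreidxP : ∑' m : ℕ, (((m+s+1).choose (s+1) : ℕ) : ℝ) * W (gp m)
      = ∑' n : ℕ, ((n.choose (s+1) : ℕ) : ℝ) * W (n:ℤ) := by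
    have hi : Function.Injective (fun m : ℕ => m + (s+1)) := add_left_injective _
    have hsupp : Function.support (fun n : ℕ => ((n.choose (s+1) : ℕ) : ℝ) * W (n:ℤ))
        ⊆ Set.range (fun m : ℕ => m + (s+1)) := by
      intro n hn
      rcases le_or_gt (s+1) n with h | h
      · exact ⟨n - (s+1), by simp; omega⟩
      · exfalso
        apply hn
        simp [Nat.choose_eq_zero_of_lt h]
    have h1 := Function.Injective.tsum_eq hi hsupp
    rw [← h1]
    apply tsum_congr
    intro m
    simp only [hgp]
    beta_reduce
    rw [show m + (s+1) = m + s + 1 by omega]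
    congr 2 <;> (push_cast; ring)
  have hposBound : ∑' n : ℕ, |Useq M (s+1) (n:ℤ)|
      ≤ ∑' n : ℕ, ((n.choose (s+1) : ℕ) : ℝ) * W (n:ℤ) := by
    calc ∑' n : ℕ, |Useq M (s+1) (n:ℤ)|
        ≤ ∑' n : ℕ, ∑' t : ℕ, (((t+s).choose s : ℕ) : ℝ) * W (gp (n + t)) :=
          Summable.tsum_le_tsum hUposptw hUposSum hAsum
    _ = ∑' m : ℕ, (((m+s+1).choose (s+1) : ℕ) : ℝ) * W (gp m) := hAval
    _ = _ := hreidxP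
  -- negative side
  set gm : ℕ → ℤ := fun n => -(n:ℤ) - s - 1 with hgm
  have hfibM : ∀ n : ℕ, Summable fun t : ℕ => (((t+s).choose s : ℕ) : ℝ) * W (gm (n + t)) := by
    intro n
    apply Summable.congr (hrayMW (-(n:ℤ) - s - 1) s s (by omega))
    intro t
    congr 1
    simp only [hgm]
    push_cast
    ring
  have hmsumM : Summable fun m : ℕ => (((m+s+1).choose (s+1) : ℕ) : ℝ) * W (gm m) := by
    apply Summable.congr (hrayMW (-(s:ℤ) - 1) (s+1) (s+1) le_rfl)
    intro m
    rw [show m + (s+1) = m + s + 1 by omega]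
    congr 1
    simp only [hgm]
    push_cast
    ring
  obtain ⟨hBsum, hBval⟩ := fubini_side W s h0W gm hfibM hmsumM
  have hband : ∀ n : ℕ, n < s → Useq M (s+1) (-((n:ℤ) + 1)) = 0 := by
    intro n hn
    apply Useq_band
    · omega
    · omega
  have hi2 : Function.Injective (fun j : ℕ => j + s) := add_left_injective _
  have hvan2 : Function.support (fun n : ℕ => |Useq M (s+1) (-((n:ℤ) + 1))|)
      ⊆ Set.range (fun j : ℕ => j + s) := by
    intro n hn
    rcases le_or_gt s n with h | h
    · exact ⟨n - s, by simp; omega⟩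
    · exfalso
      apply hn
      show |Useq M (s+1) (-((n:ℤ) + 1))| = 0
      rw [hband n h, abs_zero]
  have hUnegptw : ∀ j : ℕ, |Useq M (s+1) (-(((j + s : ℕ):ℤ) + 1))|
      ≤ ∑' t : ℕ, (((t+s).choose s : ℕ) : ℝ) * W (gm (j + t)) := by
    intro j
    have hW' : Summable fun t : ℕ => (((t+s).choose s : ℕ) : ℝ) * W (-(((j + s : ℕ):ℤ) + 1) - t) :=
      hrayMW (-(((j + s : ℕ):ℤ) + 1)) s s (by omega)
    have heq : ∑' t : ℕ, (((t+s).choose s : ℕ) : ℝ) * W (-(((j + s : ℕ):ℤ) + 1) - t)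
        = ∑' t : ℕ, (((t+s).choose s : ℕ) : ℝ) * W (gm (j + t)) := by
      apply tsum_congr
      intro t
      congr 1
      simp only [hgm]
      push_cast
      ring
    rw [← heq]
    exact abs_Useq_neg M W s habs (-(((j + s : ℕ):ℤ) + 1)) (by omega) (by push_cast; omega) hW'
  have hUnegSumJ : Summable fun j : ℕ => |Useq M (s+1) (-(((j + s : ℕ):ℤ) + 1))| :=
    Summable.of_nonneg_of_le (fun j => abs_nonneg _) hUnegptw hBsum
  have hUnegSum : Summable fun n : ℕ => |Useq M (s+1) (-((n:ℤ) + 1))| := by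
    apply (Function.Injective.summable_iff hi2 ?_).mp
    · exact hUnegSumJ
    · intro x hx
      by_contra hne
      exact hx (hvan2 hne)
  have hreidxM : ∑' m : ℕ, (((m+s+1).choose (s+1) : ℕ) : ℝ) * W (gm m)
      = ∑' n : ℕ, ((n.choose (s+1) : ℕ) : ℝ) * W (-(n:ℤ)) := by
    have hi : Function.Injective (fun m : ℕ => m + (s+1)) := add_left_injective _
    have hsupp : Function.support (fun n : ℕ => ((n.choose (s+1) : ℕ) : ℝ) * W (-(n:ℤ)))
        ⊆ Set.range (fun m : ℕ => m + (s+1)) := by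
      intro n hn
      rcases le_or_gt (s+1) n with h | h
      · exact ⟨n - (s+1), by simp; omega⟩
      · exfalso
        apply hn
        simp [Nat.choose_eq_zero_of_lt h]
    have h1 := Function.Injective.tsum_eq hi hsupp
    rw [← h1]
    apply tsum_congr
    intro m
    simp only [hgm]
    beta_reduce
    rw [show m + (s+1) = m + s + 1 by omega]
    congr 2 <;> (push_cast; ring)
  have hnegBound : ∑' n : ℕ, |Useq M (s+1) (-((n:ℤ) + 1))|
      ≤ ∑' n : ℕ, ((n.choose (s+1) : ℕ) : ℝ) * W (-(n:ℤ)) := by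
    have h2 : ∑' n : ℕ, |Useq M (s+1) (-((n:ℤ) + 1))|
        = ∑' j : ℕ, |Useq M (s+1) (-(((j + s : ℕ):ℤ) + 1))| := by
      have := Function.Injective.tsum_eq hi2 hvan2
      rw [← this]
    calc ∑' n : ℕ, |Useq M (s+1) (-((n:ℤ) + 1))|
        = ∑' j : ℕ, |Useq M (s+1) (-(((j + s : ℕ):ℤ) + 1))| := h2
    _ ≤ ∑' j : ℕ, ∑' t : ℕ, (((t+s).choose s : ℕ) : ℝ) * W (gm (j + t)) :=
          Summable.tsum_le_tsum hUnegptw hUnegSumJ hBsum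
    _ = ∑' m : ℕ, (((m+s+1).choose (s+1) : ℕ) : ℝ) * W (gm m) := hBval
    _ = _ := hreidxM
  -- combine
  have hSummZ : Summable (fun k : ℤ => |Useq M (s+1) k|) :=
    Summable.of_nat_of_neg_add_one hUposSum hUnegSum
  refine ⟨hSummZ, ?_⟩
  have hsplit : tvNorm (Useq M (s+1)) = (∑' n : ℕ, |Useq M (s+1) (n:ℤ)|)
      + ∑' n : ℕ, |Useq M (s+1) (-((n:ℤ) + 1))| :=
    tsum_of_nat_of_neg_add_one hUposSum hUnegSum
  rw [hsplit]
  exact add_le_add hposBound hnegBound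

end NormMain

lemma tsum_choose_shift_pos (F : ℤ → ℝ) (q : ℕ) :
    ∑' t : ℕ, (((t+(q+1)).choose (q+1) : ℕ) : ℝ) * F ((q:ℤ) + 1 + t)
      = ∑' m : ℕ, ((m.choose (q+1) : ℕ) : ℝ) * F (m:ℤ) := by
  have hi : Function.Injective (fun t : ℕ => t + (q+1)) := add_left_injective _
  have hsupp : Function.support (fun m : ℕ => ((m.choose (q+1) : ℕ) : ℝ) * F (m:ℤ))
      ⊆ Set.range (fun t : ℕ => t + (q+1)) := by
    intro m hm
    rcases le_or_gt (q+1) m with h | h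
    · exact ⟨m - (q+1), by simp; omega⟩
    · exfalso
      apply hm
      simp [Nat.choose_eq_zero_of_lt h]
  have h1 := Function.Injective.tsum_eq hi hsupp
  rw [← h1]
  apply tsum_congr
  intro t
  congr 1
  rw [show ((t + (q+1) : ℕ) : ℤ) = (q:ℤ) + 1 + t by push_cast; ring]

lemma tsum_choose_shift_neg (F : ℤ → ℝ) (q : ℕ) :
    ∑' t : ℕ, (((t+(q+1)).choose (q+1) : ℕ) : ℝ) * F (-(q:ℤ) - 1 - t)
      = ∑' m : ℕ, ((m.choose (q+1) : ℕ) : ℝ) * F (-(m:ℤ)) := by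
  have hi : Function.Injective (fun t : ℕ => t + (q+1)) := add_left_injective _
  have hsupp : Function.support (fun m : ℕ => ((m.choose (q+1) : ℕ) : ℝ) * F (-(m:ℤ)))
      ⊆ Set.range (fun t : ℕ => t + (q+1)) := by
    intro m hm
    rcases le_or_gt (q+1) m with h | h
    · exact ⟨m - (q+1), by simp; omega⟩
    · exfalso
      apply hm
      simp [Nat.choose_eq_zero_of_lt h]
  have h1 := Function.Injective.tsum_eq hi hsupp
  rw [← h1]
  apply tsum_congr
  intro t
  congr 1
  rw [show (-((t + (q+1) : ℕ) : ℤ)) = -(q:ℤ) - 1 - t by push_cast; ring]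

lemma nu_eq_choose_tsum_pos (F : ℤ → ℝ) (r : ℕ) :
    ∑' m : ℕ, ((m.descFactorial r : ℕ) : ℝ) * F (m:ℤ)
      = (r.factorial : ℝ) * ∑' m : ℕ, ((m.choose r : ℕ) : ℝ) * F (m:ℤ) := by
  rw [← tsum_mul_left]
  apply tsum_congr
  intro m
  rw [Nat.descFactorial_eq_factorial_mul_choose]
  push_cast
  ring

lemma nu_eq_choose_tsum_neg (F : ℤ → ℝ) (r : ℕ) :
    ∑' m : ℕ, ((m.descFactorial r : ℕ) : ℝ) * F (-(m:ℤ))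
      = (r.factorial : ℝ) * ∑' m : ℕ, ((m.choose r : ℕ) : ℝ) * F (-(m:ℤ)) := by
  rw [← tsum_mul_left]
  apply tsum_congr
  intro m
  rw [Nat.descFactorial_eq_factorial_mul_choose]
  push_cast
  ring

lemma choose_of_descFactorial (H : ℕ → ℝ) (r : ℕ)
    (h : Summable fun m : ℕ => ((m.descFactorial r : ℕ) : ℝ) * H m) :
    Summable fun m : ℕ => ((m.choose r : ℕ) : ℝ) * H m := by
  have h2 := h.mul_left ((r.factorial : ℝ))⁻¹
  apply Summable.congr h2
  intro m
  rw [Nat.descFactorial_eq_factorial_mul_choose]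
  have hfac : (r.factorial : ℝ) ≠ 0 := by positivity
  push_cast
  field_simp

/-- If the one-sided factorial moments of two distributions on ℤ agree up to order `s`,
then `F − G = (β_{s+1}⁺+β_{s+1}⁻)/(s+1)! ⋅ (δ₁−δ₀)^{s+1} Θ` with `‖Θ‖ ≤ 1`. -/
theorem moment_matching_difference (F G : ℤ → ℝ) (s : ℕ) (hs : 1 ≤ s)
    (hF0 : ∀ k, 0 ≤ F k) (hF1 : ∑' k, F k = 1)
    (hG0 : ∀ k, 0 ≤ G k) (hG1 : ∑' k, G k = 1)
    (hmatchp : ∀ j, 1 ≤ j → j ≤ s → nuPlus F j = nuPlus G j)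
    (hmatchm : ∀ j, 1 ≤ j → j ≤ s → nuMinus F j = nuMinus G j)
    (hFp : Summable fun m : ℕ => (m.descFactorial (s + 1) : ℝ) * F (m : ℤ))
    (hFm : Summable fun m : ℕ => (m.descFactorial (s + 1) : ℝ) * F (-(m : ℤ)))
    (hGp : Summable fun m : ℕ => (m.descFactorial (s + 1) : ℝ) * G (m : ℤ))
    (hGm : Summable fun m : ℕ => (m.descFactorial (s + 1) : ℝ) * G (-(m : ℤ))) :
    ∃ Θ : ℤ → ℝ, tvNorm Θ ≤ 1 ∧
      F - G = ((betaPlus F G (s + 1) + betaMinus F G (s + 1)) / (s + 1).factorial)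
          • convZ (convPow (diracZ 1 - diracZ 0) (s + 1)) Θ ∧
      tvNorm (F - G) ≤ (betaPlus F G (s + 1) + betaMinus F G (s + 1)) / (s + 1).factorial
          * tvNorm (convPow (diracZ 1 - diracZ 0) (s + 1)) := by
    classical
  set M : ℤ → ℝ := fun k => F k - G k with hM
  set W : ℤ → ℝ := fun k => F k + G k with hWdef
  have hFsum : Summable F := by
    by_contra h
    rw [tsum_eq_zero_of_not_summable h] at hF1
    norm_num at hF1
  have hGsum : Summable G := by
    by_contra h
    rw [tsum_eq_zero_of_not_summable h] at hG1
    norm_num at hG1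
  have h0W : ∀ k, 0 ≤ W k := fun k => add_nonneg (hF0 k) (hG0 k)
  have habs : ∀ k, |M k| ≤ W k := by
    intro k
    simp only [hM, hWdef]
    have h1 : |F k - G k| ≤ |F k| + |G k| := abs_sub (F k) (G k)
    rwa [abs_of_nonneg (hF0 k), abs_of_nonneg (hG0 k)] at h1
  have hWsum : Summable W := hFsum.add hGsum
  have hinjcast : Function.Injective (fun m : ℕ => (m : ℤ)) := by
    intro a b h
    simp only [Nat.cast_inj] at h
    exact h
  have hinjneg : Function.Injective (fun m : ℕ => -(m : ℤ)) := by
    intro a b h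
    simp only [neg_inj, Nat.cast_inj] at h
    exact h
  have hWnat : Summable (fun m : ℕ => W (m : ℤ)) := hWsum.comp_injective hinjcast
  have hWnatneg : Summable (fun m : ℕ => W (-(m : ℤ))) := hWsum.comp_injective hinjneg
  -- choose-weighted base summabilities
  have hchooseF : Summable fun m : ℕ => ((m.choose (s+1) : ℕ) : ℝ) * F (m : ℤ) :=
    choose_of_descFactorial (fun m => F (m : ℤ)) (s+1) hFp
  have hchooseG : Summable fun m : ℕ => ((m.choose (s+1) : ℕ) : ℝ) * G (m : ℤ) :=
    choose_of_descFactorial (fun m => G (m : ℤ)) (s+1) hGp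
  have hchooseFm : Summable fun m : ℕ => ((m.choose (s+1) : ℕ) : ℝ) * F (-(m : ℤ)) :=
    choose_of_descFactorial (fun m => F (-(m : ℤ))) (s+1) hFm
  have hchooseGm : Summable fun m : ℕ => ((m.choose (s+1) : ℕ) : ℝ) * G (-(m : ℤ)) :=
    choose_of_descFactorial (fun m => G (-(m : ℤ))) (s+1) hGm
  have hchooseW : Summable fun m : ℕ => ((m.choose (s+1) : ℕ) : ℝ) * W (m : ℤ) := by
    apply Summable.congr (hchooseF.add hchooseG)
    intro m
    simp only [hWdef]
    ring
  have hchooseWm : Summable fun m : ℕ => ((m.choose (s+1) : ℕ) : ℝ) * W (-(m : ℤ)) := by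
    apply Summable.congr (hchooseFm.add hchooseGm)
    intro m
    simp only [hWdef]
    ring
  have hrayPW : ∀ (a : ℤ) (b d : ℕ), d ≤ s+1 →
      Summable fun t : ℕ => (((t+b).choose d : ℕ) : ℝ) * W (a + t) :=
    ray_summable_pos h0W hchooseW hWnat
  have hrayMW : ∀ (a : ℤ) (b d : ℕ), d ≤ s+1 →
      Summable fun t : ℕ => (((t+b).choose d : ℕ) : ℝ) * W (a - t) :=
    ray_summable_neg h0W hchooseWm hWnatneg
  -- rays for M, F, G by domination
  have hdom : ∀ (H : ℤ → ℝ), (∀ k, |H k| ≤ W k) →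
      (∀ (a : ℤ) (b d : ℕ), d ≤ s+1 →
        Summable fun t : ℕ => (((t+b).choose d : ℕ) : ℝ) * H (a + t)) := by
    intro H hH a b d hd
    apply Summable.of_abs
    apply Summable.of_nonneg_of_le (fun t => abs_nonneg _) ?_ (hrayPW a b d hd)
    intro t
    rw [abs_mul, abs_of_nonneg (by positivity : (0:ℝ) ≤ (((t+b).choose d : ℕ) : ℝ))]
    exact mul_le_mul_of_nonneg_left (hH _) (by positivity)
  have hdomM : ∀ (H : ℤ → ℝ), (∀ k, |H k| ≤ W k) →
      (∀ (a : ℤ) (b d : ℕ), d ≤ s+1 →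
        Summable fun t : ℕ => (((t+b).choose d : ℕ) : ℝ) * H (a - t)) := by
    intro H hH a b d hd
    apply Summable.of_abs
    apply Summable.of_nonneg_of_le (fun t => abs_nonneg _) ?_ (hrayMW a b d hd)
    intro t
    rw [abs_mul, abs_of_nonneg (by positivity : (0:ℝ) ≤ (((t+b).choose d : ℕ) : ℝ))]
    exact mul_le_mul_of_nonneg_left (hH _) (by positivity)
  have habsF : ∀ k, |F k| ≤ W k := by
    intro k
    rw [abs_of_nonneg (hF0 k)]
    simp only [hWdef]
    linarith [hG0 k]
  have habsG : ∀ k, |G k| ≤ W k := by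
    intro k
    rw [abs_of_nonneg (hG0 k)]
    simp only [hWdef]
    linarith [hF0 k]
  have hrayPM := hdom M habs
  have hrayMM := hdomM M habs
  have hrayPF := hdom F habsF
  have hrayMF := hdomM F habsF
  have hrayPG := hdom G habsG
  have hrayMG := hdomM G habsG
  -- mass zero
  have hMsum : Summable M := hFsum.sub hGsum
  have htsumM : ∑' k : ℤ, M k = 0 := by
    simp only [hM]
    rw [Summable.tsum_sub hFsum hGsum, hF1, hG1]
    ring
  have hMnat : Summable fun n : ℕ => M (n : ℤ) := hMsum.comp_injective hinjcast
  have hinjneg1 : Function.Injective (fun n : ℕ => -((n : ℤ) + 1)) := by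
    intro a b h
    simp only [neg_inj, add_left_inj, Nat.cast_inj] at h
    exact h
  have hMnegnat : Summable fun n : ℕ => M (-((n : ℤ) + 1)) := hMsum.comp_injective hinjneg1
  have hsplitM : ∑' k : ℤ, M k = (∑' n : ℕ, M (n : ℤ)) + ∑' n : ℕ, M (-((n : ℤ) + 1)) :=
    tsum_of_nat_of_neg_add_one hMnat hMnegnat
  have hpeelM : ∑' n : ℕ, M (n : ℤ) = M 0 + ∑' t : ℕ, M (1 + (t : ℤ)) := by
    rw [Summable.tsum_eq_zero_add hMnat]
    simp only [Nat.cast_zero]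
    congr 1
    apply tsum_congr
    intro t
    congr 1
    push_cast
    ring
  have hnegM : ∑' n : ℕ, M (-((n : ℤ) + 1)) = ∑' t : ℕ, M (-1 - (t : ℤ)) := by
    apply tsum_congr
    intro t
    congr 1
    ring
  have mass0 : M 0 + (∑' t : ℕ, M (1 + (t : ℤ))) + (∑' t : ℕ, M (-1 - (t : ℤ))) = 0 := by
    rw [htsumM] at hsplitM
    rw [hpeelM, hnegM] at hsplitM
    linarith [hsplitM]
  -- moment conditions
  have hmom : ∀ q : ℕ, q + 1 ≤ s →
      (∑' t : ℕ, (((t+(q+1)).choose (q+1) : ℕ) : ℝ) * M ((q : ℤ) + 1 + t) = 0) ∧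
      (∑' t : ℕ, (((t+(q+1)).choose (q+1) : ℕ) : ℝ) * M (-(q : ℤ) - 1 - t) = 0) := by
    intro q hq
    have hqd : q + 1 ≤ s + 1 := by omega
    have hfac : ((q+1).factorial : ℝ) ≠ 0 := by positivity
    constructor
    · have hsub : ∀ t : ℕ, (((t+(q+1)).choose (q+1) : ℕ) : ℝ) * M ((q : ℤ) + 1 + t)
          = (((t+(q+1)).choose (q+1) : ℕ) : ℝ) * F ((q : ℤ) + 1 + t)
            - (((t+(q+1)).choose (q+1) : ℕ) : ℝ) * G ((q : ℤ) + 1 + t) := by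
        intro t
        simp only [hM]
        ring
      rw [tsum_congr hsub, Summable.tsum_sub (hrayPF _ _ _ hqd) (hrayPG _ _ _ hqd),
          tsum_choose_shift_pos F q, tsum_choose_shift_pos G q]
      have h1 := hmatchp (q+1) (by omega) hq
      rw [show nuPlus F (q+1) = ∑' m : ℕ, ((m.descFactorial (q+1) : ℕ) : ℝ) * F (m : ℤ) from rfl,
          show nuPlus G (q+1) = ∑' m : ℕ, ((m.descFactorial (q+1) : ℕ) : ℝ) * G (m : ℤ) from rfl,
          nu_eq_choose_tsum_pos F (q+1), nu_eq_choose_tsum_pos G (q+1)] at h1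
      have h2 := mul_left_cancel₀ hfac h1
      rw [h2]
      ring
    · have hsub : ∀ t : ℕ, (((t+(q+1)).choose (q+1) : ℕ) : ℝ) * M (-(q : ℤ) - 1 - t)
          = (((t+(q+1)).choose (q+1) : ℕ) : ℝ) * F (-(q : ℤ) - 1 - t)
            - (((t+(q+1)).choose (q+1) : ℕ) : ℝ) * G (-(q : ℤ) - 1 - t) := by
        intro t
        simp only [hM]
        ring
      rw [tsum_congr hsub, Summable.tsum_sub (hrayMF _ _ _ hqd) (hrayMG _ _ _ hqd),
          tsum_choose_shift_neg F q, tsum_choose_shift_neg G q]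
      have h1 := hmatchm (q+1) (by omega) hq
      rw [show nuMinus F (q+1) = ∑' m : ℕ, ((m.descFactorial (q+1) : ℕ) : ℝ) * F (-(m : ℤ)) from rfl,
          show nuMinus G (q+1) = ∑' m : ℕ, ((m.descFactorial (q+1) : ℕ) : ℝ) * G (-(m : ℤ)) from rfl,
          nu_eq_choose_tsum_neg F (q+1), nu_eq_choose_tsum_neg G (q+1)] at h1
      have h2 := mul_left_cancel₀ hfac h1
      rw [h2]
      ring
  -- delta chain
  have hdelta : ∀ r : ℕ, r ≤ s → ∀ k : ℤ, Useq M (r+1) (k-1) - Useq M (r+1) k = Useq M r k := by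
    intro r hr
    cases r with
    | zero => exact Useq_delta0 hrayPM hrayMM mass0
    | succ q =>
        exact Useq_delta_succ hrayPM hrayMM q (by omega)
          ((hmom q (by omega)).1) ((hmom q (by omega)).2)
  have hchain : convZ (convPow (diracZ 1 - diracZ 0) (s+1)) (Useq M (s+1)) = M :=
    conv_Useq M s hdelta (s+1) le_rfl
  obtain ⟨hUsum, hUbound⟩ := Useq_norm_main M W s h0W habs hrayPW hrayMW
  -- identify the constant
  have hBp : betaPlus F G (s+1)
      = ((s+1).factorial : ℝ) * ∑' n : ℕ, ((n.choose (s+1) : ℕ) : ℝ) * W (n : ℤ) := by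
    show nuPlus F (s+1) + nuPlus G (s+1) = _
    rw [show nuPlus F (s+1) = ∑' m : ℕ, ((m.descFactorial (s+1) : ℕ) : ℝ) * F (m : ℤ) from rfl,
        show nuPlus G (s+1) = ∑' m : ℕ, ((m.descFactorial (s+1) : ℕ) : ℝ) * G (m : ℤ) from rfl,
        nu_eq_choose_tsum_pos F (s+1), nu_eq_choose_tsum_pos G (s+1), ← mul_add]
    congr 1
    rw [← Summable.tsum_add hchooseF hchooseG]
    apply tsum_congr
    intro m
    simp only [hWdef]
    ring
  have hBm : betaMinus F G (s+1)
      = ((s+1).factorial : ℝ) * ∑' n : ℕ, ((n.choose (s+1) : ℕ) : ℝ) * W (-(n : ℤ)) := by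
    show nuMinus F (s+1) + nuMinus G (s+1) = _
    rw [show nuMinus F (s+1) = ∑' m : ℕ, ((m.descFactorial (s+1) : ℕ) : ℝ) * F (-(m : ℤ)) from rfl,
        show nuMinus G (s+1) = ∑' m : ℕ, ((m.descFactorial (s+1) : ℕ) : ℝ) * G (-(m : ℤ)) from rfl,
        nu_eq_choose_tsum_neg F (s+1), nu_eq_choose_tsum_neg G (s+1), ← mul_add]
    congr 1
    rw [← Summable.tsum_add hchooseFm hchooseGm]
    apply tsum_congr
    intro m
    simp only [hWdef]
    ring
  have hfacne : (((s+1).factorial : ℕ) : ℝ) ≠ 0 := by positivity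
  have hcEq : (betaPlus F G (s + 1) + betaMinus F G (s + 1)) / (((s+1).factorial : ℕ) : ℝ)
      = (∑' n : ℕ, ((n.choose (s+1) : ℕ) : ℝ) * W (n : ℤ))
        + ∑' n : ℕ, ((n.choose (s+1) : ℕ) : ℝ) * W (-(n : ℤ)) := by
    rw [hBp, hBm]
    field_simp
  have hUle : tvNorm (Useq M (s+1))
      ≤ (betaPlus F G (s + 1) + betaMinus F G (s + 1)) / (((s+1).factorial : ℕ) : ℝ) := by
    rw [hcEq]
    exact hUbound
  have hc0 : 0 ≤ (betaPlus F G (s + 1) + betaMinus F G (s + 1)) / (((s+1).factorial : ℕ) : ℝ) := by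
    rw [hcEq]
    have h1 : 0 ≤ ∑' n : ℕ, ((n.choose (s+1) : ℕ) : ℝ) * W (n : ℤ) :=
      tsum_nonneg (fun n => mul_nonneg (by positivity) (h0W _))
    have h2 : 0 ≤ ∑' n : ℕ, ((n.choose (s+1) : ℕ) : ℝ) * W (-(n : ℤ)) :=
      tsum_nonneg (fun n => mul_nonneg (by positivity) (h0W _))
    linarith
  have hFG : F - G = M := funext fun k => rfl
  have hPsupp : ∀ j ∉ Finset.Icc (0:ℤ) ((s+1 : ℕ) : ℤ),
      convPow (diracZ 1 - diracZ 0) (s+1) j = 0 := by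
    intro j hj
    apply convPow_delta_supp
    simp only [Finset.mem_Icc] at hj
    omega
  have hPnn : 0 ≤ tvNorm (convPow (diracZ 1 - diracZ 0) (s+1)) :=
    tsum_nonneg (fun k => abs_nonneg _)
  set c := (betaPlus F G (s + 1) + betaMinus F G (s + 1)) / (((s+1).factorial : ℕ) : ℝ) with hcdef
  by_cases hczero : c = 0
  · refine ⟨0, ?_, ?_, ?_⟩
    · rw [show tvNorm (0 : ℤ → ℝ) = ∑' k : ℤ, |(0:ℝ)| from rfl]
      simp
    · have hU0 : Useq M (s+1) = 0 := by
        funext k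
        have h1 : |Useq M (s+1) k| ≤ tvNorm (Useq M (s+1)) :=
          Summable.le_tsum hUsum k (fun j _ => abs_nonneg _)
        have h2 : tvNorm (Useq M (s+1)) ≤ 0 := by
          rw [← hczero]
          exact hUle
        have h3 := abs_nonneg (Useq M (s+1) k)
        have : |Useq M (s+1) k| = 0 := le_antisymm (h1.trans h2) h3
        exact abs_eq_zero.mp this
      have hconv0 : convZ (convPow (diracZ 1 - diracZ 0) (s+1)) (0 : ℤ → ℝ) = 0 := by
        funext k
        show (∑' j : ℤ, convPow (diracZ 1 - diracZ 0) (s+1) j * (0 : ℤ → ℝ) (k - j)) = 0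
        simp
      rw [hconv0, smul_zero, hFG, ← hchain, hU0, hconv0]
    · have hFG0 : F - G = 0 := by
        have hU0 : Useq M (s+1) = 0 := by
          funext k
          have h1 : |Useq M (s+1) k| ≤ tvNorm (Useq M (s+1)) :=
            Summable.le_tsum hUsum k (fun j _ => abs_nonneg _)
          have h2 : tvNorm (Useq M (s+1)) ≤ 0 := by
            rw [← hczero]
            exact hUle
          have h3 := abs_nonneg (Useq M (s+1) k)
          have : |Useq M (s+1) k| = 0 := le_antisymm (h1.trans h2) h3
          exact abs_eq_zero.mp this
        have hconv0 : convZ (convPow (diracZ 1 - diracZ 0) (s+1)) (0 : ℤ → ℝ) = 0 := by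
          funext k
          show (∑' j : ℤ, convPow (diracZ 1 - diracZ 0) (s+1) j * (0 : ℤ → ℝ) (k - j)) = 0
          simp
        rw [hFG, ← hchain, hU0, hconv0]
      rw [hFG0]
      rw [show tvNorm (0 : ℤ → ℝ) = ∑' k : ℤ, |(0:ℝ)| from rfl]
      simp only [abs_zero, tsum_zero]
      exact mul_nonneg hc0 hPnn
  · have hcpos : 0 < c := lt_of_le_of_ne hc0 (Ne.symm hczero)
    refine ⟨c⁻¹ • Useq M (s+1), ?_, ?_, ?_⟩
    · rw [tvNorm_smul, abs_of_nonneg (inv_nonneg.mpr hc0)]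
      calc c⁻¹ * tvNorm (Useq M (s+1)) ≤ c⁻¹ * c :=
            mul_le_mul_of_nonneg_left hUle (inv_nonneg.mpr hc0)
      _ = 1 := inv_mul_cancel₀ hczero
    · rw [convZ_smul, smul_smul, mul_inv_cancel₀ hczero, one_smul]
      exact hFG.trans hchain.symm
    · have h1 : tvNorm (F - G) = tvNorm (convZ (convPow (diracZ 1 - diracZ 0) (s+1)) (Useq M (s+1))) := by
        rw [hFG, hchain]
      rw [h1]
      calc tvNorm (convZ (convPow (diracZ 1 - diracZ 0) (s+1)) (Useq M (s+1)))
          ≤ tvNorm (convPow (diracZ 1 - diracZ 0) (s+1)) * tvNorm (Useq M (s+1)) :=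
            tvNorm_convZ_le _ _ (Finset.Icc (0:ℤ) ((s+1 : ℕ) : ℤ)) hPsupp hUsum
      _ ≤ tvNorm (convPow (diracZ 1 - diracZ 0) (s+1)) * c :=
            mul_le_mul_of_nonneg_left hUle hPnn
      _ = c * tvNorm (convPow (diracZ 1 - diracZ 0) (s+1)) := mul_comm _ _
end

section
/- Characteristic function bound via smoothness: for a probability distribution F on the integers, |F̂(t)| ≤ 1 − (1 − ‖(δ_1−δ_0)F‖/2) t² / (4π) for all |t| ≤ π, and consequently |F̂(t)| ≤ exp{ −(1 − ‖(δ_1−δ_0)F‖/2) sin²(t/2) / π } for |t| ≤ π. -/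
open Real

/-- Characteristic function `F̂(t) = ∑_{k∈ℤ} e^{itk} F{k}`. -/
noncomputable def fourierZ (M : ℤ → ℝ) (t : ℝ) : ℂ :=
  ∑' k : ℤ, Complex.exp (Complex.I * t * k) * M k

lemma aux_one_sub_cos {x : ℝ} (h0 : 0 ≤ x) (h1 : x ≤ π/2) : x^2/π ≤ 1 - Real.cos x := by
  have hmono : MonotoneOn (fun y : ℝ => 1 - Real.cos y - y^2/π) (Set.Icc 0 (π/2)) := by
    have hd : ∀ y : ℝ, HasDerivAt (fun y : ℝ => 1 - Real.cos y - y^2/π)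
        (Real.sin y - 2*y/π) y := by
      intro y
      have h1' : HasDerivAt (fun y : ℝ => 1 - Real.cos y) (Real.sin y) y := by
        simpa using (Real.hasDerivAt_cos y).const_sub 1
      have h2' : HasDerivAt (fun y : ℝ => y^2/π) (2*y/π) y := by
        simpa [mul_comm] using (hasDerivAt_pow 2 y).div_const π
      exact h1'.sub h2'
    apply monotoneOn_of_deriv_nonneg (convex_Icc _ _)
    · exact (Continuous.continuousOn (by continuity))
    · intro y hy
      exact (hd y).differentiableAt.differentiableWithinAt
    · intro y hy
      rw [(hd y).deriv]
      rw [interior_Icc] at hy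
      have h5 : 2/π * y ≤ Real.sin y := Real.mul_le_sin hy.1.le (le_of_lt hy.2)
      have h6 : 2*y/π = 2/π * y := by ring
      linarith
  have h00 : (0:ℝ) ∈ Set.Icc (0:ℝ) (π/2) := ⟨le_refl _, by positivity⟩
  have hxx : x ∈ Set.Icc (0:ℝ) (π/2) := ⟨h0, h1⟩
  have h7 := hmono h00 hxx h0
  have h8 : (0:ℝ)^2/π = 0 := by simp
  simp only [Real.cos_zero, h8] at h7
  linarith

lemma aux_quad {t : ℝ} (ht : |t| ≤ π) : t^2/(4*π) ≤ 1 - Real.cos (t/2) := by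
  have h := aux_one_sub_cos (x := |t|/2) (by positivity) (by linarith [abs_nonneg t])
  have h2 : Real.cos (|t|/2) = Real.cos (t/2) := by
    rw [← Real.cos_abs (t/2), abs_div]
    norm_num
  have h3 : (|t|/2)^2/π = t^2/(4*π) := by
    rw [div_pow, sq_abs]
    ring
  rw [h2, h3] at h
  exact h

lemma aux_summable_exp (t : ℝ) (g : ℤ → ℝ) (hg : Summable g) :
    Summable (fun k : ℤ => Complex.exp (Complex.I * t * k) * (g k : ℂ)) := by
  apply Summable.of_norm
  have h : (fun k : ℤ => ‖Complex.exp (Complex.I * t * k) * (g k:ℂ)‖) = fun k => |g k| := by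
    funext k
    have h1 : Complex.I * (t:ℂ) * (k:ℂ) = ((t * k : ℝ):ℂ) * Complex.I := by push_cast; ring
    rw [norm_mul, h1,
      Complex.norm_exp_ofReal_mul_I, Complex.norm_real, Real.norm_eq_abs, one_mul]
  rw [h]
  exact hg.abs

lemma aux_abs_tsum_le (t : ℝ) (g : ℤ → ℝ) (hg : Summable g) (hg0 : ∀ k, 0 ≤ g k) :
    ‖∑' k : ℤ, Complex.exp (Complex.I * t * k) * (g k : ℂ)‖ ≤ ∑' k, g k := by
  have h : (fun k : ℤ => ‖Complex.exp (Complex.I * t * k) * (g k:ℂ)‖) = fun k => g k := by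
    funext k
    have h1 : Complex.I * (t:ℂ) * (k:ℂ) = ((t * k : ℝ):ℂ) * Complex.I := by push_cast; ring
    rw [norm_mul, h1,
      Complex.norm_exp_ofReal_mul_I, Complex.norm_real, Real.norm_eq_abs, one_mul, abs_of_nonneg (hg0 k)]
  calc ‖∑' k : ℤ, Complex.exp (Complex.I * t * k) * (g k:ℂ)‖
      ≤ ∑' k : ℤ, ‖Complex.exp (Complex.I * t * k) * (g k:ℂ)‖ :=
        norm_tsum_le_tsum_norm (by rw [h]; exact hg)
    _ = ∑' k, g k := by rw [h]

lemma aux_abs_half (t : ℝ) (ht : |t| ≤ π) :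
    ‖(1 + Complex.exp (-(Complex.I * t)))/2‖ = Real.cos (t/2) := by
  have key : Complex.exp (((-t/2:ℝ):ℂ) * Complex.I)
      * (Complex.exp (((t/2:ℝ):ℂ) * Complex.I) + Complex.exp (-(((t/2:ℝ):ℂ) * Complex.I)))
      = 1 + Complex.exp (-(Complex.I * t)) := by
    rw [mul_add, ← Complex.exp_add, ← Complex.exp_add]
    have e1 : ((-t/2:ℝ):ℂ) * Complex.I + ((t/2:ℝ):ℂ) * Complex.I = 0 := by push_cast; ring
    have e2 : ((-t/2:ℝ):ℂ) * Complex.I + -(((t/2:ℝ):ℂ) * Complex.I) = -(Complex.I * t) := by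
      push_cast; ring
    rw [e1, e2, Complex.exp_zero]
  have hid : (1 + Complex.exp (-(Complex.I * t)))/2
      = Complex.exp (((-t/2 : ℝ):ℂ) * Complex.I) * (Real.cos (t/2):ℂ) := by
    rw [Complex.ofReal_cos, Complex.cos, ← key]
    have h9 : -(((t/2:ℝ):ℂ)) * Complex.I = -(((t/2:ℝ):ℂ) * Complex.I) := by ring
    rw [h9]
    ring
  rw [hid, norm_mul, Complex.norm_exp_ofReal_mul_I, one_mul, Complex.norm_real, Real.norm_eq_abs]
  rw [abs_of_nonneg]
  apply Real.cos_nonneg_of_mem_Icc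
  constructor <;> [linarith [abs_le.mp ht]; linarith [(abs_le.mp ht).2]]

set_option maxHeartbeats 1600000 in
/-- Smoothness bound on the characteristic function of a distribution on ℤ:
for `|t| ≤ π`, `|F̂(t)| ≤ 1 − (1 − ‖(δ₁−δ₀)F‖/2) t²/(4π)` and hence
`|F̂(t)| ≤ exp{−(1 − ‖(δ₁−δ₀)F‖/2) sin²(t/2)/π}`. -/
theorem charfun_smoothness_bound (F : ℤ → ℝ)
    (hF0 : ∀ k, 0 ≤ F k) (hF1 : ∑' k, F k = 1) (t : ℝ) (ht : |t| ≤ π) :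
    ‖fourierZ F t‖
        ≤ 1 - (1 - tvNorm (convZ (diracZ 1 - diracZ 0) F) / 2) * t ^ 2 / (4 * π) ∧
    ‖fourierZ F t‖
        ≤ Real.exp (-((1 - tvNorm (convZ (diracZ 1 - diracZ 0) F) / 2) / π)
            * Real.sin (t / 2) ^ 2) := by
  have hπ := Real.pi_pos
  have hS : Summable F := by
    by_contra h
    rw [tsum_eq_zero_of_not_summable h] at hF1
    norm_num at hF1
  have hSsh : Summable (fun k : ℤ => F (k - 1)) := (Equiv.subRight (1:ℤ)).summable_iff.mpr hS
  have hFsh1 : ∑' k : ℤ, F (k-1) = 1 := by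
    rw [← hF1]; exact (Equiv.subRight (1:ℤ)).tsum_eq F
  set m : ℤ → ℝ := fun k => min (F k) (F (k-1)) with hm
  have hm0 : ∀ k, 0 ≤ m k := fun k => le_min (hF0 k) (hF0 _)
  have hmle : ∀ k, m k ≤ F k := fun k => min_le_left _ _
  have hmle' : ∀ k, m (k+1) ≤ F k := by
    intro k
    have e : m (k+1) = min (F (k+1)) (F (k+1-1)) := rfl
    have e2 : (k+1-1 : ℤ) = k := by ring
    rw [e, e2]
    exact min_le_right _ _
  have hSm : Summable m := hS.of_nonneg_of_le hm0 hmle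
  have hSm1 : Summable (fun k : ℤ => m (k+1)) := (Equiv.addRight (1:ℤ)).summable_iff.mpr hSm
  have htsum_m1 : ∑' k : ℤ, m (k+1) = ∑' k, m k := (Equiv.addRight (1:ℤ)).tsum_eq m
  -- total variation identity
  have hD : Summable (fun k : ℤ => |F (k-1) - F k|) := by
    apply Summable.of_nonneg_of_le (fun k => abs_nonneg _) (fun k => ?_) (hSsh.add hS)
    rw [abs_le]
    constructor <;> [linarith [hF0 k, hF0 (k-1)]; linarith [hF0 k, hF0 (k-1)]]
  have hconv : ∀ k, convZ (diracZ 1 - diracZ 0) F k = F (k-1) - F k := by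
    intro k
    unfold convZ
    have e1 : (fun j => diracZ 1 j * F (k - j)) = fun j : ℤ => if j = 1 then F (k-1) else 0 := by
      funext j; by_cases hj : j = 1 <;> simp [diracZ, hj]
    have e0 : (fun j => diracZ 0 j * F (k - j)) = fun j : ℤ => if j = 0 then F k else 0 := by
      funext j; by_cases hj : j = 0 <;> simp [diracZ, hj]
    have hsum : (fun j => (diracZ 1 - diracZ 0) j * F (k - j))
        = fun j : ℤ => (if j = 1 then F (k-1) else 0) - (if j = 0 then F k else 0) := by
      funext j
      simp only [Pi.sub_apply, sub_mul]
      rw [congrFun e1 j, congrFun e0 j]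
    rw [hsum, Summable.tsum_sub ((hasSum_ite_eq 1 (F (k-1))).summable) ((hasSum_ite_eq 0 (F k)).summable),
      tsum_ite_eq, tsum_ite_eq]
  have hchi : 1 - tvNorm (convZ (diracZ 1 - diracZ 0) F) / 2 = ∑' k, m k := by
    have hTV : tvNorm (convZ (diracZ 1 - diracZ 0) F) = ∑' k : ℤ, |F (k-1) - F k| := by
      unfold tvNorm; exact tsum_congr (fun k => by rw [hconv k])
    rw [hTV]
    have hmin : ∀ k : ℤ, m k = (F k + F (k-1) - |F (k-1) - F k|)/2 := by
      intro k
      show min (F k) (F (k-1)) = (F k + F (k-1) - |F (k-1) - F k|)/2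
      rcases le_total (F k) (F (k-1)) with h | h
      · rw [min_eq_left h, abs_of_nonneg (by linarith)]; ring
      · rw [min_eq_right h, abs_of_nonpos (by linarith)]; ring
    rw [tsum_congr hmin, tsum_div_const,
      Summable.tsum_sub (hS.add hSsh) hD, Summable.tsum_add hS hSsh, hF1, hFsh1]
    ring
  set χ : ℝ := ∑' k, m k with hχdef
  have hχ0 : 0 ≤ χ := tsum_nonneg hm0
  -- residual
  set A : ℤ → ℝ := fun k => F k - m k/2 - m (k+1)/2 with hA
  have hA0 : ∀ k, 0 ≤ A k := by
    intro k
    have h1 := hmle k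
    have h2 := hmle' k
    show 0 ≤ F k - m k/2 - m (k+1)/2
    linarith
  have hSA : Summable A := (hS.sub (hSm.div_const 2)).sub (hSm1.div_const 2)
  have htsumA : ∑' k, A k = 1 - χ := by
    have e : ∀ k, A k = F k - m k/2 - m (k+1)/2 := fun k => rfl
    rw [tsum_congr e]
    rw [Summable.tsum_sub (hS.sub (hSm.div_const 2)) (hSm1.div_const 2),
      Summable.tsum_sub hS (hSm.div_const 2), tsum_div_const, tsum_div_const, htsum_m1, hF1]
    ring
  -- Fourier decomposition
  have hdecomp : fourierZ F t
      = (∑' k : ℤ, Complex.exp (Complex.I * t * k) * (A k : ℂ))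
        + (1 + Complex.exp (-(Complex.I * t)))/2
          * (∑' k : ℤ, Complex.exp (Complex.I * t * k) * (m k : ℂ)) := by
    have hpt : ∀ k : ℤ, Complex.exp (Complex.I * t * k) * ((F k : ℝ) : ℂ)
        = Complex.exp (Complex.I * t * k) * (A k : ℂ)
          + (Complex.exp (Complex.I * t * k) * (m k : ℂ))/2
          + (Complex.exp (Complex.I * t * k) * (m (k+1) : ℂ))/2 := by
      intro k
      have : (A k : ℂ) = (F k : ℂ) - (m k : ℂ)/2 - (m (k+1) : ℂ)/2 := by
        rw [show A k = F k - m k/2 - m (k+1)/2 from rfl]; push_cast; ring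
      rw [this]; ring
    have hstep3 : ∑' k : ℤ, Complex.exp (Complex.I * t * k) * (m (k+1) : ℂ)
        = Complex.exp (-(Complex.I * t))
          * ∑' k : ℤ, Complex.exp (Complex.I * t * k) * (m k : ℂ) := by
      have hre : ∑' k : ℤ, Complex.exp (Complex.I * t * k) * (m (k+1) : ℂ)
          = ∑' k : ℤ, Complex.exp (Complex.I * t * (k-1)) * (m k : ℂ) := by
        rw [← (Equiv.addRight (1:ℤ)).tsum_eq
          (fun k : ℤ => Complex.exp (Complex.I * t * ((k:ℤ)-1)) * (m k : ℂ))]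
        apply tsum_congr
        intro k
        simp only [Equiv.coe_addRight]
        norm_num
      rw [hre, ← tsum_mul_left]
      apply tsum_congr
      intro k
      rw [← mul_assoc, ← Complex.exp_add]
      congr 2
      ring
    unfold fourierZ
    rw [tsum_congr hpt,
      Summable.tsum_add ((aux_summable_exp t A hSA).add ((aux_summable_exp t m hSm).div_const 2))
        ((aux_summable_exp t (fun k => m (k+1)) hSm1).div_const 2),
      Summable.tsum_add (aux_summable_exp t A hSA) ((aux_summable_exp t m hSm).div_const 2),
      tsum_div_const, tsum_div_const, hstep3]
    ring
  -- main bound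
  have hcos0 : 0 ≤ Real.cos (t/2) := by
    apply Real.cos_nonneg_of_mem_Icc
    constructor <;> [linarith [abs_le.mp ht]; linarith [(abs_le.mp ht).2]]
  have habsS2 : ‖∑' k : ℤ, Complex.exp (Complex.I * t * k) * (m k : ℂ)‖ ≤ χ :=
    aux_abs_tsum_le t m hSm hm0
  have hbound : ‖fourierZ F t‖ ≤ (1 - χ) + Real.cos (t/2) * χ := by
    rw [hdecomp]
    calc ‖(∑' k : ℤ, Complex.exp (Complex.I * t * k) * (A k : ℂ))
          + (1 + Complex.exp (-(Complex.I * t)))/2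
            * (∑' k : ℤ, Complex.exp (Complex.I * t * k) * (m k : ℂ))‖
        ≤ ‖∑' k : ℤ, Complex.exp (Complex.I * t * k) * (A k : ℂ)‖
          + ‖(1 + Complex.exp (-(Complex.I * t)))/2
            * (∑' k : ℤ, Complex.exp (Complex.I * t * k) * (m k : ℂ))‖ :=
          norm_add_le _ _
      _ ≤ (1 - χ) + Real.cos (t/2) * χ := by
          apply add_le_add
          · rw [← htsumA]; exact aux_abs_tsum_le t A hSA hA0
          · rw [norm_mul, aux_abs_half t ht]
            exact mul_le_mul_of_nonneg_left habsS2 hcos0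
  rw [hchi]
  constructor
  · have hq := aux_quad ht
    have h10 : χ * (t^2/(4*π)) ≤ χ * (1 - Real.cos (t/2)) :=
      mul_le_mul_of_nonneg_left hq hχ0
    have h11 : χ * t ^ 2 / (4 * π) = χ * (t^2/(4*π)) := by ring
    linarith
  · have hssq : Real.sin (t/2)^2 ≤ π * (1 - Real.cos (t/2)) := by
      have h1 : Real.sin (t/2)^2 = (1 - Real.cos (t/2)) * (1 + Real.cos (t/2)) := by
        have := Real.sin_sq_add_cos_sq (t/2)
        nlinarith
      have h2 : (1 - Real.cos (t/2)) * (1 + Real.cos (t/2))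
          ≤ (1 - Real.cos (t/2)) * π := by
        apply mul_le_mul_of_nonneg_left
        · nlinarith [Real.pi_gt_three, Real.cos_le_one (t/2)]
        · linarith [Real.cos_le_one (t/2)]
      linarith
    set y : ℝ := χ / π * Real.sin (t/2)^2 with hy
    have hy0 : 0 ≤ y := by
      apply mul_nonneg (div_nonneg hχ0 hπ.le) (sq_nonneg _)
    have hexp : 1 - y ≤ Real.exp (-y) := by
      linarith [Real.add_one_le_exp (-y)]
    have hkey : y ≤ χ * (1 - Real.cos (t/2)) := by
      have h12 : χ / π * Real.sin (t/2)^2 ≤ χ / π * (π * (1 - Real.cos (t/2))) :=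
        mul_le_mul_of_nonneg_left hssq (div_nonneg hχ0 hπ.le)
      have h13 : χ / π * (π * (1 - Real.cos (t/2))) = χ * (1 - Real.cos (t/2)) := by
        field_simp
      exact h12.trans_eq h13
    calc ‖fourierZ F t‖ ≤ (1 - χ) + Real.cos (t/2) * χ := hbound
      _ ≤ 1 - y := by
          have h14 : χ * (1 - Real.cos (t/2)) = χ - Real.cos (t/2) * χ := by ring
          linarith [hkey]
      _ ≤ Real.exp (-y) := hexp
      _ = Real.exp (-(χ/π) * Real.sin (t/2)^2) := by rw [hy]; congr 1; ring
end

section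
/- Derivative bound for centered characteristic functions: if F is a probability distribution on the integers with finite mean μ(F) and finite variance σ²(F), then for all |t| ≤ π, |d/dt ( F̂(t) e^{−itμ(F)} )| ≤ π² σ²(F) |sin(t/2)|. -/
open Real

/-- Mean of a distribution on ℤ. -/
noncomputable def meanZ (F : ℤ → ℝ) : ℝ := ∑' k : ℤ, (k : ℝ) * F k

/-- Variance of a distribution on ℤ. -/
noncomputable def varZ (F : ℤ → ℝ) : ℝ := ∑' k : ℤ, ((k : ℝ) - meanZ F) ^ 2 * F k

lemma abs_exp_I_mul_sub_one_le (x : ℝ) :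
    ‖Complex.exp (Complex.I * x) - 1‖ ≤ |x| := by
  have h : Complex.exp (Complex.I * x) - 1
      = (Complex.cos x - 1) + Complex.sin x * Complex.I := by
    rw [mul_comm, Complex.exp_mul_I]; ring
  have h2 : ‖Complex.exp (Complex.I * x) - 1‖ ^ 2 ≤ |x| ^ 2 := by
    rw [h, ← Complex.normSq_eq_norm_sq]
    have : ((Complex.cos x - 1) + Complex.sin x * Complex.I)
        = Complex.ofReal (Real.cos x - 1) + Complex.ofReal (Real.sin x) * Complex.I := by
      push_cast; ring
    rw [this, Complex.normSq_add_mul_I]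
    have hc : 1 - x ^ 2 / 2 ≤ Real.cos x := Real.one_sub_sq_div_two_le_cos
    have hc1 : Real.cos x ≤ 1 := Real.cos_le_one x
    have hpyth : Real.sin x ^ 2 + Real.cos x ^ 2 = 1 := Real.sin_sq_add_cos_sq x
    rw [sq_abs]
    nlinarith [Real.neg_one_le_cos x]
  nlinarith [norm_nonneg (Complex.exp (Complex.I * x) - 1), abs_nonneg x]

/-- Derivative bound for the centered characteristic function of a distribution on ℤ
with finite mean and variance: for `|t| ≤ π`,
`|(F̂(t) e^{−itμ(F)})'| ≤ π² σ²(F) |sin(t/2)|`. -/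
theorem centered_charfun_deriv_bound (F : ℤ → ℝ)
    (hF0 : ∀ k, 0 ≤ F k) (hF1 : ∑' k, F k = 1)
    (h2 : Summable fun k : ℤ => (k : ℝ) ^ 2 * F k)
    (t : ℝ) (ht : |t| ≤ π) :
    ‖deriv (fun u : ℝ =>
        fourierZ F u * Complex.exp (-(Complex.I * u * (meanZ F : ℝ)))) t‖
      ≤ π ^ 2 * varZ F * |Real.sin (t / 2)| := by
  set μ := meanZ F with hμ
  set c : ℤ → ℝ := fun k => (k : ℝ) - μ with hc
  -- summability facts
  have hFs : Summable F := by
    by_contra h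
    rw [tsum_eq_zero_of_not_summable h] at hF1
    exact one_ne_zero hF1.symm
  have h1s : Summable fun k : ℤ => (k : ℝ) * F k := by
    apply Summable.of_norm
    apply Summable.of_nonneg_of_le (fun k => norm_nonneg _) (fun k => ?_) (h2.add hFs)
    rw [Real.norm_eq_abs, abs_mul, abs_of_nonneg (hF0 k)]
    nlinarith [hF0 k, sq_abs ((k:ℝ)), sq_nonneg (|(k:ℝ)| - 1), mul_nonneg (sq_nonneg (|(k:ℝ)| - 1)) (hF0 k)]
  have hc2 : Summable fun k : ℤ => c k ^ 2 * F k := by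
    have he : (fun k : ℤ => c k ^ 2 * F k)
        = fun k : ℤ => ((k : ℝ) ^ 2 * F k - (2 * μ) * ((k : ℝ) * F k)) + μ ^ 2 * F k := by
      funext k; simp only [hc]; ring
    rw [he]
    exact (h2.sub (h1s.mul_left (2 * μ))).add (hFs.mul_left (μ ^ 2))
  have hc1 : Summable fun k : ℤ => |c k| * F k := by
    apply Summable.of_nonneg_of_le (fun k => mul_nonneg (abs_nonneg _) (hF0 k)) (fun k => ?_)
      (hc2.add hFs)
    nlinarith [hF0 k, sq_abs (c k), mul_nonneg (sq_nonneg (|c k| - 1)) (hF0 k)]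
  -- the summand functions and their derivatives
  set f : ℤ → ℝ → ℂ := fun k u => Complex.exp (Complex.I * u * (c k : ℂ)) * (F k : ℂ) with hf
  set f' : ℤ → ℝ → ℂ :=
    fun k u => Complex.I * (c k : ℂ) * Complex.exp (Complex.I * u * (c k : ℂ)) * (F k : ℂ)
    with hf'
  have hDf : ∀ (k : ℤ) (u : ℝ), HasDerivAt (f k) (f' k u) u := by
    intro k u
    have h0 : HasDerivAt (fun z : ℂ => Complex.I * z * (c k : ℂ)) (Complex.I * 1 * (c k : ℂ))
        (u : ℂ) := ((hasDerivAt_id (u : ℂ)).const_mul Complex.I).mul_const _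
    have h1 := ((h0.cexp).mul_const (F k : ℂ)).comp_ofReal
    convert h1 using 1
    simp only [hf']; ring
  have hexp : ∀ (x y : ℝ), ‖Complex.exp (Complex.I * x * (y : ℂ))‖ = 1 := by
    intro x y
    have hxy : Complex.I * (x : ℂ) * (y : ℂ) = ((x * y : ℝ) : ℂ) * Complex.I := by push_cast; ring
    rw [hxy, Complex.norm_exp_ofReal_mul_I]
  have hnorm : ∀ (k : ℤ) (u : ℝ), ‖f k u‖ = F k := by
    intro k u
    simp only [hf, norm_mul, hexp, Complex.norm_real, Real.norm_eq_abs, one_mul,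
      abs_of_nonneg (hF0 k)]
  have hbound : ∀ (k : ℤ) (u : ℝ), ‖f' k u‖ ≤ |c k| * F k := by
    intro k u
    simp only [hf', norm_mul, hexp, Complex.norm_I, Complex.norm_real, Real.norm_eq_abs,
      one_mul, mul_one, abs_of_nonneg (hF0 k)]
    exact le_refl _
  have hsum0 : Summable fun k => f k t := by
    apply Summable.of_norm
    exact hFs.congr fun k => (hnorm k t).symm
  -- the derivative of the centered characteristic function
  have hg : (fun u : ℝ => fourierZ F u * Complex.exp (-(Complex.I * u * (μ : ℝ))))
      = fun u : ℝ => ∑' k : ℤ, f k u := by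
    funext u
    rw [fourierZ, ← tsum_mul_right]
    refine tsum_congr fun k => ?_
    simp only [hf]
    rw [mul_right_comm, ← Complex.exp_add]
    congr 2
    rw [Complex.ofReal_sub]
    push_cast
    ring
  have hD : HasDerivAt (fun u : ℝ => ∑' k : ℤ, f k u) (∑' k : ℤ, f' k t) t :=
    hasDerivAt_tsum hc1 hDf (fun k u => hbound k u) hsum0 t
  have hderiv : deriv (fun u : ℝ =>
      fourierZ F u * Complex.exp (-(Complex.I * u * (μ : ℝ)))) t = ∑' k : ℤ, f' k t := by
    rw [hg]; exact hD.deriv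
  -- centering: the mean-zero identity
  have hrzero : ∑' k : ℤ, c k * F k = 0 := by
    have he : (fun k : ℤ => c k * F k) = fun k : ℤ => (k : ℝ) * F k - μ * F k := by
      funext k; simp only [hc]; ring
    rw [he, Summable.tsum_sub h1s (hFs.mul_left μ), tsum_mul_left, hF1, mul_one]
    simp [hμ, meanZ]
  have hzero : ∑' k : ℤ, (Complex.I * (c k : ℂ) * (F k : ℂ)) = 0 := by
    have he : (fun k : ℤ => Complex.I * (c k : ℂ) * (F k : ℂ))
        = fun k : ℤ => Complex.I * ((c k * F k : ℝ) : ℂ) := by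
      funext k; push_cast; ring
    rw [he, tsum_mul_left, ← Complex.ofReal_tsum, hrzero]
    simp
  have hsumf' : Summable fun k => f' k t :=
    Summable.of_norm (Summable.of_nonneg_of_le (fun k => norm_nonneg _)
      (fun k => hbound k t) hc1)
  have hsumz : Summable fun k : ℤ => Complex.I * (c k : ℂ) * (F k : ℂ) := by
    apply Summable.of_norm
    apply Summable.of_nonneg_of_le (fun k => norm_nonneg _) (fun k => ?_) hc1
    simp only [norm_mul, Complex.norm_I, Complex.norm_real, Real.norm_eq_abs, one_mul,
      abs_of_nonneg (hF0 k)]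
    exact le_refl _
  have hDrw : (∑' k : ℤ, f' k t) = ∑' k : ℤ,
      (Complex.I * (c k : ℂ) * (Complex.exp (Complex.I * t * (c k : ℂ)) - 1) * (F k : ℂ)) := by
    have he : (fun k : ℤ =>
        Complex.I * (c k : ℂ) * (Complex.exp (Complex.I * t * (c k : ℂ)) - 1) * (F k : ℂ))
        = fun k => f' k t - Complex.I * (c k : ℂ) * (F k : ℂ) := by
      funext k; simp only [hf']; ring
    rw [he, Summable.tsum_sub hsumf' hsumz, hzero, sub_zero]
  -- Jordan's inequality
  have hπ : (0:ℝ) < π := Real.pi_pos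
  have hts : |t| ≤ π * |Real.sin (t / 2)| := by
    have h1 : |t / 2| ≤ π / 2 := by
      rw [abs_div, abs_two]; linarith [ht]
    have h2 := Real.mul_abs_le_abs_sin h1
    rw [abs_div, abs_two] at h2
    have h3 := mul_le_mul_of_nonneg_left h2 hπ.le
    calc |t| = π * (2 / π * (|t| / 2)) := by field_simp
    _ ≤ π * |Real.sin (t / 2)| := h3
  -- termwise bound
  have hterm : ∀ k : ℤ,
      ‖Complex.I * (c k : ℂ) * (Complex.exp (Complex.I * t * (c k : ℂ)) - 1) * (F k : ℂ)‖
      ≤ (π * |Real.sin (t / 2)|) * (c k ^ 2 * F k) := by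
    intro k
    have hx : Complex.I * (t : ℂ) * (c k : ℂ) = Complex.I * ((t * c k : ℝ) : ℂ) := by
      push_cast; ring
    have h1 : ‖Complex.exp (Complex.I * t * (c k : ℂ)) - 1‖ ≤ |t * c k| := by
      rw [hx]; exact abs_exp_I_mul_sub_one_le _
    have hnrm : ‖Complex.I * (c k : ℂ) * (Complex.exp (Complex.I * t * (c k : ℂ)) - 1) * (F k : ℂ)‖
        = |c k| * ‖Complex.exp (Complex.I * t * (c k : ℂ)) - 1‖ * F k := by
      simp only [norm_mul, Complex.norm_I, Complex.norm_real, Real.norm_eq_abs, one_mul,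
        abs_of_nonneg (hF0 k)]
    rw [abs_mul] at h1
    rw [hnrm]
    calc |c k| * ‖Complex.exp (Complex.I * t * (c k : ℂ)) - 1‖ * F k
        ≤ |c k| * (|t| * |c k|) * F k := by
          gcongr <;> first | exact hF0 k | exact h1 | positivity
      _ ≤ |c k| * ((π * |Real.sin (t / 2)|) * |c k|) * F k := by
          gcongr <;> first | exact hF0 k | exact hts | positivity
      _ = (π * |Real.sin (t / 2)|) * (c k ^ 2 * F k) := by
          rw [← sq_abs]; ring
  have hsumb : Summable fun k : ℤ => (π * |Real.sin (t / 2)|) * (c k ^ 2 * F k) :=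
    hc2.mul_left _
  have hsn : Summable fun k : ℤ =>
      ‖Complex.I * (c k : ℂ) * (Complex.exp (Complex.I * t * (c k : ℂ)) - 1) * (F k : ℂ)‖ :=
    Summable.of_nonneg_of_le (fun k => norm_nonneg _) hterm hsumb
  have hvar : (0:ℝ) ≤ varZ F :=
    tsum_nonneg fun k => mul_nonneg (sq_nonneg _) (hF0 k)
  have hvareq : ∑' k : ℤ, c k ^ 2 * F k = varZ F := by
    simp only [varZ, hc, hμ]
  rw [hderiv, hDrw]
  calc ‖∑' k : ℤ, Complex.I * (c k : ℂ) *
        (Complex.exp (Complex.I * t * (c k : ℂ)) - 1) * (F k : ℂ)‖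
      ≤ ∑' k : ℤ, ‖Complex.I * (c k : ℂ) *
        (Complex.exp (Complex.I * t * (c k : ℂ)) - 1) * (F k : ℂ)‖ :=
        norm_tsum_le_tsum_norm hsn
    _ ≤ ∑' k : ℤ, (π * |Real.sin (t / 2)|) * (c k ^ 2 * F k) :=
        hsn.tsum_le_tsum hterm hsumb
    _ = (π * |Real.sin (t / 2)|) * varZ F := by rw [tsum_mul_left, hvareq]
    _ ≤ π ^ 2 * varZ F * |Real.sin (t / 2)| := by
        have h1p : (1:ℝ) ≤ π := by nlinarith [Real.pi_gt_three]
        have hP : 0 ≤ varZ F * |Real.sin (t / 2)| := mul_nonneg hvar (abs_nonneg _)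
        nlinarith [mul_le_mul_of_nonneg_right h1p (mul_nonneg hπ.le hP)]
end

section
/- Upper bound for the concentration function via the characteristic function: for any probability distribution F on ℝ and any h > 0, Q(F,h) ≤ (96/95)² h ∫_{|t| ≤ 1/h} |F̂(t)| dt, where F̂ is the characteristic function of F. -/
open MeasureTheory

/-- Lévy's concentration function `Q(F,h) = sup_x F([x, x+h])`. -/
noncomputable def concFun (F : Measure ℝ) (h : ℝ) : ℝ :=
  ⨆ x : ℝ, (F (Set.Icc x (x + h))).toReal

/-- Characteristic function `F̂(t) = ∫ e^{itx} dF(x)`. -/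
noncomputable def charF (F : Measure ℝ) (t : ℝ) : ℂ :=
  ∫ x, Complex.exp (t * x * Complex.I) ∂F

section Aux
open intervalIntegral Real


lemma sin_ge_taylor {x : ℝ} (hx : 0 ≤ x) : x - x ^ 3 / 6 ≤ Real.sin x := by
  have h1 : Real.sin x = ∫ t in (0:ℝ)..x, Real.cos t := by
    simp [integral_cos]
  have h2 : (x - x ^ 3 / 6 : ℝ) = ∫ t in (0:ℝ)..x, (1 - t ^ 2 / 2) := by
    rw [intervalIntegral.integral_sub intervalIntegrable_const
      ((intervalIntegral.intervalIntegrable_pow 2).div_const 2)]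
    simp [integral_pow]
    ring
  rw [h1, h2]
  apply intervalIntegral.integral_mono_on hx
    ((continuous_const.sub ((continuous_pow 2).div_const 2)).intervalIntegrable _ _)
    (Real.continuous_cos.intervalIntegrable _ _)
  intro t _
  exact Real.one_sub_sq_div_two_le_cos

lemma sin_ge_lin {v : ℝ} (h0 : 0 ≤ v) (h : v ≤ 1 / 4) : 95 / 96 * v ≤ Real.sin v := by
  have := sin_ge_taylor h0
  nlinarith [pow_le_pow_left₀ h0 h 2]

lemma one_sub_cos_ge {u : ℝ} (h : |u| ≤ 1 / 2) :
    (95 / 96) ^ 2 * u ^ 2 / 2 ≤ 1 - Real.cos u := by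
  have habs : Real.cos |u| = Real.cos u := Real.cos_abs u
  have h0 : 0 ≤ |u| := abs_nonneg u
  have hs : 95 / 96 * (|u| / 2) ≤ Real.sin (|u| / 2) :=
    sin_ge_lin (by positivity) (by linarith)
  have hcos : Real.cos |u| = 1 - 2 * Real.sin (|u| / 2) ^ 2 := by
    have h1 := Real.cos_two_mul' (|u| / 2)
    have h2 := Real.sin_sq_add_cos_sq (|u| / 2)
    have : 2 * (|u| / 2) = |u| := by ring
    rw [this] at h1
    nlinarith
  have hsq : (95 / 96 * (|u| / 2)) ^ 2 ≤ Real.sin (|u| / 2) ^ 2 := by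
    apply pow_le_pow_left₀ (by positivity) hs
  have : |u| ^ 2 = u ^ 2 := sq_abs u
  nlinarith

lemma fejer_half {T s : ℝ} (hT : 0 < T) (hs : s ≠ 0) :
    ∫ t in (0:ℝ)..T, (1 - t / T) * Real.cos (t * s)
      = (1 - Real.cos (T * s)) / (T * s ^ 2) := by
  have hder : ∀ t ∈ Set.uIcc (0:ℝ) T, HasDerivAt
      (fun t => (1 - t / T) * Real.sin (t * s) / s - Real.cos (t * s) / (T * s ^ 2))
      ((1 - t / T) * Real.cos (t * s)) t := by
    intro t _
    have h1 : HasDerivAt (fun t : ℝ => t * s) s t := hasDerivAt_mul_const s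
    have hsin : HasDerivAt (fun t : ℝ => Real.sin (t * s)) (Real.cos (t * s) * s) t :=
      by have := (Real.hasDerivAt_sin (t * s)).comp t h1; exact this
    have hcos : HasDerivAt (fun t : ℝ => Real.cos (t * s)) (-Real.sin (t * s) * s) t :=
      by have := (Real.hasDerivAt_cos (t * s)).comp t h1; exact this
    have hlin : HasDerivAt (fun t : ℝ => 1 - t / T) (-(1 / T)) t := by
      simpa using (hasDerivAt_id t).div_const T |>.const_sub 1
    have := ((hlin.mul hsin).div_const s).sub (hcos.div_const (T * s ^ 2))
    refine this.congr_deriv ?_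
    field_simp
    ring
  have hcont : IntervalIntegrable (fun t => (1 - t / T) * Real.cos (t * s))
      MeasureTheory.volume 0 T := by
    apply Continuous.intervalIntegrable
    fun_prop
  rw [intervalIntegral.integral_eq_sub_of_hasDerivAt hder hcont]
  field_simp
  simp
  ring

noncomputable def fejerK (T s : ℝ) : ℝ := ∫ t in (-T)..T, (1 - |t| / T) * Real.cos (t * s)

lemma fejerK_int (T s : ℝ) : IntervalIntegrable (fun t => (1 - |t| / T) * Real.cos (t * s))
    MeasureTheory.volume (-T) T := by
  apply Continuous.intervalIntegrable
  fun_prop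

lemma fejerK_eq_two (T s : ℝ) (hT : 0 < T) :
    fejerK T s = 2 * ∫ t in (0:ℝ)..T, (1 - t / T) * Real.cos (t * s) := by
  have hsplit : fejerK T s = (∫ t in (-T)..(0:ℝ), (1 - |t| / T) * Real.cos (t * s))
      + ∫ t in (0:ℝ)..T, (1 - |t| / T) * Real.cos (t * s) := by
    rw [fejerK, ← intervalIntegral.integral_add_adjacent_intervals (a := -T) (b := 0) (c := T)
      ((fejerK_int T s).mono_set (by apply Set.uIcc_subset_uIcc_left; simp [hT.le]))
      ((fejerK_int T s).mono_set (by apply Set.uIcc_subset_uIcc_right; simp [hT.le]))]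
  have hneg : (∫ t in (-T)..(0:ℝ), (1 - |t| / T) * Real.cos (t * s))
      = ∫ t in (0:ℝ)..T, (1 - |t| / T) * Real.cos (t * s) := by
    rw [show (-T : ℝ) = -T by rfl, show (0:ℝ) = -(0:ℝ) by ring,
      ← intervalIntegral.integral_comp_neg (fun t => (1 - |t| / T) * Real.cos (t * s))]
    simp [mul_comm]
  have habs : (∫ t in (0:ℝ)..T, (1 - |t| / T) * Real.cos (t * s))
      = ∫ t in (0:ℝ)..T, (1 - t / T) * Real.cos (t * s) := by
    apply intervalIntegral.integral_congr
    intro t ht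
    rw [Set.uIcc_of_le hT.le] at ht
    simp only [abs_of_nonneg ht.1]
  rw [hsplit, hneg, habs]; ring

lemma fejerK_zero (T : ℝ) (hT : 0 < T) : fejerK T 0 = T := by
  rw [fejerK_eq_two T 0 hT]
  simp only [mul_zero, Real.cos_zero, mul_one]
  rw [intervalIntegral.integral_sub intervalIntegrable_const
    ((intervalIntegral.intervalIntegrable_id).div_const T)]
  simp [integral_id]
  field_simp
  ring

lemma fejerK_formula {T s : ℝ} (hT : 0 < T) (hs : s ≠ 0) :
    fejerK T s = 2 * (1 - Real.cos (T * s)) / (T * s ^ 2) := by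
  rw [fejerK_eq_two T s hT, fejer_half hT hs]; ring

lemma fejerK_nonneg {T : ℝ} (hT : 0 < T) (s : ℝ) : 0 ≤ fejerK T s := by
  rcases eq_or_ne s 0 with rfl | hs
  · rw [fejerK_zero T hT]; exact hT.le
  · rw [fejerK_formula hT hs]
    have := Real.cos_le_one (T * s)
    apply div_nonneg (by linarith) (by positivity)

lemma fejerK_ge {T : ℝ} (hT : 0 < T) {s : ℝ} (hs : |s| ≤ 1 / (2 * T)) :
    (95 / 96) ^ 2 * T ≤ fejerK T s := by
  rcases eq_or_ne s 0 with rfl | hs0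
  · rw [fejerK_zero T hT]; nlinarith
  · rw [fejerK_formula hT hs0]
    have hu : |T * s| ≤ 1 / 2 := by
      rw [abs_mul, abs_of_pos hT]
      calc T * |s| ≤ T * (1 / (2 * T)) := mul_le_mul_of_nonneg_left hs hT.le
        _ = 1 / 2 := by field_simp
    have hkey := one_sub_cos_ge hu
    rw [le_div_iff₀ (by positivity)]
    nlinarith [sq_nonneg s, sq_nonneg (T * s)]


lemma odd_part_zero (T s : ℝ) :
    (∫ t in (-T)..T, (1 - |t| / T) * Real.sin (t * s)) = 0 := by
  have h := intervalIntegral.integral_comp_neg (a := -T) (b := T)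
    (fun t => (1 - |t| / T) * Real.sin (t * s))
  simp only [abs_neg, neg_mul, Real.sin_neg, neg_neg] at h
  have : (∫ t in (-T)..T, (1 - |t| / T) * -Real.sin (t * s))
      = -∫ t in (-T)..T, (1 - |t| / T) * Real.sin (t * s) := by
    simp [← intervalIntegral.integral_neg]
  rw [this] at h
  linarith

lemma inner_integral (T s : ℝ) :
    (∫ t in (-T)..T, ((1 - |t| / T : ℝ) : ℂ) * Complex.exp (t * s * Complex.I))
      = (fejerK T s : ℂ) := by
  have hexp : ∀ t : ℝ, ((1 - |t| / T : ℝ) : ℂ) * Complex.exp (t * s * Complex.I)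
      = ((((1 - |t| / T) * Real.cos (t * s) : ℝ)) : ℂ)
        + (((1 - |t| / T) * Real.sin (t * s) : ℝ) : ℂ) * Complex.I := by
    intro t
    rw [show ((t : ℂ) * s * Complex.I) = ((t * s : ℝ) : ℂ) * Complex.I by push_cast; ring,
      Complex.exp_mul_I, ← Complex.ofReal_cos, ← Complex.ofReal_sin]
    push_cast
    ring
  rw [intervalIntegral.integral_congr (g := fun t =>
      ((((1 - |t| / T) * Real.cos (t * s) : ℝ)) : ℂ)
        + (((1 - |t| / T) * Real.sin (t * s) : ℝ) : ℂ) * Complex.I)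
      (fun t _ => hexp t)]
  rw [intervalIntegral.integral_add, intervalIntegral.integral_mul_const,
    intervalIntegral.integral_ofReal, intervalIntegral.integral_ofReal,
    odd_part_zero, fejerK]
  · simp
  · exact Continuous.intervalIntegrable (by fun_prop) _ _
  · exact Continuous.intervalIntegrable (by fun_prop) _ _


lemma charF_continuous (F : Measure ℝ) [IsProbabilityMeasure F] : Continuous (charF F) := by
  apply MeasureTheory.continuous_of_dominated (bound := fun _ => 1)
  · intro t
    apply Continuous.aestronglyMeasurable
    fun_prop
  · intro t
    filter_upwards with x
    rw [show ((t : ℂ) * x * Complex.I) = ((t * x : ℝ) : ℂ) * Complex.I by push_cast; ring]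
    rw [Complex.norm_exp_ofReal_mul_I]
  · exact integrable_const 1
  · filter_upwards with x
    fun_prop

lemma charF_norm_le (F : Measure ℝ) [IsProbabilityMeasure F] (t : ℝ) : ‖charF F t‖ ≤ 1 := by
  calc ‖charF F t‖ ≤ ∫ x, ‖Complex.exp (t * x * Complex.I)‖ ∂F := norm_integral_le_integral_norm _
    _ = ∫ (x : ℝ), 1 ∂F := by
        congr 1; ext x
        rw [show ((t : ℂ) * x * Complex.I) = ((t * x : ℝ) : ℂ) * Complex.I by push_cast; ring]
        exact Complex.norm_exp_ofReal_mul_I _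
    _ = 1 := by simp


lemma fejerK_continuous (T : ℝ) : Continuous (fun s => fejerK T s) := by
  apply intervalIntegral.continuous_of_dominated_interval (bound := fun t => 1 + |t| / |T|)
  · intro s
    apply Continuous.aestronglyMeasurable
    fun_prop
  · intro s
    filter_upwards with t _
    rw [Real.norm_eq_abs, abs_mul]
    have h1 : |Real.cos (t * s)| ≤ 1 := Real.abs_cos_le_one _
    have h2 : |1 - |t| / T| ≤ 1 + |t| / |T| := by
      have h3 : |(1 : ℝ) - |t| / T| ≤ |(1 : ℝ)| + abs (|t| / T) := abs_sub _ _
      rw [abs_one, abs_div, abs_abs] at h3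
      exact h3
    calc |1 - |t| / T| * |Real.cos (t * s)| ≤ (1 + |t| / |T|) * 1 :=
          mul_le_mul h2 h1 (abs_nonneg _) (by positivity)
      _ = 1 + |t| / |T| := by ring
  · exact (continuous_const.add (continuous_abs.div_const _)).intervalIntegrable _ _
  · filter_upwards with t _
    fun_prop

lemma fejerK_abs_le (T : ℝ) (hT : 0 < T) (s : ℝ) : |fejerK T s| ≤ 2 * T := by
  have := intervalIntegral.norm_integral_le_of_norm_le_const (C := 1)
    (f := fun t => (1 - |t| / T) * Real.cos (t * s)) (a := -T) (b := T) ?_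
  · rw [Real.norm_eq_abs] at this
    calc |fejerK T s| ≤ 1 * |T - (-T)| := this
      _ = 2 * T := by rw [abs_of_pos (by linarith)]; ring
  · intro t ht
    rw [Set.uIoc_of_le (by linarith)] at ht
    have h1 : |t| ≤ T := by
      rw [abs_le]; exact ⟨ht.1.le, ht.2⟩
    have h2 : |Real.cos (t * s)| ≤ 1 := Real.abs_cos_le_one _
    rw [Real.norm_eq_abs, abs_mul]
    have h3 : |1 - |t| / T| ≤ 1 := by
      rw [abs_le]
      constructor
      · have : |t| / T ≤ 1 := by rw [div_le_one hT]; exact h1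
        linarith
      · have : 0 ≤ |t| / T := by positivity
        linarith
    nlinarith [abs_nonneg (1 - |t| / T), abs_nonneg (Real.cos (t * s))]




lemma key_fubini (F : Measure ℝ) [IsProbabilityMeasure F] {T : ℝ} (hT : 0 < T) (c : ℝ) :
    (∫ t in (-T)..T, ((1 - |t| / T : ℝ) : ℂ)
        * (charF F t * Complex.exp (-(t * c) * Complex.I)))
      = ((∫ x, fejerK T (x - c) ∂F : ℝ) : ℂ) := by
  have hle : (-T : ℝ) ≤ T := by linarith
  have hexp : ∀ t : ℝ, ((1 - |t| / T : ℝ) : ℂ) * (charF F t * Complex.exp (-(t * c) * Complex.I))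
      = ∫ x, ((1 - |t| / T : ℝ) : ℂ) * Complex.exp ((t : ℂ) * (x - c) * Complex.I) ∂F := by
    intro t
    rw [charF, ← MeasureTheory.integral_mul_const, ← MeasureTheory.integral_const_mul]
    congr 1; ext x
    rw [← Complex.exp_add]
    ring_nf
  have h1 : (∫ t in (-T)..T, ((1 - |t| / T : ℝ) : ℂ)
        * (charF F t * Complex.exp (-(t * c) * Complex.I)))
      = ∫ t in Set.Ioc (-T) T, ∫ x, ((1 - |t| / T : ℝ) : ℂ)
          * Complex.exp ((t : ℂ) * (x - c) * Complex.I) ∂F ∂volume := by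
    rw [intervalIntegral.integral_of_le hle]
    exact setIntegral_congr_fun measurableSet_Ioc fun t _ => hexp t
  rw [h1]
  haveI : IsFiniteMeasure (volume.restrict (Set.Ioc (-T) T)) := by
    constructor
    rw [Measure.restrict_apply_univ, Real.volume_Ioc]
    exact ENNReal.ofReal_lt_top
  have hint : Integrable (Function.uncurry fun (t : ℝ) (x : ℝ) =>
      ((1 - |t| / T : ℝ) : ℂ) * Complex.exp ((t : ℂ) * (x - c) * Complex.I))
      ((volume.restrict (Set.Ioc (-T) T)).prod F) := by
    apply MeasureTheory.Integrable.mono' (integrable_const (1 : ℝ))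
    · apply Continuous.aestronglyMeasurable
      fun_prop
    · have hae : ∀ᵐ z : ℝ × ℝ ∂((volume.restrict (Set.Ioc (-T) T)).prod F),
          z.1 ∈ Set.Ioc (-T) T :=
        Measure.quasiMeasurePreserving_fst.ae (ae_restrict_mem measurableSet_Ioc)
      filter_upwards [hae] with z hz
      rw [Function.uncurry, norm_mul]
      have h2 : ‖Complex.exp ((z.1 : ℂ) * (z.2 - c) * Complex.I)‖ = 1 := by
        rw [show ((z.1 : ℂ) * ((z.2 : ℂ) - c) * Complex.I)
            = ((z.1 * (z.2 - c) : ℝ) : ℂ) * Complex.I by push_cast; ring]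
        exact Complex.norm_exp_ofReal_mul_I _
      rw [h2, mul_one, Complex.norm_real, Real.norm_eq_abs]
      have ht : |z.1| ≤ T := by
        rw [abs_le]; exact ⟨hz.1.le, hz.2⟩
      rw [abs_of_nonneg (by rw [sub_nonneg, div_le_one hT]; exact ht)]
      have : 0 ≤ |z.1| / T := by positivity
      linarith
  rw [MeasureTheory.integral_integral_swap hint]
  have h3 : ∀ x : ℝ, (∫ t in Set.Ioc (-T) T, ((1 - |t| / T : ℝ) : ℂ)
        * Complex.exp ((t : ℂ) * (x - c) * Complex.I) ∂volume)
      = (fejerK T (x - c) : ℂ) := by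
    intro x
    rw [← intervalIntegral.integral_of_le hle]
    have := inner_integral T (x - c)
    rw [← this]
    congr 1; ext t
    congr 2
    push_cast
    ring
  rw [show (fun x : ℝ => ∫ t in Set.Ioc (-T) T, ((1 - |t| / T : ℝ) : ℂ)
        * Complex.exp ((t : ℂ) * (x - c) * Complex.I) ∂volume)
      = fun x : ℝ => (fejerK T (x - c) : ℂ) from funext h3]
  exact integral_ofReal










/-- Upper bound for the concentration function via the characteristic function:
`Q(F,h) ≤ (96/95)² h ∫_{|t|≤1/h} |F̂(t)| dt`. -/
theorem concFun_le_charFun_integral (F : Measure ℝ) [IsProbabilityMeasure F]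
    (h : ℝ) (hh : 0 < h) :
    concFun F h ≤ (96 / 95) ^ 2 * h * ∫ t in (-(1 / h))..(1 / h), ‖charF F t‖ := by
  set T : ℝ := 1 / h with hTdef
  have hT : 0 < T := by positivity
  have hle : (-T : ℝ) ≤ T := by linarith
  set CI : ℝ := ∫ t in (-T)..T, ‖charF F t‖ with hCI
  apply ciSup_le
  intro x₀
  set c : ℝ := x₀ + h / 2 with hc
  set R : ℝ := ∫ x, fejerK T (x - c) ∂F with hR
  -- integrability of the kernel
  have hKint : Integrable (fun x => fejerK T (x - c)) F := by
    apply MeasureTheory.Integrable.mono' (integrable_const (2 * T))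
    · exact ((fejerK_continuous T).comp (continuous_id.sub continuous_const)).aestronglyMeasurable
    · filter_upwards with x
      rw [Real.norm_eq_abs]
      exact fejerK_abs_le T hT _
  -- lower bound
  have hlow : (95 / 96) ^ 2 * T * (F (Set.Icc x₀ (x₀ + h))).toReal ≤ R := by
    have h1 : (95 / 96) ^ 2 * T * (F (Set.Icc x₀ (x₀ + h))).toReal
        ≤ ∫ x in Set.Icc x₀ (x₀ + h), fejerK T (x - c) ∂F := by
      rw [show (95 / 96) ^ 2 * T * (F (Set.Icc x₀ (x₀ + h))).toReal
          = (95 / 96) ^ 2 * T * F.real (Set.Icc x₀ (x₀ + h)) by rw [Measure.real]]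
      apply setIntegral_ge_of_const_le_real measurableSet_Icc (measure_ne_top F _)
      · intro y hy
        apply fejerK_ge hT
        have h2T : 1 / (2 * T) = h / 2 := by rw [hTdef]; field_simp
        rw [h2T, abs_le]
        constructor
        · simp only [hc]; linarith [hy.1]
        · simp only [hc]; linarith [hy.2]
      · exact hKint.integrableOn
    refine h1.trans (setIntegral_le_integral hKint ?_)
    filter_upwards with x
    exact fejerK_nonneg hT _
  -- upper bound
  have hup : R ≤ CI := by
    have hJ := key_fubini F hT c
    have hnorm : ‖((R : ℝ) : ℂ)‖ ≤ ∫ t in (-T)..T, ‖((1 - |t| / T : ℝ) : ℂ)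
        * (charF F t * Complex.exp (-(t * c) * Complex.I))‖ := by
      rw [← hJ]
      exact intervalIntegral.norm_integral_le_integral_norm hle
    have hmono : (∫ t in (-T)..T, ‖((1 - |t| / T : ℝ) : ℂ)
        * (charF F t * Complex.exp (-(t * c) * Complex.I))‖) ≤ CI := by
      rw [hCI]
      apply intervalIntegral.integral_mono_on hle
      · apply Continuous.intervalIntegrable
        apply Continuous.norm
        apply Continuous.mul (by fun_prop)
        apply Continuous.mul (charF_continuous F)
        fun_prop
      · apply Continuous.intervalIntegrable
        exact (charF_continuous F).norm
      · intro t ht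
        have htT : |t| ≤ T := abs_le.2 ⟨ht.1, ht.2⟩
        rw [norm_mul, norm_mul]
        have he : ‖Complex.exp (-((t : ℂ) * c) * Complex.I)‖ = 1 := by
          rw [show (-((t : ℂ) * c) * Complex.I) = ((-(t * c) : ℝ) : ℂ) * Complex.I by
            push_cast; ring]
          exact Complex.norm_exp_ofReal_mul_I _
        rw [he, mul_one, Complex.norm_real, Real.norm_eq_abs]
        have h01 : |1 - |t| / T| ≤ 1 := by
          rw [abs_le]
          have ha : |t| / T ≤ 1 := by rw [div_le_one hT]; exact htT
          have hb : 0 ≤ |t| / T := by positivity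
          constructor <;> linarith
        calc |1 - |t| / T| * ‖charF F t‖ ≤ 1 * ‖charF F t‖ :=
              mul_le_mul_of_nonneg_right h01 (norm_nonneg _)
          _ = ‖charF F t‖ := one_mul _
    calc R ≤ |R| := le_abs_self R
      _ = ‖((R : ℝ) : ℂ)‖ := by rw [Complex.norm_real, Real.norm_eq_abs]
      _ ≤ CI := hnorm.trans hmono
  -- combine
  have hfinal := hlow.trans hup
  have h4 : h * ((95 / 96 : ℝ) ^ 2 * T * (F (Set.Icc x₀ (x₀ + h))).toReal)
      = (95 / 96 : ℝ) ^ 2 * (F (Set.Icc x₀ (x₀ + h))).toReal := by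
    rw [hTdef]; field_simp
  have h2 : (95 / 96 : ℝ) ^ 2 * (F (Set.Icc x₀ (x₀ + h))).toReal ≤ h * CI := by
    have h3 := mul_le_mul_of_nonneg_left hfinal hh.le
    linarith [h4.symm.le]
  nlinarith [h2]

end Aux
end

section
/- Lower bound via the concentration function for nonnegative characteristic functions: if F is a probability distribution on ℝ whose characteristic function satisfies F̂(t) ≥ 0 for all t, then for any h > 0, h ∫_{|t| ≤ 1/h} F̂(t) dt ≤ C Q(F,h) for an absolute constant C. -/
open MeasureTheory

section EsseenAux
open intervalIntegral Real

noncomputable def Gker (T x : ℝ) : ℝ :=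
  if x = 0 then T else 2 * (1 - Real.cos (T*x)) / (T * x^2)

lemma integral_kernel_half (T : ℝ) (hT : 0 < T) (x : ℝ) :
    ∫ t in (0:ℝ)..T, (1 - t/T) * Real.cos (t*x) = Gker T x / 2 := by
  rcases eq_or_ne x 0 with rfl | hx
  · have hA : ∀ t ∈ Set.uIcc (0:ℝ) T, HasDerivAt (fun t => t - t^2/(2*T))
        ((1 - t/T) * Real.cos (t*0)) t := by
      intro t _
      have : HasDerivAt (fun t : ℝ => t - t^2/(2*T)) (1 - (2*t^1)/(2*T)) t :=
        (hasDerivAt_id t).sub ((hasDerivAt_pow 2 t).div_const (2*T))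
      convert this using 1
      simp
      field_simp
    rw [integral_eq_sub_of_hasDerivAt hA (by
      apply Continuous.intervalIntegrable; continuity)]
    simp [Gker]
    field_simp
    ring
  · set A : ℝ → ℝ := fun t => (1 - t/T) * (Real.sin (t*x) / x) - Real.cos (t*x) / (T*x^2)
      with hAdef
    have hA : ∀ t ∈ Set.uIcc (0:ℝ) T, HasDerivAt A ((1 - t/T) * Real.cos (t*x)) t := by
      intro t _
      have h1 : HasDerivAt (fun t : ℝ => 1 - t/T) (-(1/T)) t :=
        ((hasDerivAt_id t).div_const T).const_sub 1
      have hsin : HasDerivAt (fun t => Real.sin (t*x)) (Real.cos (t*x) * (1*x)) t := by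
        have := (Real.hasDerivAt_sin (t*x)).comp t ((hasDerivAt_id t).mul_const x); exact this
      have hcos : HasDerivAt (fun t => Real.cos (t*x)) (-Real.sin (t*x) * (1*x)) t := by
        have := (Real.hasDerivAt_cos (t*x)).comp t ((hasDerivAt_id t).mul_const x); exact this
      have := (h1.mul (hsin.div_const x)).sub (hcos.div_const (T*x^2))
      refine this.congr_deriv ?_
      field_simp
      ring
    rw [integral_eq_sub_of_hasDerivAt hA (by
      apply Continuous.intervalIntegrable; continuity)]
    simp [hAdef, Gker, hx, div_self hT.ne']
    field_simp
    ring

lemma integral_kernel (T : ℝ) (hT : 0 < T) (x : ℝ) :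
    ∫ t in (-T)..T, (1 - |t|/T) * Real.cos (t*x) = Gker T x := by
  have hcont : Continuous (fun t : ℝ => (1 - |t|/T) * Real.cos (t*x)) := by continuity
  have habs : ∫ t in (0:ℝ)..T, (1 - |t|/T) * Real.cos (t*x) = Gker T x / 2 := by
    rw [← integral_kernel_half T hT x]
    apply intervalIntegral.integral_congr
    intro t ht
    rw [Set.uIcc_of_le hT.le] at ht
    simp only
    rw [abs_of_nonneg ht.1]
  have hneg : ∫ t in (-T)..(0:ℝ), (1 - |t|/T) * Real.cos (t*x) = Gker T x / 2 := by
    have := intervalIntegral.integral_comp_neg (a := (0:ℝ)) (b := T)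
      (fun t : ℝ => (1 - |t|/T) * Real.cos (t*x))
    simp only [neg_zero] at this
    rw [← this, ← habs]
    apply intervalIntegral.integral_congr
    intro t _
    simp only [abs_neg, Real.cos_neg, neg_mul, mul_neg]
  have hi1 : IntervalIntegrable (fun t : ℝ => (1 - |t|/T) * Real.cos (t*x)) volume (-T) 0 :=
    hcont.intervalIntegrable _ _
  have hi2 : IntervalIntegrable (fun t : ℝ => (1 - |t|/T) * Real.cos (t*x)) volume 0 T :=
    hcont.intervalIntegrable _ _
  have hadd := intervalIntegral.integral_add_adjacent_intervals hi1 hi2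
  rw [← hadd, habs, hneg]
  ring

lemma one_sub_cos_le (u : ℝ) : 1 - Real.cos u ≤ u^2/2 := by
  have h1 : Real.sin (u/2) ^ 2 = 1/2 - Real.cos (2*(u/2))/2 := Real.sin_sq_eq_half_sub _
  have h2 : Real.sin (u/2) ^ 2 ≤ (u/2)^2 := Real.sin_sq_le_sq
  rw [show 2*(u/2) = u by ring] at h1
  nlinarith

lemma Gker_nonneg {T : ℝ} (hT : 0 < T) (x : ℝ) : 0 ≤ Gker T x := by
  unfold Gker
  split
  · exact hT.le
  · have h := Real.cos_le_one (T*x)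
    have : 0 ≤ 1 - Real.cos (T*x) := by linarith
    positivity

lemma Gker_le_T {T : ℝ} (hT : 0 < T) (x : ℝ) : Gker T x ≤ T := by
  unfold Gker
  split
  · exact le_refl T
  · rename_i hx
    have h1 : 1 - Real.cos (T*x) ≤ (T*x)^2/2 := one_sub_cos_le _
    have hx2 : 0 < x^2 := by positivity
    rw [div_le_iff₀ (by positivity)]
    nlinarith

lemma Gker_le_tail {T : ℝ} (hT : 0 < T) {x : ℝ} (hx : x ≠ 0) :
    Gker T x ≤ 4 / (T * x^2) := by
  unfold Gker
  rw [if_neg hx]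
  have h1 : 1 - Real.cos (T*x) ≤ 2 := by have := Real.neg_one_le_cos (T*x); linarith
  have hd : 0 < T * x^2 := by positivity
  rw [div_le_div_iff₀ hd hd]
  nlinarith

lemma tsum_int_inv_sq_le : ∑' k : ℤ, 1/(k:ℝ)^2 ≤ 6 := by
  have h1 : HasSum (fun n : ℕ => (1:ℝ)/(n:ℝ)^2) (π^2/6) := hasSum_zeta_two
  have h2 : HasSum (fun n : ℕ => (1:ℝ)/((n:ℝ)+1)^2) (π^2/6) := by
    have := (hasSum_nat_add_iff' (f := fun n : ℕ => (1:ℝ)/(n:ℝ)^2) 1).mpr h1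
    simpa using this
  have hZ : HasSum (fun k : ℤ => 1/(k:ℝ)^2) (π^2/6 + π^2/6) := by
    apply HasSum.of_nat_of_neg_add_one
    · simpa using h1
    · convert h2 using 1
      funext n
      push_cast
      ring
  rw [hZ.tsum_eq]
  have := Real.pi_le_four
  have hpos := Real.pi_pos
  nlinarith


lemma charF_integrable (F : Measure ℝ) [IsProbabilityMeasure F] (t : ℝ) :
    Integrable (fun x : ℝ => Complex.exp (t * x * Complex.I)) F := by
  refine (integrable_const (1:ℝ)).mono' ?_ ?_
  · exact (Complex.continuous_exp.comp (by continuity)).aestronglyMeasurable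
  · refine Filter.Eventually.of_forall fun x => ?_
    rw [Complex.norm_exp]
    simp

lemma charF_re (F : Measure ℝ) [IsProbabilityMeasure F] (t : ℝ) :
    (charF F t).re = ∫ x, Real.cos (t*x) ∂F := by
  unfold charF
  rw [show (∫ x : ℝ, Complex.exp (↑t * ↑x * Complex.I) ∂F).re
      = RCLike.re (∫ x : ℝ, Complex.exp (↑t * ↑x * Complex.I) ∂F) from rfl,
    ← integral_re (charF_integrable F t)]
  congr 1
  ext x
  rw [show (↑t * ↑x * Complex.I : ℂ) = ↑(t*x) * Complex.I by push_cast; ring]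
  exact Complex.exp_ofReal_mul_I_re _

lemma charF_re_measurable (F : Measure ℝ) [IsProbabilityMeasure F] :
    StronglyMeasurable (fun t => (charF F t).re) := by
  have h : StronglyMeasurable (fun t : ℝ => charF F t) := by
    apply MeasureTheory.StronglyMeasurable.integral_prod_right
      (f := fun (t x : ℝ) => Complex.exp (t * x * Complex.I))
    exact (Complex.continuous_exp.comp (by continuity)).stronglyMeasurable
  exact Complex.continuous_re.comp_stronglyMeasurable h

lemma charF_re_le_one (F : Measure ℝ) [IsProbabilityMeasure F] (t : ℝ) :
    |(charF F t).re| ≤ 1 := by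
  have h : ‖charF F t‖ ≤ 1 := by
    unfold charF
    refine (MeasureTheory.norm_integral_le_integral_norm _).trans ?_
    have : ∀ x : ℝ, ‖Complex.exp (t * x * Complex.I)‖ = 1 := fun x => by
      rw [Complex.norm_exp]; simp
    simp only [this]
    simp
  calc |(charF F t).re| ≤ ‖charF F t‖ := Complex.abs_re_le_norm _
    _ ≤ 1 := h


lemma fubini_step (F : Measure ℝ) [IsProbabilityMeasure F] (T : ℝ) (hT : 0 < T)
    (hker : ∀ x, ∫ t in (-T)..T, (1 - |t|/T) * Real.cos (t*x) = Gker T x) :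
    ∫ t in (-T)..T, ((1 - |t|/T) * ∫ x, Real.cos (t*x) ∂F) = ∫ x, Gker T x ∂F := by
  set μ : Measure ℝ := volume.restrict (Set.Ioc (-T) T) with hμ
  have hfin : IsFiniteMeasure μ := by
    constructor
    rw [hμ, Measure.restrict_apply_univ]
    exact measure_Ioc_lt_top
  -- the product function
  set f : ℝ → ℝ → ℝ := fun t x => (1 - |t|/T) * Real.cos (t*x) with hf
  have hcont : Continuous (Function.uncurry f) := by
    apply Continuous.mul
    · exact continuous_const.sub ((continuous_abs.comp continuous_fst).div_const T)
    · exact Real.continuous_cos.comp (continuous_fst.mul continuous_snd)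
  have haemem : ∀ᵐ p ∂(μ.prod F), p.1 ∈ Set.Ioc (-T) T := by
    rw [ae_iff]
    have hset : {p : ℝ × ℝ | ¬ p.1 ∈ Set.Ioc (-T) T} = (Set.Ioc (-T) T)ᶜ ×ˢ Set.univ := by
      ext p; simp
    rw [hset, Measure.prod_prod, hμ, Measure.restrict_apply measurableSet_Ioc.compl]
    simp
  have hint : Integrable (Function.uncurry f) (μ.prod F) := by
    refine (integrable_const (1:ℝ)).mono' hcont.aestronglyMeasurable ?_
    filter_upwards [haemem] with p hp
    have h1 : |p.1| ≤ T := by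
      rw [abs_le]; exact ⟨hp.1.le, hp.2⟩
    have h2 : 0 ≤ 1 - |p.1|/T := by
      rw [sub_nonneg, div_le_one hT]; exact h1
    have h3 : 1 - |p.1|/T ≤ 1 := by
      have : 0 ≤ |p.1|/T := by positivity
      linarith
    calc ‖Function.uncurry f p‖ = (1 - |p.1|/T) * |Real.cos (p.1 * p.2)| := by
          rw [Function.uncurry, hf]
          simp [abs_mul, abs_of_nonneg h2]
      _ ≤ 1 * 1 := by
          apply mul_le_mul h3 (Real.abs_cos_le_one _) (abs_nonneg _) zero_le_one
      _ = 1 := one_mul 1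
  have hswap := MeasureTheory.integral_integral_swap (μ := μ) (ν := F) (f := f) hint
  calc ∫ t in (-T)..T, ((1 - |t|/T) * ∫ x, Real.cos (t*x) ∂F)
      = ∫ t, (∫ x, f t x ∂F) ∂μ := by
        rw [hμ, intervalIntegral.integral_of_le (by linarith : -T ≤ T)]
        congr 1
        ext t
        rw [hf, ← MeasureTheory.integral_const_mul]
    _ = ∫ x, (∫ t, f t x ∂μ) ∂F := hswap
    _ = ∫ x, Gker T x ∂F := by
        congr 1
        ext x
        rw [← hker x, intervalIntegral.integral_of_le (by linarith : -T ≤ T), hμ]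




lemma cover_bound (F : Measure ℝ) [IsProbabilityMeasure F] (h : ℝ) (hh : 0 < h) :
    ∫ x, Gker (2/h) x ∂F ≤ (50/h) * concFun F h := by
  set T : ℝ := 2/h with hTdef
  have hT : 0 < T := by positivity
  set Q : ℝ := concFun F h with hQdef
  -- concentration function facts
  have hbdd : BddAbove (Set.range fun x : ℝ => (F (Set.Icc x (x + h))).toReal) := by
    refine ⟨1, ?_⟩
    rintro _ ⟨x, rfl⟩
    calc (F (Set.Icc x (x+h))).toReal ≤ (F Set.univ).toReal :=
          ENNReal.toReal_mono (measure_ne_top F _) (measure_mono (Set.subset_univ _))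
      _ = 1 := by simp
  have hQx : ∀ x : ℝ, (F (Set.Icc x (x + h))).toReal ≤ Q := fun x => le_ciSup hbdd x
  have hQ0 : 0 ≤ Q := le_trans ENNReal.toReal_nonneg (hQx 0)
  -- the partition
  set s : ℤ → Set ℝ := fun k => Set.Ico ((k:ℝ)*h) ((k:ℝ)*h + h) with hsdef
  have hmeas_s : ∀ k, MeasurableSet (s k) := fun k => measurableSet_Ico
  have hdisj : Pairwise (Function.onFun Disjoint s) := by
    intro k j hkj
    have key : ∀ k j : ℤ, k < j → Disjoint (s k) (s j) := by
      intro k j hlt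
      apply Set.disjoint_left.mpr
      intro x hx1 hx2
      have hc : ((k:ℝ)+1) ≤ (j:ℝ) := by exact_mod_cast hlt
      have h1 : ((k:ℝ)+1)*h ≤ (j:ℝ)*h := mul_le_mul_of_nonneg_right hc hh.le
      have := hx1.2
      have := hx2.1
      nlinarith
    rcases lt_or_gt_of_ne hkj with hlt | hlt
    · exact key _ _ hlt
    · exact (key _ _ hlt).symm
  have hunion : (⋃ k, s k) = Set.univ := by
    ext x
    simp only [Set.mem_iUnion, Set.mem_univ, iff_true, hsdef, Set.mem_Ico]
    refine ⟨⌊x/h⌋, ?_, ?_⟩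
    · calc ((⌊x/h⌋:ℝ))*h ≤ (x/h)*h := mul_le_mul_of_nonneg_right (Int.floor_le _) hh.le
        _ = x := by field_simp
    · have h1 : x/h < ⌊x/h⌋ + 1 := Int.lt_floor_add_one _
      calc x = (x/h)*h := by field_simp
        _ < ((⌊x/h⌋:ℝ)+1)*h := by
            apply mul_lt_mul_of_pos_right h1 hh
        _ = (⌊x/h⌋:ℝ)*h + h := by ring
  -- integrability of the kernel
  have hGm : Measurable (Gker T) := by
    unfold Gker
    apply Measurable.ite
    · exact measurableSet_eq
    · exact measurable_const
    · fun_prop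
  have hGint : Integrable (Gker T) F := by
    refine (integrable_const T).mono' hGm.aestronglyMeasurable ?_
    refine Filter.Eventually.of_forall fun x => ?_
    rw [Real.norm_eq_abs, abs_of_nonneg (Gker_nonneg hT x)]
    exact Gker_le_T hT x
  -- decompose the integral
  have hHasSum : HasSum (fun k : ℤ => ∫ x in s k, Gker T x ∂F) (∫ x, Gker T x ∂F) := by
    have := hasSum_integral_iUnion hmeas_s hdisj
      (by rw [hunion]; exact hGint.integrableOn)
    rwa [hunion, Measure.restrict_univ] at this
  -- the per-interval bounds
  set B : ℤ → ℝ := fun k => if k = 0 then T else 16/(T*h^2*(k:ℝ)^2) with hBdef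
  have hB0 : ∀ k, 0 ≤ B k := by
    intro k
    rw [hBdef]
    dsimp only
    split
    · exact hT.le
    · positivity
  have hGbd : ∀ k : ℤ, ∀ x ∈ s k, Gker T x ≤ B k := by
    intro k x hx
    rw [hsdef] at hx
    obtain ⟨hx1, hx2⟩ := hx
    rw [hBdef]
    dsimp only
    by_cases k0 : k = 0
    · rw [if_pos k0]; exact Gker_le_T hT x
    · rw [if_neg k0]
      by_cases km : k = -1
      · -- x ∈ [-h, 0), use Gker ≤ T ≤ 16/(T h²)
        subst km
        refine (Gker_le_T hT x).trans ?_
        have hk2 : ((-1:ℤ):ℝ)^2 = 1 := by norm_num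
        rw [hk2, mul_one, hTdef]
        rw [div_le_div_iff₀ (by positivity) (by positivity)]
        have hexp : 2/h*h^2 = 2*h := by field_simp
        nlinarith
      · -- tail case : |x| ≥ |k| h / 2 > 0
        have hcase : 1 ≤ k ∨ k ≤ -2 := by omega
        have hxfacts : x ≠ 0 ∧ ((k:ℝ)^2 * h^2)/4 ≤ x^2 := by
          rcases hcase with hk1 | hk1
          · have hkr : (1:ℝ) ≤ (k:ℝ) := by exact_mod_cast hk1
            have hxpos : 0 < x := lt_of_lt_of_le (by nlinarith) hx1
            have hkh0 : (0:ℝ) ≤ (k:ℝ)*h := mul_nonneg (by linarith) hh.le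
            have hsq : ((k:ℝ)*h)^2 ≤ x^2 := pow_le_pow_left₀ hkh0 hx1 2
            constructor
            · exact hxpos.ne'
            · nlinarith [hsq, sq_nonneg ((k:ℝ)*h)]
          · have hkr : (k:ℝ) ≤ -2 := by exact_mod_cast hk1
            have hxneg : x < ((k:ℝ)+1)*h := by nlinarith
            have hkh : ((k:ℝ)+1)*h ≤ -h := by nlinarith
            constructor
            · intro h0; rw [h0] at hxneg; nlinarith
            · nlinarith
        obtain ⟨hx0, hxsq⟩ := hxfacts
        refine (Gker_le_tail hT hx0).trans ?_
        rw [div_le_div_iff₀ (by positivity) (by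
          have : (k:ℝ) ≠ 0 := Int.cast_ne_zero.mpr k0
          positivity)]
        nlinarith
  have hterm : ∀ k : ℤ, ∫ x in s k, Gker T x ∂F ≤ B k * Q := by
    intro k
    have hnorm : ‖∫ x in s k, Gker T x ∂F‖ ≤ B k * (F (s k)).toReal := by
      apply norm_setIntegral_le_of_norm_le_const (measure_lt_top F _)
      intro x hx
      rw [Real.norm_eq_abs, abs_of_nonneg (Gker_nonneg hT x)]
      exact hGbd k x hx
    have hsk : (F (s k)).toReal ≤ Q := by
      refine le_trans (ENNReal.toReal_mono (measure_ne_top F _)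
        (measure_mono ?_)) (hQx ((k:ℝ)*h))
      exact Set.Ico_subset_Icc_self
    calc ∫ x in s k, Gker T x ∂F ≤ ‖∫ x in s k, Gker T x ∂F‖ := le_abs_self _
      _ ≤ B k * (F (s k)).toReal := hnorm
      _ ≤ B k * Q := mul_le_mul_of_nonneg_left hsk (hB0 k)
  -- summability of B
  have hBsum : Summable B := by
    have h1 : Summable (fun k : ℤ => (16/(T*h^2)) * (1/(k:ℝ)^2)) :=
      (Real.summable_one_div_int_pow.mpr one_lt_two).mul_left _
    have h2 : Summable (fun k : ℤ => if k = 0 then T else 0) :=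
      summable_of_ne_finset_zero (s := {0}) (by intro k hk; simp at hk; simp [hk])
    have heq : B = fun k : ℤ => (16/(T*h^2)) * (1/(k:ℝ)^2) + (if k = 0 then T else 0) := by
      funext k
      rw [hBdef]
      dsimp only
      by_cases k0 : k = 0
      · subst k0; simp
      · rw [if_neg k0, if_neg k0, add_zero, div_mul_div_comm, mul_one]
    rw [heq]
    exact h1.add h2
  have hBtsum : ∑' k, B k ≤ 50/h := by
    have h1 : Summable (fun k : ℤ => (16/(T*h^2)) * (1/(k:ℝ)^2)) :=
      (Real.summable_one_div_int_pow.mpr one_lt_two).mul_left _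
    have h2 : Summable (fun k : ℤ => if k = 0 then T else 0) :=
      summable_of_ne_finset_zero (s := {0}) (by intro k hk; simp at hk; simp [hk])
    have heq : B = fun k : ℤ => (16/(T*h^2)) * (1/(k:ℝ)^2) + (if k = 0 then T else 0) := by
      funext k
      rw [hBdef]
      dsimp only
      by_cases k0 : k = 0
      · subst k0; simp
      · rw [if_neg k0, if_neg k0, add_zero, div_mul_div_comm, mul_one]
    rw [heq, h1.tsum_add h2, tsum_mul_left, tsum_ite_eq]
    have hz : ∑' k : ℤ, 1/(k:ℝ)^2 ≤ 6 := tsum_int_inv_sq_le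
    have hz0 : 0 ≤ ∑' k : ℤ, 1/(k:ℝ)^2 := tsum_nonneg (fun k => by positivity)
    have hc : 0 ≤ 16/(T*h^2) := by positivity
    have hTh : T = 2/h := hTdef
    have h16 : 16/(T*h^2) = 8/h := by rw [hTh]; field_simp; ring
    rw [h16, hTh]
    have : (8/h) * ∑' k : ℤ, 1/(k:ℝ)^2 ≤ (8/h) * 6 :=
      mul_le_mul_of_nonneg_left hz (by positivity)
    calc (8/h) * (∑' k : ℤ, 1/(k:ℝ)^2) + 2/h ≤ (8/h)*6 + 2/h := by linarith
      _ = 50/h := by field_simp; ring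
  -- assemble
  calc ∫ x, Gker T x ∂F = ∑' k, ∫ x in s k, Gker T x ∂F := hHasSum.tsum_eq.symm
    _ ≤ ∑' k, B k * Q := Summable.tsum_le_tsum hterm hHasSum.summable (hBsum.mul_right Q)
    _ = (∑' k, B k) * Q := tsum_mul_right
    _ ≤ (50/h) * Q := mul_le_mul_of_nonneg_right hBtsum hQ0

end EsseenAux

/-- helper: bounded measurable functions are interval integrable -/
lemma bddIntervalIntegrable {f : ℝ → ℝ} (hm : AEStronglyMeasurable f volume)
    {c a b : ℝ} (hb : ∀ t ∈ Set.uIoc a b, ‖f t‖ ≤ c) :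
    IntervalIntegrable f volume a b := by
  rw [intervalIntegrable_iff]
  refine Integrable.mono' (g := fun _ => c) ?_ hm.restrict ?_
  · exact integrableOn_const measure_Ioc_lt_top.ne
  · filter_upwards [ae_restrict_mem measurableSet_uIoc] with t ht using hb t ht

/-- Lower bound via the concentration function for nonnegative characteristic functions:
there is an absolute constant `C` such that for every probability measure `F` on ℝ with
real nonnegative characteristic function and every `h > 0`,
`h ∫_{|t|≤1/h} F̂(t) dt ≤ C Q(F,h)`. -/
theorem charFun_integral_le_concFun :
    ∃ C : ℝ, 0 < C ∧ ∀ F : Measure ℝ, IsProbabilityMeasure F →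
      (∀ t : ℝ, (charF F t).im = 0 ∧ 0 ≤ (charF F t).re) →
      ∀ h : ℝ, 0 < h →
        h * ∫ t in (-(1 / h))..(1 / h), (charF F t).re ≤ C * concFun F h := by
  refine ⟨100, by norm_num, ?_⟩
  intro F hF hchar h hh
  set T : ℝ := 2/h with hTdef
  have hT : 0 < T := by positivity
  set ψ : ℝ → ℝ := fun t => (charF F t).re with hψdef
  have hψ0 : ∀ t, 0 ≤ ψ t := fun t => (hchar t).2
  have hψm : AEStronglyMeasurable ψ volume :=
    (charF_re_measurable F).aestronglyMeasurable
  have hψ1 : ∀ t, |ψ t| ≤ 1 := fun t => charF_re_le_one F t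
  have h1T : 1/h ≤ T := by
    rw [hTdef]
    exact (div_le_div_iff_of_pos_right hh).mpr one_le_two
  set g : ℝ → ℝ := fun t => (1 - |t|/T) * ψ t with hgdef
  have hgm : AEStronglyMeasurable g volume := by
    apply AEStronglyMeasurable.mul ?_ hψm
    exact (continuous_const.sub (continuous_abs.div_const T)).aestronglyMeasurable
  -- interval integrability facts
  have hint1 : IntervalIntegrable ψ volume (-(1/h)) (1/h) :=
    bddIntervalIntegrable hψm (c := 1) (fun t _ => by rw [Real.norm_eq_abs]; exact hψ1 t)
  have hgbd : ∀ t : ℝ, |t| ≤ T → ‖g t‖ ≤ 1 := by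
    intro t ht
    rw [hgdef]
    have h2 : 0 ≤ 1 - |t|/T := by
      rw [sub_nonneg, div_le_one hT]; exact ht
    have h3 : 1 - |t|/T ≤ 1 := by
      have : 0 ≤ |t|/T := by positivity
      linarith
    calc ‖(1 - |t|/T) * ψ t‖ = (1 - |t|/T) * |ψ t| := by
          rw [norm_mul, Real.norm_eq_abs, Real.norm_eq_abs, abs_of_nonneg h2]
      _ ≤ 1 * 1 := mul_le_mul h3 (hψ1 t) (abs_nonneg _) zero_le_one
      _ = 1 := one_mul 1
  have habs_le : ∀ a b : ℝ, 0 ≤ a → a ≤ T → ∀ t ∈ Set.uIoc (-a) a, |t| ≤ T := by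
    intro a b ha haT t ht
    rw [Set.uIoc_of_le (by linarith)] at ht
    rw [abs_le]; exact ⟨by linarith [ht.1], by linarith [ht.2]⟩
  have hint2 : IntervalIntegrable g volume (-(1/h)) (1/h) :=
    bddIntervalIntegrable hgm (c := 1)
      (fun t ht => hgbd t (habs_le (1/h) 0 (by positivity) h1T t ht))
  have hintT : IntervalIntegrable g volume (-T) T :=
    bddIntervalIntegrable hgm (c := 1)
      (fun t ht => hgbd t (habs_le T 0 hT.le le_rfl t ht))
  -- step 1 : pointwise comparison on [-1/h, 1/h]
  have step1 : ∫ t in (-(1/h))..(1/h), ψ t ≤ ∫ t in (-(1/h))..(1/h), 2 * g t := by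
    apply intervalIntegral.integral_mono_on (by linarith [one_div_pos.mpr hh] : -(1/h) ≤ 1/h)
      hint1 (hint2.const_mul 2)
    intro t ht
    have hta : |t| ≤ 1/h := by
      rw [abs_le]; exact ⟨ht.1, ht.2⟩
    have hhalf : |t|/T ≤ 1/2 := by
      rw [div_le_iff₀ hT]
      calc |t| ≤ 1/h := hta
        _ = (1/2) * T := by rw [hTdef]; field_simp
    have := hψ0 t
    rw [hgdef]
    nlinarith
  have step2 : ∫ t in (-(1/h))..(1/h), 2 * g t = 2 * ∫ t in (-(1/h))..(1/h), g t :=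
    intervalIntegral.integral_const_mul 2 g
  -- step 3 : extend to [-T,T] using nonnegativity
  have hg0 : ∀ t ∈ Set.Ioc (-T) T, 0 ≤ g t := by
    intro t ht
    have h2 : 0 ≤ 1 - |t|/T := by
      rw [sub_nonneg, div_le_one hT, abs_le]
      exact ⟨ht.1.le, ht.2⟩
    exact mul_nonneg h2 (hψ0 t)
  have step3 : ∫ t in (-(1/h))..(1/h), g t ≤ ∫ t in (-T)..T, g t := by
    apply intervalIntegral.integral_mono_interval (by linarith) 
      (by linarith [one_div_pos.mpr hh]) h1T ?_ hintT
    filter_upwards [ae_restrict_mem measurableSet_Ioc] with t ht using hg0 t ht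
  -- step 4 : Fubini identity
  have step4 : ∫ t in (-T)..T, g t = ∫ x, Gker T x ∂F := by
    rw [← fubini_step F T hT (integral_kernel T hT)]
    apply intervalIntegral.integral_congr
    intro t _
    rw [hgdef, hψdef]
    simp only
    rw [charF_re F t]
  -- step 5 : covering bound
  have step5 : ∫ x, Gker T x ∂F ≤ (50/h) * concFun F h := cover_bound F h hh
  -- assemble
  have hQ0 : 0 ≤ concFun F h := by
    have hbdd : BddAbove (Set.range fun x : ℝ => (F (Set.Icc x (x + h))).toReal) := by
      refine ⟨1, ?_⟩
      rintro _ ⟨x, rfl⟩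
      calc (F (Set.Icc x (x+h))).toReal ≤ (F Set.univ).toReal :=
            ENNReal.toReal_mono (measure_ne_top F _) (measure_mono (Set.subset_univ _))
        _ = 1 := by simp
    exact le_trans ENNReal.toReal_nonneg (le_ciSup hbdd 0)
  have chain : ∫ t in (-(1/h))..(1/h), ψ t ≤ 2 * ((50/h) * concFun F h) := by
    calc ∫ t in (-(1/h))..(1/h), ψ t ≤ ∫ t in (-(1/h))..(1/h), 2 * g t := step1
      _ = 2 * ∫ t in (-(1/h))..(1/h), g t := step2
      _ ≤ 2 * ∫ t in (-T)..T, g t := by linarith [step3]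
      _ = 2 * ∫ x, Gker T x ∂F := by rw [step4]
      _ ≤ 2 * ((50/h) * concFun F h) := by linarith [step5]
  calc h * ∫ t in (-(1/h))..(1/h), (charF F t).re
      = h * ∫ t in (-(1/h))..(1/h), ψ t := rfl
    _ ≤ h * (2 * ((50/h) * concFun F h)) := mul_le_mul_of_nonneg_left chain hh.le
    _ = 100 * concFun F h := by field_simp; ring
end
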